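/- arXiv:2007.01588 — 4 statements merged into one kernel-verified Lean document; each statement's English description precedes it below -/
import Mathlib

section
/- For every finite rooted tree T, the map χ: |B(T)| → 𝔹(T) sending a point ((B₀ ⊆ B₁ ⊆ … ⊆ B_r), (t₁,…,t_r)) of the realization of the nerve of B(T) (with 1 = t₀ ≥ t₁ ≥ … ≥ t_r ≥ 0) to the weighted bracketing with underlying bracketing B_r in which every bracket of B₀ has weight 1 and every bracket of B_i ∖ B_{i−1} has weight t_i (for 1 ≤ i ≤ r) is a well-defined homeomorphism between the geometric realization of the nerve of the poset B(T) and the cubical space 𝔹(T). -/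
/-- A "pre-tree": finite vertex set with a parent function. -/
structure PreTree where
  V : Type
  parent : V → Option V
  finite : Finite V

attribute [instance] PreTree.finite

def PreTree.IsTree (T : PreTree) : Prop :=
  (∀ v w : T.V, T.parent v = none → T.parent w = none → v = w) ∧
  WellFounded (fun a b : T.V => T.parent a = some b)

def PreTree.IsSubtree (T : PreTree) (S : Set T.V) : Prop :=
  S.Nonempty ∧ ∃ r ∈ S, ∀ v ∈ S, v ≠ r → ∃ p, T.parent v = some p ∧ p ∈ S

def PreTree.IsBracketing (T : PreTree) (B : Set (Set T.V)) : Prop :=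
  (∀ S ∈ B, T.IsSubtree S ∧ S.Nontrivial ∧ S ≠ Set.univ) ∧
  (∀ S₁ ∈ B, ∀ S₂ ∈ B, S₁ ∩ S₂ = S₁ ∨ S₁ ∩ S₂ = S₂ ∨ S₁ ∩ S₂ = ∅)

/-- The poset of bracketings of `T`, ordered by inclusion; as a space it is discrete. -/
def Brkt (T : PreTree) : Type := {B : Set (Set T.V) // T.IsBracketing B}

instance (T : PreTree) : PartialOrder (Brkt T) := by unfold Brkt; infer_instance
instance (T : PreTree) : TopologicalSpace (Brkt T) := ⊥

/-- Extended weights: `tExt t 0 = 1` and `tExt t (i+1) = t i`; a point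
`(t₁ ≥ … ≥ t_r)` of the simplex `Δ^r = {1 = t₀ ≥ t₁ ≥ … ≥ t_r ≥ 0}` assigns the
weight `tExt t i` to the brackets appearing at stage `i` of a chain. -/
def tExt {r : ℕ} (t : Fin r → ℝ) : Fin (r + 1) → ℝ :=
  Fin.cases (motive := fun _ => ℝ) 1 t

/-- Raw points of the realization `|B(T)|`: a chain length `r`, a chain
`c : Fin (r+1) → B(T)` and a weight vector `t ∈ Δ^r`. -/
def PrePtRaw (T : PreTree) : Type :=
  Σ r : ℕ, (Fin (r + 1) → Brkt T) × (Fin r → ℝ)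

/-- Validity: the chain is monotone (`B₀ ⊆ … ⊆ B_r`) and
`1 ≥ t₁ ≥ … ≥ t_r ≥ 0`. -/
def ValidPre (T : PreTree) (p : PrePtRaw T) : Prop :=
  Monotone p.2.1 ∧ (∀ j, p.2.2 j ∈ Set.Icc (0:ℝ) 1) ∧ Antitone p.2.2

/-- The relation generating the simplicial identifications of the realization of the
nerve of `B(T)`: the entry at index `i` of a chain may be deleted (the weights being
transported accordingly) whenever either its barycentric coordinate vanishes (a face
identification: `tExt t i = tExt t (i+1)`, resp. `tExt t i = 0` at the last index) or
it repeats the previous entry (a degeneracy identification). -/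
def RawRel (T : PreTree) (p q : PrePtRaw T) : Prop :=
  ∃ (r : ℕ) (c : Fin (r + 2) → Brkt T) (t : Fin (r + 1) → ℝ) (i : Fin (r + 2)),
    p = ⟨r + 1, c, t⟩ ∧
    q = ⟨r, c ∘ i.succAbove, fun j : Fin r => tExt t (i.succAbove j.succ)⟩ ∧
    ((if h : (i : ℕ) < r + 1 then tExt t i = tExt t ⟨(i : ℕ) + 1, by omega⟩
      else tExt t i = 0) ∨
     (∃ _ : 0 < (i : ℕ), c ⟨(i : ℕ) - 1, by have := i.isLt; omega⟩ = c i))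

def NerveRel (T : PreTree) (p q : {p : PrePtRaw T // ValidPre T p}) : Prop :=
  RawRel T p.1 q.1

/-- The geometric realization `|B(T)|` of the nerve of the poset of bracketings,
as the quotient of the disjoint union of simplices indexed by chains in `B(T)`. -/
def NerveSpace (T : PreTree) : Type := Quot (NerveRel T)

instance (T : PreTree) : TopologicalSpace (PrePtRaw T) := by unfold PrePtRaw; infer_instance
instance (T : PreTree) : TopologicalSpace (NerveSpace T) := by unfold NerveSpace; infer_instance

/-- Raw points of the cubical space `𝔹(T)`: a collection of brackets together with
a weight for each bracket. -/
def CubeRaw (T : PreTree) : Type :=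
  Σ Bs : Set (Set T.V), (↥Bs → ℝ)

/-- Validity: the collection is a bracketing and the weights lie in `[0,1]`. -/
def CubeValid (T : PreTree) (q : CubeRaw T) : Prop :=
  T.IsBracketing q.1 ∧ ∀ s, q.2 s ∈ Set.Icc (0:ℝ) 1

/-- The relation generating `𝔹(T)`: a bracket of weight `0` may be discarded. -/
def CubeRel (T : PreTree) (p q : {q : CubeRaw T // CubeValid T q}) : Prop :=
  ∃ (S₀ : Set T.V) (h₀ : S₀ ∈ p.1.1), p.1.2 ⟨S₀, h₀⟩ = 0 ∧
    q.1.1 = p.1.1 \ {S₀} ∧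
    ∀ (S : Set T.V) (hS : S ∈ q.1.1) (hS' : S ∈ p.1.1), q.1.2 ⟨S, hS⟩ = p.1.2 ⟨S, hS'⟩

/-- The cubical space `𝔹(T)`: the quotient of the disjoint union over all
bracketings `B ∈ B(T)` of the cubes `[0,1]^B` by the identification of weighted
bracketings differing only by brackets of weight `0`. -/
def CubeSpace (T : PreTree) : Type := Quot (CubeRel T)

instance (T : PreTree) : TopologicalSpace (CubeRaw T) := by unfold CubeRaw; infer_instance
instance (T : PreTree) : TopologicalSpace (CubeSpace T) := by unfold CubeSpace; infer_instance

/-- The weight that `χ` assigns to a bracket `S`: `1` if `S ∈ B₀`, and `t_i` if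
`S ∈ B_i ∖ B_{i−1}` — equivalently the largest of the weights `tExt t i` over the
stages `i` at which `S` appears (and `0` if it never appears). -/
noncomputable def chiWeight (T : PreTree) (p : PrePtRaw T) (S : Set T.V) : ℝ :=
  sSup (insert (0:ℝ) {a : ℝ | ∃ i : Fin (p.1 + 1), S ∈ (p.2.1 i).1 ∧ a = tExt p.2.2 i})

/-- The underlying weighted bracketing of the image under `χ` of a point
`(B₀ ⊆ … ⊆ B_r, t)`: the bracketing `B_r` with the weights `chiWeight`. -/
noncomputable def chiRep (T : PreTree) (p : PrePtRaw T) : CubeRaw T :=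
  ⟨(p.2.1 (Fin.last p.1)).1, fun S => chiWeight T p S.1⟩

/-! ### Auxiliary development -/

section Aux

variable {T : PreTree}

instance : Finite (Brkt T) := by unfold Brkt; exact Subtype.finite

instance : DiscreteTopology (Brkt T) := ⟨rfl⟩

lemma Brkt.mem_of_le {B₁ B₂ : Brkt T} (h : B₁ ≤ B₂) {S : Set T.V} (hS : S ∈ B₁.1) :
    S ∈ B₂.1 := h hS

@[simp] lemma tExt_zero {r : ℕ} (t : Fin r → ℝ) : tExt t 0 = 1 := rfl

@[simp] lemma tExt_succ {r : ℕ} (t : Fin r → ℝ) (j : Fin r) : tExt t j.succ = t j := by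
  simp [tExt]

lemma tExt_mem_Icc {r : ℕ} {t : Fin r → ℝ} (ht : ∀ j, t j ∈ Set.Icc (0:ℝ) 1)
    (i : Fin (r+1)) : tExt t i ∈ Set.Icc (0:ℝ) 1 := by
  induction i using Fin.cases with
  | zero => exact ⟨zero_le_one, le_refl 1⟩
  | succ j => simpa using ht j

lemma tExt_antitone {r : ℕ} {t : Fin r → ℝ} (ht : ∀ j, t j ∈ Set.Icc (0:ℝ) 1)
    (ha : Antitone t) : Antitone (tExt t) := by
  intro i j hij
  induction j using Fin.cases with
  | zero =>
    have : i = 0 := le_antisymm hij (Fin.zero_le i)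
    simp [this]
  | succ j' =>
    induction i using Fin.cases with
    | zero => simpa using (ht j').2
    | succ i' => simpa using ha (by rwa [Fin.succ_le_succ_iff] at hij)

open Classical in
/-- `rawPhi T p S` : the weight assigned by `χ` to `S`, as a finite `sup`. -/
noncomputable def rawPhi (T : PreTree) (p : PrePtRaw T) (S : Set T.V) : ℝ :=
  0 ⊔ Finset.univ.sup' Finset.univ_nonempty
    (fun i : Fin (p.1 + 1) => if S ∈ (p.2.1 i).1 then tExt p.2.2 i else 0)

lemma chiWeight_eq (T : PreTree) (p : PrePtRaw T) (S : Set T.V) :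
    chiWeight T p S = rawPhi T p S := by
  classical
  set A := {a : ℝ | ∃ i : Fin (p.1 + 1), S ∈ (p.2.1 i).1 ∧ a = tExt p.2.2 i} with hA
  have hsub : A ⊆ Set.range (tExt p.2.2) := by rintro a ⟨i, _, rfl⟩; exact ⟨i, rfl⟩
  have hfin : (insert (0:ℝ) A).Finite := ((Set.finite_range _).subset hsub).insert 0
  have hbdd : BddAbove (insert (0:ℝ) A) := hfin.bddAbove
  apply le_antisymm
  · apply csSup_le ⟨0, Set.mem_insert _ _⟩
    intro a ha
    rcases Set.mem_insert_iff.mp ha with rfl | ⟨i, hi, rfl⟩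
    · exact le_sup_left
    · exact le_sup_of_le_right (by
        have h := Finset.le_sup'
          (f := fun i : Fin (p.1+1) => if S ∈ (p.2.1 i).1 then tExt p.2.2 i else 0)
          (Finset.mem_univ i)
        simp only [hi, ↓reduceIte] at h
        exact h)
  · apply sup_le
    · exact le_csSup hbdd (Set.mem_insert _ _)
    · apply Finset.sup'_le
      intro i _
      by_cases hi : S ∈ (p.2.1 i).1
      · rw [if_pos hi]; exact le_csSup hbdd (Set.mem_insert_iff.mpr (Or.inr ⟨i, hi, rfl⟩))
      · rw [if_neg hi]; exact le_csSup hbdd (Set.mem_insert _ _)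

lemma rawPhi_nonneg (T : PreTree) (p : PrePtRaw T) (S : Set T.V) : 0 ≤ rawPhi T p S :=
  le_sup_left

lemma rawPhi_ge {p : PrePtRaw T} {S : Set T.V} {i : Fin (p.1+1)}
    (hi : S ∈ (p.2.1 i).1) : tExt p.2.2 i ≤ rawPhi T p S := by
  classical
  exact le_sup_of_le_right (by
    have h := Finset.le_sup'
      (f := fun i : Fin (p.1+1) => if S ∈ (p.2.1 i).1 then tExt p.2.2 i else 0)
      (Finset.mem_univ i)
    simp only [hi, ↓reduceIte] at h
    exact h)

lemma rawPhi_le {p : PrePtRaw T} {S : Set T.V} {x : ℝ} (h0 : 0 ≤ x)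
    (hterm : ∀ i : Fin (p.1+1), S ∈ (p.2.1 i).1 → tExt p.2.2 i ≤ x) :
    rawPhi T p S ≤ x := by
  classical
  refine sup_le h0 (Finset.sup'_le _ _ fun i _ => ?_)
  by_cases hi : S ∈ (p.2.1 i).1
  · simpa [hi] using hterm i hi
  · simpa [hi] using h0

lemma rawPhi_mem_Icc {p : PrePtRaw T} (hv : ValidPre T p) (S : Set T.V) :
    rawPhi T p S ∈ Set.Icc (0:ℝ) 1 :=
  ⟨rawPhi_nonneg T p S, rawPhi_le zero_le_one fun i _ => (tExt_mem_Icc hv.2.1 i).2⟩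

lemma rawPhi_attained {p : PrePtRaw T} {S : Set T.V} (h : rawPhi T p S ≠ 0) :
    ∃ j : Fin (p.1+1), S ∈ (p.2.1 j).1 ∧ rawPhi T p S = tExt p.2.2 j := by
  classical
  obtain ⟨j, -, hj⟩ := Finset.exists_mem_eq_sup' (Finset.univ_nonempty)
    (fun i : Fin (p.1+1) => if S ∈ (p.2.1 i).1 then tExt p.2.2 i else 0)
  by_cases hle : Finset.univ.sup' Finset.univ_nonempty
      (fun i : Fin (p.1+1) => if S ∈ (p.2.1 i).1 then tExt p.2.2 i else 0) ≤ 0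
  · exact absurd (sup_eq_left.mpr hle) h
  · push_neg at hle
    have hphi : rawPhi T p S = Finset.univ.sup' Finset.univ_nonempty
        (fun i : Fin (p.1+1) => if S ∈ (p.2.1 i).1 then tExt p.2.2 i else 0) :=
      sup_eq_right.mpr hle.le
    by_cases hS : S ∈ (p.2.1 j).1
    · refine ⟨j, hS, ?_⟩
      rw [hphi, hj, if_pos hS]
    · rw [hj, if_neg hS] at hphi
      exact absurd hphi h

lemma rawPhi_zero_of_not_mem_last {p : PrePtRaw T} (hmono : Monotone p.2.1)
    {S : Set T.V} (hS : S ∉ (p.2.1 (Fin.last p.1)).1) : rawPhi T p S = 0 := by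
  classical
  have hall : ∀ i, S ∉ (p.2.1 i).1 := fun i hi =>
    hS (Brkt.mem_of_le (hmono (Fin.le_last i)) hi)
  unfold rawPhi
  rw [Finset.sup'_congr _ rfl (fun i _ => if_neg (hall i))]
  simp

end Aux
section Cube

variable {T : PreTree}

open Classical in
/-- Extension of the weights of a weighted bracketing by `0`. -/
noncomputable def psiRaw (T : PreTree) (q : CubeRaw T) (S : Set T.V) : ℝ :=
  if h : S ∈ q.1 then q.2 ⟨S, h⟩ else 0

lemma PreTree.IsBracketing.subset {B B' : Set (Set T.V)} (h : T.IsBracketing B)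
    (hsub : B' ⊆ B) : T.IsBracketing B' :=
  ⟨fun S hS => h.1 S (hsub hS), fun S₁ h1 S₂ h2 => h.2 S₁ (hsub h1) S₂ (hsub h2)⟩

lemma psiRaw_mem_Icc {q : CubeRaw T} (hq : CubeValid T q) (S : Set T.V) :
    psiRaw T q S ∈ Set.Icc (0:ℝ) 1 := by
  unfold psiRaw
  split
  · exact hq.2 _
  · exact ⟨le_refl 0, zero_le_one⟩

lemma psiRaw_support {q : CubeRaw T} {S : Set T.V} (h : psiRaw T q S ≠ 0) : S ∈ q.1 := by
  by_contra hS
  exact h (dif_neg hS)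

/-- The canonical representative of a weighted bracketing. -/
noncomputable def trimOf (T : PreTree) (f : Set T.V → ℝ) : CubeRaw T :=
  ⟨{S | f S ≠ 0}, fun S => f S.1⟩

lemma trim_valid {q : CubeRaw T} (hq : CubeValid T q) :
    CubeValid T (trimOf T (psiRaw T q)) := by
  constructor
  · exact hq.1.subset fun S hS => psiRaw_support hS
  · intro s
    exact psiRaw_mem_Icc hq s.1

lemma cubeRaw_ext {A B : Set (Set T.V)} (h : A = B) {f : ↥A → ℝ} {g : ↥B → ℝ}
    (h2 : ∀ S (hS : S ∈ A) (hS' : S ∈ B), f ⟨S, hS⟩ = g ⟨S, hS'⟩) :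
    (⟨A, f⟩ : CubeRaw T) = ⟨B, g⟩ := by
  subst h
  have : f = g := funext fun s => h2 s.1 s.2 s.2
  rw [this]

lemma psiRaw_rel {x y : {q : CubeRaw T // CubeValid T q}} (h : CubeRel T x y) :
    psiRaw T x.1 = psiRaw T y.1 := by
  obtain ⟨S₀, h₀, hw0, hset, hwts⟩ := h
  funext S
  unfold psiRaw
  by_cases hS : S ∈ y.1.1
  · have hS' : S ∈ x.1.1 := by rw [hset] at hS; exact hS.1
    rw [dif_pos hS', dif_pos hS, hwts S hS hS']
  · by_cases hS' : S ∈ x.1.1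
    · have : S = S₀ := by
        by_contra hne
        exact hS (by rw [hset]; exact ⟨hS', hne⟩)
      subst this
      rw [dif_pos hS', dif_neg hS]
      exact hw0
    · rw [dif_neg hS', dif_neg hS]

lemma cube_eq_trim (x : {q : CubeRaw T // CubeValid T q}) :
    Quot.mk (CubeRel T) x
      = Quot.mk (CubeRel T) ⟨trimOf T (psiRaw T x.1), trim_valid x.2⟩ := by
  classical
  suffices H : ∀ n (x : {q : CubeRaw T // CubeValid T q}),
      {S | S ∈ x.1.1 ∧ psiRaw T x.1 S = 0}.ncard = n →
      Quot.mk (CubeRel T) x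
        = Quot.mk (CubeRel T) ⟨trimOf T (psiRaw T x.1), trim_valid x.2⟩ from
    H _ x rfl
  intro n
  induction n using Nat.strong_induction_on with
  | _ n IH =>
    intro x hx
    by_cases hz : {S | S ∈ x.1.1 ∧ psiRaw T x.1 S = 0} = ∅
    · -- trim is equal to x itself
      have hset : {S | psiRaw T x.1 S ≠ 0} = x.1.1 := by
        ext S
        simp only [Set.mem_setOf_eq]
        constructor
        · exact fun h => psiRaw_support h
        · intro hS hzero
          have hmem : S ∈ {S | S ∈ x.1.1 ∧ psiRaw T x.1 S = 0} := ⟨hS, hzero⟩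
          rw [hz] at hmem
          exact hmem
      have hxeq : trimOf T (psiRaw T x.1) = x.1 := by
        refine cubeRaw_ext hset fun S hS hS' => ?_
        show psiRaw T x.1 S = x.1.2 ⟨S, hS'⟩
        unfold psiRaw
        rw [dif_pos hS']
      congr 1
      exact Subtype.ext hxeq.symm
    · obtain ⟨S₀, hS₀⟩ := Set.nonempty_iff_ne_empty.mpr hz
      obtain ⟨hS₀1, hS₀2⟩ := hS₀
      have hw0 : x.1.2 ⟨S₀, hS₀1⟩ = 0 := by
        have := hS₀2
        unfold psiRaw at this
        rwa [dif_pos hS₀1] at this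
      -- the point with S₀ removed
      set q' : CubeRaw T := ⟨x.1.1 \ {S₀}, fun S => x.1.2 ⟨S.1, S.2.1⟩⟩ with hq'
      have hq'valid : CubeValid T q' := by
        constructor
        · exact x.2.1.subset Set.diff_subset
        · intro s; exact x.2.2 _
      have hrel : CubeRel T x ⟨q', hq'valid⟩ :=
        ⟨S₀, hS₀1, hw0, rfl, fun S hS hS' => rfl⟩
      have hpsi : psiRaw T q' = psiRaw T x.1 := (psiRaw_rel hrel).symm
      have hzset : {S | S ∈ q'.1 ∧ psiRaw T q' S = 0}
          = {S | S ∈ x.1.1 ∧ psiRaw T x.1 S = 0} \ {S₀} := by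
        ext S
        simp only [Set.mem_setOf_eq, Set.mem_diff, Set.mem_singleton_iff, hpsi]
        constructor
        · rintro ⟨⟨h1, h2⟩, h3⟩; exact ⟨⟨h1, h3⟩, h2⟩
        · rintro ⟨⟨h1, h2⟩, h3⟩; exact ⟨⟨h1, h3⟩, h2⟩
      have hfin : {S | S ∈ x.1.1 ∧ psiRaw T x.1 S = 0}.Finite := Set.toFinite _
      have hlt : {S | S ∈ q'.1 ∧ psiRaw T q' S = 0}.ncard < n := by
        rw [hzset, ← hx]
        exact Set.ncard_diff_singleton_lt_of_mem ⟨hS₀1, hS₀2⟩ hfin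
      have step := IH _ hlt ⟨q', hq'valid⟩ rfl
      rw [Quot.sound hrel, step]
      congr 1
      apply Subtype.ext
      show trimOf T (psiRaw T q') = trimOf T (psiRaw T x.1)
      rw [hpsi]

lemma cube_inj (x y : {q : CubeRaw T // CubeValid T q})
    (h : psiRaw T x.1 = psiRaw T y.1) :
    Quot.mk (CubeRel T) x = Quot.mk (CubeRel T) y := by
  rw [cube_eq_trim x, cube_eq_trim y]
  congr 1
  apply Subtype.ext
  show trimOf T (psiRaw T x.1) = trimOf T (psiRaw T y.1)
  rw [h]

end Cube
section Nerve

variable {T : PreTree}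

lemma strictMono_of_adj {n : ℕ} {α : Type*} [PartialOrder α] {f : Fin (n+1) → α}
    (hf : Monotone f) (h : ∀ i : Fin n, f i.castSucc ≠ f i.succ) : StrictMono f := by
  intro a b hab
  have hab' : (a : ℕ) < (b : ℕ) := hab
  have hb : (a : ℕ) < n := lt_of_lt_of_le hab' (Nat.lt_succ_iff.mp b.isLt)
  set i : Fin n := ⟨(a : ℕ), hb⟩ with hi
  have hca : i.castSucc = a := by ext; rfl
  have h1 : f i.castSucc < f i.succ := lt_of_le_of_ne (hf (Fin.castSucc_le_succ i)) (h i)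
  have h2 : f i.succ ≤ f b := hf (by rw [Fin.le_def]; simp [hi]; omega)
  calc f a = f i.castSucc := by rw [hca]
    _ < f i.succ := h1
    _ ≤ f b := h2

lemma strictAnti_of_adj {n : ℕ} {f : Fin (n+1) → ℝ} (hf : Antitone f)
    (h : ∀ i : Fin n, f i.castSucc ≠ f i.succ) : StrictAnti f := by
  have hsm := strictMono_of_adj (α := ℝᵒᵈ) (f := fun i => OrderDual.toDual (f i))
    (fun a b hab => hf hab) (fun i => by simpa using h i)
  intro a b hab
  exact hsm hab

lemma rawPhi_rel {p q : PrePtRaw T} (hp : ValidPre T p) (h : RawRel T p q) :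
    rawPhi T p = rawPhi T q := by
  obtain ⟨r, c, t, i, rfl, rfl, hcond⟩ := h
  have hmono : Monotone c := hp.1
  have hIcc : ∀ j, t j ∈ Set.Icc (0:ℝ) 1 := hp.2.1
  have hanti : Antitone t := hp.2.2
  have hwa : Antitone (tExt t) := tExt_antitone hIcc hanti
  set t' : Fin r → ℝ := fun j => tExt t (i.succAbove j.succ) with ht'
  have hw : ∀ j : Fin (r+1), tExt t' j = tExt t (i.succAbove j) := by
    intro j
    induction j using Fin.cases with
    | succ j' => simp [ht']
    | zero =>
      rcases eq_or_ne i 0 with rfl | hi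
      · have hsa : (0 : Fin (r+2)).succAbove (0 : Fin (r+1)) = Fin.succ 0 :=
          Fin.succAbove_of_le_castSucc _ _ (le_refl _)
        rw [hsa]
        rcases hcond with hc | ⟨hpos, _⟩
        · rw [dif_pos (by simp : ((0 : Fin (r+2)) : ℕ) < r + 1)] at hc
          have hfe : (⟨((0 : Fin (r+2)) : ℕ) + 1, by simp⟩ : Fin (r+2)) = Fin.succ 0 := by
            ext; simp
          rw [hfe] at hc
          rw [tExt_zero, ← hc, tExt_zero]
        · simp at hpos
      · have h0i : (0 : Fin (r+1)).castSucc < i := by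
          have := Fin.pos_iff_ne_zero.mpr hi
          simpa using this
        rw [Fin.succAbove_of_castSucc_lt _ _ h0i]
        simp
  funext S
  have hne : ∀ k : Fin (r+2), k ≠ i → S ∈ (c k).1 →
      tExt t k ≤ rawPhi T ⟨r, (c ∘ i.succAbove, t')⟩ S := by
    intro k hk hSk
    obtain ⟨j, rfl⟩ := Fin.exists_succAbove_eq hk
    rw [← hw j]
    exact rawPhi_ge (p := ⟨r, (c ∘ i.succAbove, t')⟩) (i := j) hSk
  apply le_antisymm
  · apply rawPhi_le (rawPhi_nonneg _ _ _)
    intro k hSk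
    rcases eq_or_ne k i with hk | hk
    · subst hk
      rcases hcond with hc | ⟨hpos, hceq⟩
      · by_cases hlt : (k : ℕ) < r + 1
        · rw [dif_pos hlt] at hc
          set k' : Fin (r+2) := ⟨(k:ℕ) + 1, by omega⟩ with hk'
          have hkk' : k' ≠ k := by simp [hk', Fin.ext_iff]
          have hSk' : S ∈ (c k').1 :=
            Brkt.mem_of_le (hmono (by rw [Fin.le_def]; simp [hk'])) hSk
          rw [hc]
          exact hne k' hkk' hSk'
        · rw [dif_neg hlt] at hc
          rw [hc]
          exact rawPhi_nonneg _ _ _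
      · obtain ⟨hkpos⟩ : ∃ _ : 0 < (k : ℕ), True := ⟨hpos, trivial⟩
        set k' : Fin (r+2) := ⟨(k:ℕ) - 1, by omega⟩ with hk'
        have hkk' : k' ≠ k := by simp only [hk', ne_eq, Fin.ext_iff] <;> omega
        have hle : k' ≤ k := by rw [Fin.le_def] <;> simp [hk'] <;> omega
        have hSk' : S ∈ (c k').1 := by rw [hceq]; exact hSk
        exact le_trans (hwa hle) (hne k' hkk' hSk')
    · exact hne k hk hSk
  · apply rawPhi_le (rawPhi_nonneg _ _ _)
    intro j hSj
    rw [hw j]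
    exact rawPhi_ge (p := ⟨r+1, (c, t)⟩) (i := i.succAbove j) hSj

/-- Normal (irreducible) points of the realization. -/
def NormalPt (p : PrePtRaw T) : Prop :=
  (∀ i : Fin p.1, tExt p.2.2 i.castSucc ≠ tExt p.2.2 i.succ) ∧
  tExt p.2.2 (Fin.last p.1) ≠ 0 ∧
  (∀ i : Fin p.1, p.2.1 i.castSucc ≠ p.2.1 i.succ)

lemma removal_valid {r : ℕ} {c : Fin (r+2) → Brkt T} {t : Fin (r+1) → ℝ}
    (hv : ValidPre T ⟨r+1, (c, t)⟩) (i : Fin (r+2)) :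
    ValidPre T ⟨r, (c ∘ i.succAbove, fun j : Fin r => tExt t (i.succAbove j.succ))⟩ := by
  refine ⟨hv.1.comp (Fin.strictMono_succAbove i).monotone, fun j => tExt_mem_Icc hv.2.1 _,
    fun j k hjk => ?_⟩
  exact tExt_antitone hv.2.1 hv.2.2
    ((Fin.strictMono_succAbove i).monotone (Fin.succ_le_succ_iff.mpr hjk))

lemma reduce_step {p : PrePtRaw T} (hv : ValidPre T p) (hn : ¬ NormalPt p) :
    ∃ q, RawRel T p q ∧ ValidPre T q ∧ q.1 + 1 = p.1 := by
  obtain ⟨r, c, t⟩ := p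
  cases r with
  | zero =>
    exact absurd ⟨fun i => i.elim0, one_ne_zero, fun i => i.elim0⟩ hn
  | succ r =>
    by_cases hA : ∃ i : Fin (r+1), tExt t i.castSucc = tExt t i.succ
    · obtain ⟨i, hi⟩ := hA
      refine ⟨_, ⟨r, c, t, i.castSucc, rfl, rfl, Or.inl ?_⟩, removal_valid hv i.castSucc, rfl⟩
      rw [dif_pos (by simp <;> omega : ((i.castSucc : Fin (r+2)) : ℕ) < r + 1)]
      have hfe : (⟨((i.castSucc : Fin (r+2)) : ℕ) + 1, by simp <;> omega⟩ : Fin (r+2)) = i.succ := by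
        ext; simp
      rw [hfe]
      exact hi
    · by_cases hB : tExt t (Fin.last (r+1)) = 0
      · refine ⟨_, ⟨r, c, t, Fin.last (r+1), rfl, rfl, Or.inl ?_⟩,
          removal_valid hv (Fin.last (r+1)), rfl⟩
        rw [dif_neg (by simp : ¬ ((Fin.last (r+1) : Fin (r+2)) : ℕ) < r + 1)]
        exact hB
      · by_cases hC : ∃ i : Fin (r+1), c i.castSucc = c i.succ
        · obtain ⟨i, hi⟩ := hC
          refine ⟨_, ⟨r, c, t, i.succ, rfl, rfl, Or.inr ⟨by simp, ?_⟩⟩,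
            removal_valid hv i.succ, rfl⟩
          have hfe : (⟨((i.succ : Fin (r+2)) : ℕ) - 1, by omega⟩ : Fin (r+2)) = i.castSucc := by
            ext; simp
          rw [hfe]
          exact hi
        · push_neg at hA hC
          exact absurd ⟨hA, hB, hC⟩ hn

end Nerve
section Normal

variable {T : PreTree}

lemma normal_strictAnti {p : PrePtRaw T} (hv : ValidPre T p) (hn : NormalPt p) :
    StrictAnti (tExt p.2.2) :=
  strictAnti_of_adj (tExt_antitone hv.2.1 hv.2.2) hn.1

lemma normal_pos {p : PrePtRaw T} (hv : ValidPre T p) (hn : NormalPt p)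
    (i : Fin (p.1+1)) : 0 < tExt p.2.2 i := by
  have h1 : 0 < tExt p.2.2 (Fin.last p.1) :=
    lt_of_le_of_ne (tExt_mem_Icc hv.2.1 _).1 (Ne.symm hn.2.1)
  exact lt_of_lt_of_le h1 (tExt_antitone hv.2.1 hv.2.2 (Fin.le_last i))

lemma phi_val_eq {p : PrePtRaw T} (hv : ValidPre T p) {i : Fin (p.1+1)} {S : Set T.V}
    (hS : S ∈ (p.2.1 i).1) (hS' : ∀ j, j < i → S ∉ (p.2.1 j).1) :
    rawPhi T p S = tExt p.2.2 i := by
  apply le_antisymm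
  · apply rawPhi_le (tExt_mem_Icc hv.2.1 i).1
    intro k hk
    have hik : i ≤ k := by
      by_contra hc
      push_neg at hc
      exact hS' k hc hk
    exact tExt_antitone hv.2.1 hv.2.2 hik
  · exact rawPhi_ge hS

lemma mem_iff_phi_ge {p : PrePtRaw T} (hv : ValidPre T p) (hn : NormalPt p)
    (i : Fin (p.1+1)) (S : Set T.V) :
    S ∈ (p.2.1 i).1 ↔ tExt p.2.2 i ≤ rawPhi T p S := by
  constructor
  · exact rawPhi_ge
  · intro h
    have hpos : 0 < tExt p.2.2 i := normal_pos hv hn i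
    have hne : rawPhi T p S ≠ 0 := (lt_of_lt_of_le hpos h).ne'
    obtain ⟨j, hj, hphi⟩ := rawPhi_attained hne
    have hstrict : StrictAnti (tExt p.2.2) := normal_strictAnti hv hn
    have hji : j ≤ i := by
      by_contra hc
      push_neg at hc
      rw [hphi] at h
      exact absurd h (not_le.mpr (hstrict hc))
    exact Brkt.mem_of_le (hv.1 hji) hj

lemma range_wt {p : PrePtRaw T} (hv : ValidPre T p) (hn : NormalPt p) :
    Set.range (tExt p.2.2) = insert 1 {a : ℝ | a ≠ 0 ∧ ∃ S, rawPhi T p S = a} := by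
  ext a
  constructor
  · rintro ⟨i, rfl⟩
    induction i using Fin.cases with
    | zero => exact Set.mem_insert_iff.mpr (Or.inl (tExt_zero _))
    | succ j =>
      refine Set.mem_insert_iff.mpr (Or.inr ⟨(normal_pos hv hn _).ne', ?_⟩)
      have hlt : p.2.1 j.castSucc ≠ p.2.1 j.succ := hn.2.2 j
      have hle : p.2.1 j.castSucc ≤ p.2.1 j.succ := hv.1 (Fin.castSucc_le_succ j)
      have hex : ∃ S, S ∈ (p.2.1 j.succ).1 ∧ S ∉ (p.2.1 j.castSucc).1 := by
        by_contra hcon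
        push_neg at hcon
        refine hlt (le_antisymm hle ?_)
        intro S hS
        exact hcon S hS
      obtain ⟨S, hS1, hS2⟩ := hex
      refine ⟨S, phi_val_eq hv hS1 ?_⟩
      intro k hk hSk
      have hkc : k ≤ j.castSucc := by
        rw [Fin.le_def]
        have := Fin.lt_def.mp hk
        simp at this ⊢
        omega
      exact hS2 (Brkt.mem_of_le (hv.1 hkc) hSk)
  · intro ha
    rcases Set.mem_insert_iff.mp ha with rfl | ⟨hne, S, hS⟩
    · exact ⟨0, rfl⟩
    · obtain ⟨j, -, hphi⟩ := rawPhi_attained (hS ▸ hne)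
      exact ⟨j, by rw [← hphi, hS]⟩

lemma normal_unique {p q : PrePtRaw T} (hvp : ValidPre T p) (hvq : ValidPre T q)
    (hnp : NormalPt p) (hnq : NormalPt q) (h : rawPhi T p = rawPhi T q) : p = q := by
  obtain ⟨rp, cp, tp⟩ := p
  obtain ⟨rq, cq, tq⟩ := q
  have hran : Set.range (tExt tp) = Set.range (tExt tq) := by
    rw [range_wt hvp hnp, range_wt hvq hnq]
    simp only [h]
  have hsp : StrictAnti (tExt tp) := normal_strictAnti hvp hnp
  have hsq : StrictAnti (tExt tq) := normal_strictAnti hvq hnq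
  have hcard : rp = rq := by
    have h1 : Nat.card ↑(Set.range (tExt tp)) = rp + 1 := by
      rw [Nat.card_range_of_injective hsp.injective]
      simp
    have h2 : Nat.card ↑(Set.range (tExt tq)) = rq + 1 := by
      rw [Nat.card_range_of_injective hsq.injective]
      simp
    rw [hran, h2] at h1
    omega
  subst hcard
  have hrev : StrictAnti (Fin.rev : Fin (rp+1) → Fin (rp+1)) := fun a b hab =>
    Fin.rev_lt_rev.mpr hab
  have hm1 : StrictMono (tExt tp ∘ Fin.rev) := hsp.comp hrev
  have hm2 : StrictMono (tExt tq ∘ Fin.rev) := hsq.comp hrev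
  have hranrev : Set.range (tExt tp ∘ Fin.rev) = Set.range (tExt tq ∘ Fin.rev) := by
    rw [Set.range_comp, Set.range_comp, Fin.rev_involutive.surjective.range_eq,
      Set.image_univ, Set.image_univ, hran]
  haveI : WellFoundedLT (Fin (rp+1)) := inferInstance
  have hwrev := (StrictMono.range_inj hm1 hm2).mp hranrev
  have hw : tExt tp = tExt tq := by
    funext i
    have := congrFun hwrev i.rev
    simpa [Fin.rev_rev] using this
  have ht : tp = tq := by
    funext j
    have := congrFun hw j.succ
    simpa using this
  have hc : cp = cq := by
    funext i
    apply Subtype.ext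
    ext S
    rw [show (S ∈ (cp i).1) ↔ _ from mem_iff_phi_ge hvp hnp i S,
      show (S ∈ (cq i).1) ↔ _ from mem_iff_phi_ge hvq hnq i S, h, hw]
  rw [ht, hc]

lemma exists_normal (x : {p : PrePtRaw T // ValidPre T p}) :
    ∃ y : {p : PrePtRaw T // ValidPre T p}, NormalPt y.1 ∧
      Quot.mk (NerveRel T) x = Quot.mk (NerveRel T) y ∧ rawPhi T y.1 = rawPhi T x.1 := by
  suffices H : ∀ n (x : {p : PrePtRaw T // ValidPre T p}), x.1.1 = n →
      ∃ y : {p : PrePtRaw T // ValidPre T p}, NormalPt y.1 ∧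
        Quot.mk (NerveRel T) x = Quot.mk (NerveRel T) y ∧ rawPhi T y.1 = rawPhi T x.1 from
    H _ x rfl
  intro n
  induction n using Nat.strong_induction_on with
  | _ n IH =>
    intro x hx
    by_cases hnorm : NormalPt x.1
    · exact ⟨x, hnorm, rfl, rfl⟩
    · obtain ⟨q, hrel, hval, hlen⟩ := reduce_step x.2 hnorm
      obtain ⟨y, hy1, hy2, hy3⟩ := IH q.1 (by omega) ⟨q, hval⟩ rfl
      exact ⟨y, hy1, (Quot.sound (show NerveRel T x ⟨q, hval⟩ from hrel)).trans hy2, hy3.trans (rawPhi_rel x.2 hrel).symm⟩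

lemma nerve_inj (x y : {p : PrePtRaw T // ValidPre T p})
    (h : rawPhi T x.1 = rawPhi T y.1) :
    Quot.mk (NerveRel T) x = Quot.mk (NerveRel T) y := by
  obtain ⟨x', hx1, hx2, hx3⟩ := exists_normal x
  obtain ⟨y', hy1, hy2, hy3⟩ := exists_normal y
  rw [hx2, hy2]
  have heq : x'.1 = y'.1 := normal_unique x'.2 y'.2 hx1 hy1 (by rw [hx3, hy3, h])
  exact congrArg _ (Subtype.ext heq)

lemma normal_len_lt {p : PrePtRaw T} (hv : ValidPre T p) (hn : NormalPt p) :
    p.1 < Nat.card (Brkt T) := by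
  have hsm : StrictMono p.2.1 := strictMono_of_adj hv.1 hn.2.2
  have hle := Nat.card_le_card_of_injective _ hsm.injective
  have h2 : Nat.card (Fin (p.1+1)) = p.1 + 1 :=
    Nat.card_eq_fintype_card.trans (Fintype.card_fin _)
  omega

end Normal
section Bridge

variable {T : PreTree}

lemma chiRep_valid {p : PrePtRaw T} (hv : ValidPre T p) : CubeValid T (chiRep T p) := by
  constructor
  · exact (p.2.1 (Fin.last p.1)).2
  · intro s
    rw [show (chiRep T p).2 s = chiWeight T p s.1 from rfl, chiWeight_eq]
    exact rawPhi_mem_Icc hv s.1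

lemma psiRaw_chiRep {p : PrePtRaw T} (hv : ValidPre T p) :
    psiRaw T (chiRep T p) = rawPhi T p := by
  funext S
  unfold psiRaw
  by_cases hS : S ∈ (chiRep T p).1
  · rw [dif_pos hS]
    exact chiWeight_eq T p S
  · rw [dif_neg hS]
    exact (rawPhi_zero_of_not_mem_last hv.1 hS).symm

lemma nerve_surj (y : CubeRaw T) (hy : CubeValid T y) :
    ∃ x : {p : PrePtRaw T // ValidPre T p}, rawPhi T x.1 = psiRaw T y := by
  classical
  set f : Set T.V → ℝ := psiRaw T y with hf
  have hf01 : ∀ S, f S ∈ Set.Icc (0:ℝ) 1 := fun S => psiRaw_mem_Icc hy S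
  have hfin : ((Set.range f) \ {0}).Finite := (Set.finite_range f).diff
  set W : Finset ℝ := insert 1 hfin.toFinset with hW
  have h1W : (1:ℝ) ∈ W := Finset.mem_insert_self _ _
  have hWpos : ∀ a ∈ W, 0 < a ∧ a ≤ 1 := by
    intro a ha
    rcases Finset.mem_insert.mp ha with rfl | ha
    · exact ⟨zero_lt_one, le_refl 1⟩
    · rw [Set.Finite.mem_toFinset] at ha
      obtain ⟨⟨S, rfl⟩, hne⟩ := ha
      simp only [Set.mem_singleton_iff] at hne
      exact ⟨lt_of_le_of_ne (hf01 S).1 (Ne.symm hne), (hf01 S).2⟩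
  have hWmem : ∀ a, a ∈ W ↔ (a = 1 ∨ (a ≠ 0 ∧ ∃ S, f S = a)) := by
    intro a
    rw [hW, Finset.mem_insert, Set.Finite.mem_toFinset]
    constructor
    · rintro (rfl | ⟨⟨S, rfl⟩, hne⟩)
      · exact Or.inl rfl
      · simp only [Set.mem_singleton_iff] at hne
        exact Or.inr ⟨hne, S, rfl⟩
    · rintro (rfl | ⟨hne, S, rfl⟩)
      · exact Or.inl rfl
      · exact Or.inr ⟨⟨S, rfl⟩, by simpa using hne⟩
  obtain ⟨r, hcard⟩ : ∃ r, W.card = r + 1 := by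
    have : 0 < W.card := Finset.card_pos.mpr ⟨1, h1W⟩
    exact ⟨W.card - 1, by omega⟩
  set e := W.orderIsoOfFin hcard with he
  set w : Fin (r+1) → ℝ := fun i => (e i.rev : ℝ) with hwdef
  have hwW : ∀ i, w i ∈ W := fun i => (e i.rev).2
  have hwanti : StrictAnti w := by
    intro a b hab
    have : b.rev < a.rev := Fin.rev_lt_rev.mpr hab
    exact Subtype.coe_lt_coe.mpr (e.strictMono this)
  have hwsurj : ∀ a ∈ W, ∃ i, w i = a := by
    intro a ha
    refine ⟨(e.symm ⟨a, ha⟩).rev, ?_⟩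
    rw [hwdef]
    simp [Fin.rev_rev]
  have hw0 : w 0 = 1 := by
    apply le_antisymm ((hWpos _ (hwW 0)).2)
    obtain ⟨i, hi⟩ := hwsurj 1 h1W
    rw [← hi]
    rcases eq_or_lt_of_le (Fin.zero_le i) with rfl | hlt
    · exact le_refl _
    · exact le_of_lt (hwanti hlt)
  have hwpos : ∀ i, 0 < w i := fun i => (hWpos _ (hwW i)).1
  -- the chain
  have hbr : ∀ i : Fin (r+1), T.IsBracketing {S | w i ≤ f S} := by
    intro i
    apply hy.1.subset
    intro S hS
    apply psiRaw_support (q := y)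
    rw [← hf]
    exact (lt_of_lt_of_le (hwpos i) hS).ne'
  set c : Fin (r+1) → Brkt T := fun i => ⟨{S | w i ≤ f S}, hbr i⟩ with hc
  set t : Fin r → ℝ := fun j => w j.succ with htdef
  have htw : ∀ i, tExt t i = w i := by
    intro i
    induction i using Fin.cases with
    | zero => rw [tExt_zero, hw0]
    | succ j => rw [tExt_succ]
  have hval : ValidPre T ⟨r, (c, t)⟩ := by
    refine ⟨?_, ?_, ?_⟩
    · intro i j hij S hS
      exact le_trans (hwanti.antitone hij) hS
    · intro j
      exact ⟨(hwpos _).le, (hWpos _ (hwW _)).2⟩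
    · intro i j hij
      exact hwanti.antitone (Fin.succ_le_succ_iff.mpr hij)
  refine ⟨⟨⟨r, (c, t)⟩, hval⟩, ?_⟩
  funext S
  show rawPhi T ⟨r, (c, t)⟩ S = f S
  by_cases hS : f S = 0
  · rw [hS]
    apply le_antisymm
    · apply rawPhi_le (le_refl 0)
      intro i hi
      exact absurd (lt_of_lt_of_le (hwpos i) hi) (by rw [hS]; simp [(hwpos i).not_gt])
    · exact rawPhi_nonneg _ _ _
  · have hfW : f S ∈ W := (hWmem (f S)).mpr (Or.inr ⟨hS, S, rfl⟩)
    obtain ⟨i₀, hi₀⟩ := hwsurj _ hfW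
    apply le_antisymm
    · apply rawPhi_le (hf01 S).1
      intro i hi
      rw [htw]
      exact hi
    · have : tExt t i₀ ≤ rawPhi T ⟨r, (c, t)⟩ S :=
        rawPhi_ge (p := ⟨r, (c, t)⟩) (i := i₀) (by show w i₀ ≤ f S; rw [hi₀])
      rwa [htw, hi₀] at this

end Bridge
section Topology

variable {T : PreTree}

lemma continuous_of_discrete_left {X Y Z : Type*} [TopologicalSpace X] [DiscreteTopology X]
    [TopologicalSpace Y] [TopologicalSpace Z] {f : X × Y → Z}
    (h : ∀ x, Continuous fun y => f (x, y)) : Continuous f := by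
  rw [continuous_iff_continuousAt]
  rintro ⟨x, y⟩
  have hopen : IsOpen {p : X × Y | p.1 = x} :=
    (isOpen_discrete ({x} : Set X)).preimage continuous_fst
  have hmem : {p : X × Y | p.1 = x} ∈ nhds (x, y) := hopen.mem_nhds rfl
  have hcc : ContinuousAt (fun p : X × Y => f (x, p.2)) (x, y) :=
    ((h x).comp continuous_snd).continuousAt
  apply hcc.congr
  apply Filter.eventuallyEq_of_mem hmem
  rintro ⟨p1, p2⟩ hp
  simp only [Set.mem_setOf_eq] at hp
  show f (x, p2) = f (p1, p2)
  rw [hp]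

lemma continuous_tExt_in_t {r : ℕ} (i : Fin (r+1)) :
    Continuous fun t : Fin r → ℝ => tExt t i := by
  induction i using Fin.cases with
  | zero => simp only [tExt_zero]; exact continuous_const
  | succ j => simp only [tExt_succ]; exact continuous_apply j

lemma continuous_finset_sup' {ι X : Type*} [TopologicalSpace X] {s : Finset ι}
    (hs : s.Nonempty) (f : ι → X → ℝ) (hf : ∀ i, Continuous (f i)) :
    Continuous fun x => s.sup' hs fun i => f i x := by
  induction hs using Finset.Nonempty.cons_induction with
  | singleton a => simpa using hf a
  | cons a s ha hs ih =>
    have heq : (fun x => (Finset.cons a s ha).sup' (Finset.cons_nonempty ha) fun i => f i x)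
        = fun x => f a x ⊔ s.sup' hs fun i => f i x := by
      funext x
      rw [Finset.sup'_cons hs]
    rw [heq]
    exact (hf a).sup ih

lemma continuous_rawPhi_fiber {r : ℕ} (c : Fin (r+1) → Brkt T) (S : Set T.V) :
    Continuous fun t : Fin r → ℝ => rawPhi T ⟨r, (c, t)⟩ S := by
  classical
  unfold rawPhi
  refine Continuous.sup continuous_const
    (continuous_finset_sup' (s := (Finset.univ : Finset (Fin (r+1)))) Finset.univ_nonempty
      (fun (i : Fin (r+1)) (t : Fin r → ℝ) =>
      if S ∈ (c i).1 then tExt t i else 0) ?_)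
  intro i
  by_cases hS : S ∈ (c i).1
  · simp only [if_pos hS]
    exact continuous_tExt_in_t i
  · simp only [if_neg hS]
    exact continuous_const

lemma continuous_chiRep : Continuous (chiRep T) := by
  refine continuous_sigma fun r => ?_
  apply continuous_of_discrete_left
  intro c
  show Continuous fun t : Fin r → ℝ => chiRep T ⟨r, (c, t)⟩
  have hg : Continuous fun t : Fin r → ℝ =>
      (fun S : ↥((c (Fin.last r)).1) => chiWeight T ⟨r, (c, t)⟩ S.1) :=
    continuous_pi fun S => by
      exact (continuous_rawPhi_fiber c S.1).congr fun t => (chiWeight_eq T _ S.1).symm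
  show Continuous
    ((@Sigma.mk (Set (Set T.V)) (fun Bs => ↥Bs → ℝ) ((c (Fin.last r)).1))
      ∘ (fun t : Fin r → ℝ =>
          fun S : ↥((c (Fin.last r)).1) => chiWeight T ⟨r, (c, t)⟩ S.1))
  exact Continuous.comp
    (@continuous_sigmaMk (Set (Set T.V)) (fun Bs => ↥Bs → ℝ) _ ((c (Fin.last r)).1)) hg

lemma continuous_psiRaw : Continuous (psiRaw T) := by
  classical
  refine continuous_sigma fun Bs => ?_
  refine continuous_pi fun S => ?_
  by_cases hS : S ∈ Bs
  · simp only [psiRaw, dif_pos hS]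
    exact continuous_apply (⟨S, hS⟩ : ↥Bs)
  · simp only [psiRaw, dif_neg hS]
    exact continuous_const

end Topology
section Compact

variable {T : PreTree}

lemma isCompact_antitone_icc (r : ℕ) :
    IsCompact {t : Fin r → ℝ | (∀ j, t j ∈ Set.Icc (0:ℝ) 1) ∧ Antitone t} := by
  apply IsCompact.of_isClosed_subset
    (isCompact_univ_pi (fun _ : Fin r => isCompact_Icc (a := (0:ℝ)) (b := 1)))
  · rw [Set.setOf_and]
    apply IsClosed.inter
    · have hpi : {t : Fin r → ℝ | ∀ j, t j ∈ Set.Icc (0:ℝ) 1}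
          = Set.pi Set.univ (fun _ : Fin r => Set.Icc (0:ℝ) 1) := by
        ext t; simp only [Set.mem_setOf_eq, Set.mem_univ_pi, Set.mem_Icc]
      rw [hpi]
      exact isClosed_set_pi fun j _ => isClosed_Icc
    · have hanti : {t : Fin r → ℝ | Antitone t}
          = ⋂ (a : Fin r) (b : Fin r) (_ : a ≤ b), {t : Fin r → ℝ | t b ≤ t a} := by
        ext t
        simp only [Set.mem_setOf_eq, Set.mem_iInter]
        exact ⟨fun h a b hab => h hab, fun h a b hab => h a b hab⟩
      rw [hanti]
      exact isClosed_iInter fun a => isClosed_iInter fun b => isClosed_iInter fun _ =>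
        isClosed_le (continuous_apply b) (continuous_apply a)
  · intro t ht
    rw [Set.mem_univ_pi]
    exact fun j => ht.1 j

lemma isCompact_Kr (r : ℕ) :
    IsCompact {x : {p : PrePtRaw T // ValidPre T p} | x.1.1 = r} := by
  rw [Topology.IsEmbedding.subtypeVal.isCompact_iff]
  have himg : Subtype.val '' {x : {p : PrePtRaw T // ValidPre T p} | x.1.1 = r}
      = Sigma.mk r '' ({c : Fin (r+1) → Brkt T | Monotone c} ×ˢ
          {t : Fin r → ℝ | (∀ j, t j ∈ Set.Icc (0:ℝ) 1) ∧ Antitone t}) := by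
    ext p
    constructor
    · rintro ⟨⟨⟨r', ct⟩, hval⟩, hx, rfl⟩
      simp only [Set.mem_setOf_eq] at hx
      subst hx
      exact ⟨ct, ⟨hval.1, hval.2.1, hval.2.2⟩, rfl⟩
    · rintro ⟨ct, hct, rfl⟩
      exact ⟨⟨⟨r, ct⟩, ⟨hct.1, hct.2.1, hct.2.2⟩⟩, rfl, rfl⟩
  rw [himg]
  exact (((Set.toFinite {c : Fin (r+1) → Brkt T | Monotone c}).isCompact).prod
    (isCompact_antitone_icc r)).image continuous_sigmaMk

instance : CompactSpace (NerveSpace T) := by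
  constructor
  have huniv : (Set.univ : Set (NerveSpace T)) = ⋃ r ∈ Set.Iio (Nat.card (Brkt T)),
      Quot.mk (NerveRel T) '' {x : {p : PrePtRaw T // ValidPre T p} | x.1.1 = r} := by
    apply Set.eq_of_subset_of_subset _ (Set.subset_univ _)
    intro z _
    induction z using Quot.ind with
    | _ x =>
      obtain ⟨y, hy1, hy2, -⟩ := exists_normal x
      have hlt : y.1.1 < Nat.card (Brkt T) := normal_len_lt y.2 hy1
      exact Set.mem_iUnion₂.mpr ⟨y.1.1, hlt, y, rfl, hy2.symm⟩
  rw [huniv]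
  exact Set.Finite.isCompact_biUnion (Set.finite_Iio _)
    (fun r _ => (isCompact_Kr r).image continuous_quot_mk)

/-- The map `𝔹(T) → ℝ^{Set T.V}` recording all weights (zero outside the bracketing). -/
noncomputable def psiBar (T : PreTree) : CubeSpace T → (Set T.V → ℝ) :=
  Quot.lift (fun x => psiRaw T x.1) (fun _ _ h => psiRaw_rel h)

lemma psiBar_injective : Function.Injective (psiBar T) := by
  intro a b
  induction a using Quot.ind with
  | _ x =>
    induction b using Quot.ind with
    | _ y =>
      intro h
      exact cube_inj x y h

lemma continuous_psiBar : Continuous (psiBar T) :=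
  continuous_quot_lift _ (continuous_psiRaw.comp continuous_subtype_val)

end Compact

noncomputable def nerveFwd (T : PreTree) : {p : PrePtRaw T // ValidPre T p} → CubeSpace T :=
  fun x => Quot.mk (CubeRel T) ⟨chiRep T x.1, chiRep_valid x.2⟩

lemma nerveFwd_resp (x y : {p : PrePtRaw T // ValidPre T p}) (h : NerveRel T x y) :
    nerveFwd T x = nerveFwd T y := by
  apply cube_inj
  rw [psiRaw_chiRep x.2, psiRaw_chiRep y.2]
  exact rawPhi_rel x.2 h

noncomputable def nerveToCube (T : PreTree) : NerveSpace T → CubeSpace T :=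
  Quot.lift (nerveFwd T) (nerveFwd_resp)

lemma psiBar_nerveToCube (x : {p : PrePtRaw T // ValidPre T p}) :
    psiBar T (nerveToCube T (Quot.mk (NerveRel T) x)) = rawPhi T x.1 :=
  psiRaw_chiRep x.2
/-- for every finite rooted tree `T`, the map `χ` sending a point
`((B₀ ⊆ … ⊆ B_r), (t₁,…,t_r))` of the realization of the nerve of `B(T)` to the
weighted bracketing with underlying bracketing `B_r`, in which every bracket of `B₀`
has weight `1` and every bracket of `B_i ∖ B_{i−1}` has weight `t_i`, is a
well-defined homeomorphism `|B(T)| ≃ 𝔹(T)`. -/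
theorem chi_well_defined_homeomorphism (T : PreTree) (hT : T.IsTree) :
    ∃ χ : NerveSpace T ≃ₜ CubeSpace T,
      ∀ p : {p : PrePtRaw T // ValidPre T p},
        ∃ hq : CubeValid T (chiRep T p.1),
          χ (Quot.mk (NerveRel T) p)
            = Quot.mk (CubeRel T) ⟨chiRep T p.1, hq⟩ := by
  classical
  haveI : T2Space (CubeSpace T) :=
    T2Space.of_injective_continuous psiBar_injective continuous_psiBar
  have hinj : Function.Injective (nerveToCube T) := by
    intro a b
    induction a using Quot.ind with
    | _ x =>
      induction b using Quot.ind with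
      | _ y =>
        intro h
        apply nerve_inj
        rw [← psiBar_nerveToCube x, ← psiBar_nerveToCube y, h]
  have hsurj : Function.Surjective (nerveToCube T) := by
    intro b
    induction b using Quot.ind with
    | _ y =>
      obtain ⟨x, hx⟩ := nerve_surj y.1 y.2
      refine ⟨Quot.mk _ x, ?_⟩
      apply psiBar_injective
      rw [psiBar_nerveToCube x, hx]
      rfl
  let e : NerveSpace T ≃ CubeSpace T := Equiv.ofBijective _ ⟨hinj, hsurj⟩
  have hcont : Continuous (nerveToCube T) :=
    continuous_quot_lift _ (continuous_quot_mk.comp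
      ((continuous_chiRep.comp continuous_subtype_val).subtype_mk fun x => chiRep_valid x.2))
  have hconte : Continuous (e : NerveSpace T → CubeSpace T) := hcont
  refine ⟨hconte.homeoOfEquivCompactToT2, fun p => ⟨chiRep_valid p.2, rfl⟩⟩
end

section
/- For every k ≥ 1, the map d(x,y) = 1 − Σ_{j=1}^k μ(I_j(x) ∩ I_j(y)) is a metric on F(k): it is nonnegative and symmetric, satisfies the triangle inequality d(x,z) ≤ d(x,y) + d(y,z), and d(x,y) = 0 if and only if x = y. -/
open MeasureTheory Set
open scoped ENNReal

noncomputable section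

abbrev Circle1 := AddCircle (1 : ℝ)

instance : Fact ((0:ℝ) < 1) := ⟨one_pos⟩

/-- The closed arc which is the image of `[a,b]` in the circle. -/
def IsClosedArc (A : Set Circle1) : Prop :=
  ∃ a b : ℝ, a < b ∧ b ≤ a + 1 ∧ A = (fun s : ℝ => (s : Circle1)) '' Set.Icc a b

def IsFiniteUnionOfArcs (A : Set Circle1) : Prop :=
  ∃ (n : ℕ) (f : Fin n → Set Circle1), (∀ i, IsClosedArc (f i)) ∧ A = ⋃ i, f i

/-- `(z₁; z₂; z₃; z₄)` is a cyclically ordered 4-tuple in the circle. -/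
def CyclicallyOrdered4 (z₁ z₂ z₃ z₄ : Circle1) : Prop :=
  ∃ a b c d : ℝ, a < b ∧ b < c ∧ c < d ∧ d < a + 1 ∧
    (a : Circle1) = z₁ ∧ (b : Circle1) = z₂ ∧ (c : Circle1) = z₃ ∧ (d : Circle1) = z₄

/-- The space `F(k)` of normalized cacti with `k` lobes. -/
structure CactusPartition (k : ℕ) where
  part : Fin k → Set Circle1
  closed' : ∀ j, IsClosed (part j)
  nonempty' : ∀ j, (part j).Nonempty
  arcs' : ∀ j, IsFiniteUnionOfArcs (part j)
  covers : ⋃ j, part j = Set.univ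
  disjoint_interiors : ∀ i j, i ≠ j → interior (part i) ∩ interior (part j) = ∅
  measure_part : ∀ j, volume (part j) = ENNReal.ofReal (1 / k)
  treelike : ¬ ∃ (i j : Fin k) (z₁ z₂ z₃ z₄ : Circle1), i ≠ j ∧
      z₁ ∈ interior (part j) ∧ z₃ ∈ interior (part j) ∧
      z₂ ∈ interior (part i) ∧ z₄ ∈ interior (part i) ∧
      CyclicallyOrdered4 z₁ z₂ z₃ z₄

/-- The image of `[0,t]` in the circle. -/
def arcTo (t : ℝ) : Set Circle1 := (fun s : ℝ => (s : Circle1)) '' Set.Icc 0 t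

/-- The canonical representative in `[0,1)` of a point of the circle. -/
def rep01 (z : Circle1) : ℝ := ((AddCircle.equivIco 1 0) z : ℝ)

lemma rep01_mem (z : Circle1) : rep01 z ∈ Set.Icc (0:ℝ) 1 := by
  have h := ((AddCircle.equivIco 1 0) z).2
  exact ⟨h.1, by have := h.2; simp only [zero_add] at this; exact this.le⟩

/-- The real-valued lift `c̃_x^j(t) = k · μ(I_j(x) ∩ [0,t])` of the `j`-th coordinate
of the cactus map. -/
def cactusCoord {k : ℕ} (x : CactusPartition k) (j : Fin k) (t : ℝ) : ℝ :=
  (k : ℝ) * (volume (x.part j ∩ arcTo t)).toReal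

/-- The cactus map `c_x : S¹ → (S¹)^k`. -/
def cactusMap {k : ℕ} (x : CactusPartition k) : Circle1 → Fin k → Circle1 :=
  fun z j => ((cactusCoord x j (rep01 z) : ℝ) : Circle1)

/-- The metric `d(x,y) = 1 - Σ_j μ(I_j(x) ∩ I_j(y))` on `F(k)`. -/
def cactDist {k : ℕ} (x y : CactusPartition k) : ℝ :=
  1 - ∑ j, (volume (x.part j ∩ y.part j)).toReal

/-- `Mon⁺(I, ∂I)`: continuous strictly increasing self-maps of `[0,1]` fixing `0`
and `1`, regarded as basepoint-preserving self-maps of the circle. -/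
structure MonPlus where
  toFun : Set.Icc (0:ℝ) 1 → Set.Icc (0:ℝ) 1
  continuous_toFun : Continuous toFun
  strictMono_toFun : StrictMono toFun
  map_zero : toFun ⟨0, Set.left_mem_Icc.mpr zero_le_one⟩ = ⟨0, Set.left_mem_Icc.mpr zero_le_one⟩
  map_one : toFun ⟨1, Set.right_mem_Icc.mpr zero_le_one⟩ = ⟨1, Set.right_mem_Icc.mpr zero_le_one⟩

/-- The self-map of the circle induced by an element of `Mon⁺(I, ∂I)`. -/
def MonPlus.circleMap (f : MonPlus) (z : Circle1) : Circle1 :=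
  ((f.toFun ⟨rep01 z, rep01_mem z⟩ : ℝ) : Circle1)

/-- `φ(x, f) = c_x ∘ f : S¹ → (S¹)^k`. -/
def phiMap {k : ℕ} (x : CactusPartition k) (f : MonPlus) : Circle1 → Fin k → Circle1 :=
  fun z => cactusMap x (f.circleMap z)

/-- Partial composition `f ∘_i g` of the coendomorphism operad of the circle. -/
def coendComp {k j : ℕ} (hj : 1 ≤ j) (f : Circle1 → Fin k → Circle1) (i : Fin k)
    (g : Circle1 → Fin j → Circle1) : Circle1 → Fin (k + j - 1) → Circle1 := fun z s =>
  if h1 : (s : ℕ) < (i : ℕ) then f z ⟨s, Nat.lt_trans h1 i.isLt⟩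
  else if h2 : (s : ℕ) < (i : ℕ) + j then g (f z i) ⟨(s : ℕ) - (i : ℕ), by omega⟩
  else f z ⟨(s : ℕ) - j + 1, by have := s.isLt; have := i.isLt; omega⟩


section Aux

lemma CactusPartition.ext_part {k : ℕ} {x y : CactusPartition k} (h : x.part = y.part) :
    x = y := by
  cases x; cases y; cases h; rfl

lemma isClosedArc_subset_closure_interior {A : Set Circle1} (hA : IsClosedArc A) :
    A ⊆ closure (interior A) := by
  obtain ⟨a, b, hab, _, rfl⟩ := hA
  have hopen : IsOpen ((fun s : ℝ => (s : Circle1)) '' Set.Ioo a b) :=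
    QuotientAddGroup.isOpenMap_coe _ isOpen_Ioo
  have hsub : (fun s : ℝ => (s : Circle1)) '' Set.Ioo a b ⊆
      interior ((fun s : ℝ => (s : Circle1)) '' Set.Icc a b) :=
    hopen.subset_interior_iff.mpr (Set.image_mono Set.Ioo_subset_Icc_self)
  calc (fun s : ℝ => (s : Circle1)) '' Set.Icc a b
      = (fun s : ℝ => (s : Circle1)) '' closure (Set.Ioo a b) := by
        rw [closure_Ioo hab.ne]
    _ ⊆ closure ((fun s : ℝ => (s : Circle1)) '' Set.Ioo a b) :=
        image_closure_subset_closure_image (continuous_quotient_mk')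
    _ ⊆ closure (interior ((fun s : ℝ => (s : Circle1)) '' Set.Icc a b)) :=
        closure_mono hsub

lemma finiteUnion_subset_closure_interior {A : Set Circle1} (hA : IsFiniteUnionOfArcs A) :
    A ⊆ closure (interior A) := by
  obtain ⟨n, f, hf, rfl⟩ := hA
  intro z hz
  obtain ⟨i, hi⟩ := Set.mem_iUnion.mp hz
  have h1 := isClosedArc_subset_closure_interior (hf i) hi
  exact closure_mono (interior_mono (Set.subset_iUnion f i)) h1

lemma part_subset_of_measure_inter {k : ℕ} (x y : CactusPartition k) (j : Fin k)
    (h : volume (x.part j ∩ y.part j) = volume (x.part j)) : x.part j ⊆ y.part j := by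
  have hmy : MeasurableSet (y.part j) := (y.closed' j).measurableSet
  have hdiff : volume (x.part j \ y.part j) = 0 := by
    have hd := measure_diff (Set.inter_subset_left : x.part j ∩ y.part j ⊆ x.part j)
      (((x.closed' j).measurableSet.inter hmy).nullMeasurableSet) (measure_ne_top volume _)
    have hxd : x.part j \ (x.part j ∩ y.part j) = x.part j \ y.part j := by
      ext t; simp only [Set.mem_diff, Set.mem_inter_iff]; tauto
    rw [hxd] at hd
    rw [hd, h, tsub_self]
  have hint : interior (x.part j) \ y.part j = ∅ := by
    by_contra hne
    have hopen : IsOpen (interior (x.part j) \ y.part j) :=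
      isOpen_interior.sdiff (y.closed' j)
    have hpos : 0 < volume (interior (x.part j) \ y.part j) :=
      hopen.measure_pos volume (Set.nonempty_iff_ne_empty.mpr hne)
    have : volume (interior (x.part j) \ y.part j) ≤ volume (x.part j \ y.part j) :=
      measure_mono (Set.diff_subset_diff_left interior_subset)
    rw [hdiff] at this
    exact absurd (le_antisymm this zero_le) hpos.ne'
  have hintsub : interior (x.part j) ⊆ y.part j := by
    intro t ht
    by_contra hns
    exact absurd (Set.mem_diff t |>.mpr ⟨ht, hns⟩) (by simp [hint])
  calc x.part j ⊆ closure (interior (x.part j)) :=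
        finiteUnion_subset_closure_interior (x.arcs' j)
    _ ⊆ closure (y.part j) := closure_mono hintsub
    _ = y.part j := (y.closed' j).closure_eq

lemma inter_measure_le {k : ℕ} (x y : CactusPartition k) (j : Fin k) :
    (volume (x.part j ∩ y.part j)).toReal ≤ 1 / (k : ℝ) := by
  have h1 : volume (x.part j ∩ y.part j) ≤ volume (x.part j) :=
    measure_mono Set.inter_subset_left
  have := ENNReal.toReal_mono (measure_ne_top _ _) h1
  rw [x.measure_part j, ENNReal.toReal_ofReal (by positivity)] at this
  exact this

lemma sum_inter_le {k : ℕ} (hk : 1 ≤ k) (x y : CactusPartition k) :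
    ∑ j, (volume (x.part j ∩ y.part j)).toReal ≤ 1 := by
  have hk0 : (k : ℝ) ≠ 0 := Nat.cast_ne_zero.mpr (by omega)
  have := Finset.sum_le_sum (fun j (_ : j ∈ Finset.univ) => inter_measure_le x y j)
  simpa [Finset.card_univ, mul_one_div, mul_inv_cancel₀ hk0] using this

end Aux

end
/-- `d(x,y) = 1 − Σ_j μ(I_j(x) ∩ I_j(y))` is a metric on `F(k)`:
nonnegative, symmetric, satisfies the triangle inequality, and vanishes exactly on
the diagonal. -/
theorem cactDist_is_metric (k : ℕ) (hk : 1 ≤ k) :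
    (∀ x y : CactusPartition k, 0 ≤ cactDist x y) ∧
    (∀ x y : CactusPartition k, cactDist x y = cactDist y x) ∧
    (∀ x y z : CactusPartition k, cactDist x z ≤ cactDist x y + cactDist y z) ∧
    (∀ x y : CactusPartition k, cactDist x y = 0 ↔ x = y) := by
  have hk0 : (k : ℝ) ≠ 0 := Nat.cast_ne_zero.mpr (by omega)
  refine ⟨?_, ?_, ?_, ?_⟩
  · intro x y
    have := sum_inter_le hk x y
    simp only [cactDist]; linarith
  · intro x y
    simp only [cactDist, Set.inter_comm]
  · intro x y z
    simp only [cactDist]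
    have key : ∀ j : Fin k,
        (volume (x.part j ∩ y.part j)).toReal + (volume (y.part j ∩ z.part j)).toReal ≤
        1 / (k : ℝ) + (volume (x.part j ∩ z.part j)).toReal := by
      intro j
      set A := x.part j; set B := y.part j; set C := z.part j
      have h1 : volume (A ∩ B) + volume (B ∩ C) ≤ volume B + volume (A ∩ C) := by
        have huai := measure_union_add_inter (μ := volume) (A ∩ B)
          ((y.closed' j).measurableSet.inter (z.closed' j).measurableSet)
        calc volume (A ∩ B) + volume (B ∩ C)
            = volume ((A ∩ B) ∪ (B ∩ C)) + volume ((A ∩ B) ∩ (B ∩ C)) := huai.symm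
          _ ≤ volume B + volume (A ∩ C) := by
              refine add_le_add (measure_mono ?_) (measure_mono ?_)
              · exact Set.union_subset Set.inter_subset_right Set.inter_subset_left
              · intro t ht
                exact Set.mem_inter ht.1.1 ht.2.2
      have h2 := ENNReal.toReal_mono (by finiteness) h1
      rw [ENNReal.toReal_add (measure_ne_top _ _) (measure_ne_top _ _),
        ENNReal.toReal_add (measure_ne_top _ _) (measure_ne_top _ _)] at h2
      have hB : (volume B).toReal = 1 / (k : ℝ) := by
        rw [y.measure_part j, ENNReal.toReal_ofReal (by positivity)]
      linarith
    have hsum := Finset.sum_le_sum (fun j (_ : j ∈ Finset.univ) => key j)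
    rw [Finset.sum_add_distrib, Finset.sum_add_distrib, Finset.sum_const,
      Finset.card_univ, Fintype.card_fin, nsmul_eq_mul, mul_one_div,
      div_self hk0] at hsum
    linarith
  · intro x y
    constructor
    · intro h
      have hsum : ∑ j, (volume (x.part j ∩ y.part j)).toReal = 1 := by
        simp only [cactDist] at h; linarith
      have heach : ∀ j : Fin k, (volume (x.part j ∩ y.part j)).toReal = 1 / (k : ℝ) := by
        by_contra hne
        push_neg at hne
        obtain ⟨j0, hj0⟩ := hne
        have hlt : (volume (x.part j0 ∩ y.part j0)).toReal < 1 / (k : ℝ) :=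
          lt_of_le_of_ne (inter_measure_le x y j0) hj0
        have := Finset.sum_lt_sum (fun j (_ : j ∈ Finset.univ) => inter_measure_le x y j)
          ⟨j0, Finset.mem_univ _, hlt⟩
        rw [hsum] at this
        simp [Finset.card_univ, mul_one_div, mul_inv_cancel₀ hk0] at this
      have hmeas : ∀ j : Fin k, volume (x.part j ∩ y.part j) = volume (x.part j) := by
        intro j
        have hfin : volume (x.part j ∩ y.part j) ≠ ⊤ := measure_ne_top _ _
        rw [x.measure_part j]
        rw [← heach j, ENNReal.ofReal_toReal hfin]
      have hmeas' : ∀ j : Fin k, volume (x.part j ∩ y.part j) = volume (y.part j) := by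
        intro j
        rw [hmeas j, x.measure_part j, y.measure_part j]
      apply CactusPartition.ext_part
      funext j
      apply Set.Subset.antisymm
      · exact part_subset_of_measure_inter x y j (hmeas j)
      · refine part_subset_of_measure_inter y x j ?_
        rw [Set.inter_comm]; exact hmeas' j
    · rintro rfl
      simp only [cactDist, Set.inter_self]
      have : ∀ j : Fin k, (volume (x.part j)).toReal = 1 / (k : ℝ) := by
        intro j; rw [x.measure_part j, ENNReal.toReal_ofReal (by positivity)]
      rw [Finset.sum_congr rfl (fun j _ => this j)]
      simp [Finset.card_univ, mul_one_div, mul_inv_cancel₀ hk0]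
end

section
/- For every k ≥ 1, the map φ: MS⁺(k) → CoEnd(S¹)(k) = Map(S¹,(S¹)^k) defined by φ(x,f) = c_x ∘ f is a topological embedding. In particular, if x, y ∈ F(k) and f, g ∈ Mon⁺(I,∂I) satisfy c_x ∘ f = c_y ∘ g as maps S¹ → (S¹)^k, then f = g and x = y (i.e., c_x^j = c_y^j for all j). -/
open MeasureTheory Set
open scoped ENNReal

noncomputable section
namespace CactusAux

lemma coe_int (n : ℤ) : ((n:ℝ) : Circle1) = 0 := by
  rw [AddCircle.coe_eq_zero_iff]; exact ⟨n, by simp⟩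

lemma coe_sub_int (x : ℝ) (n : ℤ) : ((x - n : ℝ) : Circle1) = (x : Circle1) := by
  have : ((x - n : ℝ) : Circle1) = (x:Circle1) - ((n:ℝ):Circle1) := by exact_mod_cast rfl
  rw [this, coe_int, sub_zero]

lemma coe_one_eq_zero : ((1:ℝ) : Circle1) = ((0:ℝ) : Circle1) := by
  have := coe_sub_int 1 1
  norm_num at this
  exact this.symm

lemma coe_eq_coe_iff {s t : ℝ} : (s : Circle1) = (t : Circle1) ↔ ∃ n : ℤ, t - s = n := by
  constructor
  · intro h
    rw [show (s:Circle1) = QuotientAddGroup.mk s from rfl,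
      show (t:Circle1) = QuotientAddGroup.mk t from rfl, QuotientAddGroup.eq] at h
    obtain ⟨n, hn⟩ := AddSubgroup.mem_zmultiples_iff.mp h
    exact ⟨n, by simp only [zsmul_eq_mul, mul_one] at hn; linarith⟩
  · rintro ⟨n, hn⟩
    have : t - n = s := by linarith [hn]
    rw [← this, coe_sub_int]

lemma norm_coe_le (u : ℝ) : ‖((u:ℝ) : Circle1)‖ ≤ |u| := by
  simpa using QuotientAddGroup.norm_mk_le_norm (S := AddSubgroup.zmultiples (1:ℝ)) (m := u)

lemma norm_coe_eq (u : ℝ) : ‖((u:ℝ) : Circle1)‖ = |u - round u| := by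
  rw [AddCircle.norm_eq]; simp

lemma dist_coe_le (u v : ℝ) : dist ((u:ℝ) : Circle1) ((v:ℝ) : Circle1) ≤ |u - v| := by
  rw [dist_eq_norm]
  have : ((u:ℝ) : Circle1) - ((v:ℝ):Circle1) = ((u - v : ℝ) : Circle1) := by exact_mod_cast rfl
  rw [this]; exact norm_coe_le _

lemma volume_singleton (z : Circle1) : volume {z} = 0 := by
  have := AddCircle.volume_closedBall (T := (1:ℝ)) (x := z) 0
  simp only [Metric.closedBall_zero] at this
  simpa using this

lemma null_pair (z w : Circle1) {E : Set Circle1} (hE : E ⊆ {z, w}) : volume E = 0 := by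
  refine le_antisymm ?_ (zero_le)
  calc volume E ≤ volume ({z, w} : Set Circle1) := measure_mono hE
    _ ≤ volume ({z} : Set Circle1) + volume ({w} : Set Circle1) := by
        rw [Set.insert_eq]; exact measure_union_le _ _
    _ = 0 := by rw [volume_singleton, volume_singleton, add_zero]

/-- the closed arc from `a` to `b`. -/
def arc (a b : ℝ) : Set Circle1 := (fun s : ℝ => (s : Circle1)) '' Set.Icc a b

lemma arc_eq_closedBall {a b : ℝ} (hab : a ≤ b) (h1 : b ≤ a + 1) :
    arc a b = Metric.closedBall ((((a+b)/2 : ℝ)) : Circle1) ((b-a)/2) := by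
  ext z
  constructor
  · rintro ⟨s, hs, rfl⟩
    rw [Metric.mem_closedBall]
    refine le_trans (dist_coe_le _ _) ?_
    rw [abs_le]; constructor <;> [skip; skip] <;> cases hs with | intro h1 h2 => ?_
    · linarith
    · linarith
  · intro hz
    obtain ⟨x, rfl⟩ := QuotientAddGroup.mk_surjective z
    rw [Metric.mem_closedBall, dist_eq_norm,
      show ((x:ℝ):Circle1) - (((a+b)/2 : ℝ):Circle1) = ((x - (a+b)/2 : ℝ) : Circle1) by
        exact_mod_cast rfl, norm_coe_eq] at hz
    set n := round (x - (a+b)/2) with hn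
    refine ⟨x - n, ?_, coe_sub_int x n⟩
    rw [abs_le] at hz
    constructor <;> [skip; skip]
    · have := hz.1; linarith
    · have := hz.2; linarith

lemma measurableSet_arc (a b : ℝ) : MeasurableSet (arc a b) := by
  have : IsCompact (arc a b) := (isCompact_Icc).image (AddCircle.continuous_mk' 1)
  exact this.isClosed.measurableSet

lemma volume_arc {a b : ℝ} (hab : a ≤ b) (h1 : b ≤ a + 1) :
    volume (arc a b) = ENNReal.ofReal (b - a) := by
  rw [arc_eq_closedBall hab h1, AddCircle.volume_closedBall]
  congr 1
  rw [min_eq_right] <;> linarith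

lemma arcTo_eq (t : ℝ) : arcTo t = arc 0 t := rfl

lemma volume_arcTo {t : ℝ} (h0 : 0 ≤ t) (h1 : t ≤ 1) :
    volume (arcTo t) = ENNReal.ofReal t := by
  rw [arcTo_eq, volume_arc h0 (by linarith)]; simp



lemma rep01_coe (x : ℝ) : rep01 ((x:ℝ) : Circle1) = Int.fract x := by
  unfold rep01
  have := AddCircle.coe_equivIco_mk_apply (p := (1:ℝ)) x
  simpa using this

lemma coe_rep01 (z : Circle1) : ((rep01 z : ℝ) : Circle1) = z := by
  obtain ⟨x, rfl⟩ := QuotientAddGroup.mk_surjective z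
  rw [rep01_coe, Int.fract]
  exact coe_sub_int x ⌊x⌋

lemma rep01_nonneg (z : Circle1) : 0 ≤ rep01 z := ((AddCircle.equivIco 1 0) z).2.1

lemma rep01_lt_one (z : Circle1) : rep01 z < 1 := by
  have := ((AddCircle.equivIco 1 0) z).2.2
  simp only [zero_add] at this; exact this

/-- The CDF of a subset of the circle. -/
def cdf (S : Set Circle1) (t : ℝ) : ℝ := (volume (S ∩ arcTo t)).toReal

lemma arcTo_zero : arcTo 0 = {((0:ℝ) : Circle1)} := by
  rw [arcTo_eq, arc, Set.Icc_self, Set.image_singleton]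

lemma cdf_zero (S : Set Circle1) : cdf S 0 = 0 := by
  unfold cdf
  rw [arcTo_zero]
  have : volume (S ∩ {((0:ℝ) : Circle1)}) = 0 :=
    measure_mono_null Set.inter_subset_right (volume_singleton _)
  rw [this]; simp

lemma inter_union_toReal {S A B : Set Circle1} (hS : MeasurableSet S)
    (hB : MeasurableSet B) (hAB : volume (A ∩ B) = 0) :
    (volume (S ∩ (A ∪ B))).toReal = (volume (S ∩ A)).toReal + (volume (S ∩ B)).toReal := by
  rw [Set.inter_union_distrib_left,
    measure_union₀ (hS.inter hB).nullMeasurableSet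
      (measure_mono_null (by intro u hu; exact ⟨hu.1.2, hu.2.2⟩) hAB),
    ENNReal.toReal_add (measure_ne_top _ _) (measure_ne_top _ _)]

lemma arcTo_split {a b : ℝ} (h0 : 0 ≤ a) (hab : a ≤ b) :
    arcTo b = arcTo a ∪ arc a b := by
  rw [arcTo_eq, arcTo_eq, arc, arc, arc, ← Set.image_union, Set.Icc_union_Icc_eq_Icc h0 hab]

lemma arcTo_inter_arc_null {a b : ℝ} (h0 : 0 ≤ a) (hab : a ≤ b) (hb : b ≤ 1) :
    volume (arcTo a ∩ arc a b) = 0 := by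
  refine null_pair (((a:ℝ)) : Circle1) (((0:ℝ)) : Circle1) ?_
  rintro z ⟨⟨s, hs, rfl⟩, ⟨t, ht, hts⟩⟩
  obtain ⟨n, hn⟩ := coe_eq_coe_iff.mp hts
  have hge : (-1:ℝ) ≤ (n:ℝ) := by rw [← hn]; cases hs; cases ht; linarith
  have hle : (n:ℝ) ≤ 0 := by rw [← hn]; cases hs; cases ht; linarith
  have hge' : (-1:ℤ) ≤ n := by exact_mod_cast hge
  have hle' : n ≤ 0 := by exact_mod_cast hle
  have hcase : n = -1 ∨ n = 0 := by omega
  rcases hcase with h | h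
  · subst h
    have hs0 : s = 0 := by
      push_cast at hn; cases hs; cases ht; linarith
    subst hs0; right; rfl
  · subst h
    have hst : s = t := by push_cast at hn; linarith
    subst hst
    have : s = a := le_antisymm hs.2 ht.1
    subst this; left; rfl


lemma cdf_split {S : Set Circle1} (hS : MeasurableSet S) {a b : ℝ} (h0 : 0 ≤ a)
    (hab : a ≤ b) (hb : b ≤ 1) :
    (volume (S ∩ arc a b)).toReal = cdf S b - cdf S a := by
  unfold cdf
  rw [arcTo_split h0 hab,
    inter_union_toReal hS (measurableSet_arc a b) (arcTo_inter_arc_null h0 hab hb)]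
  ring

lemma cdf_diff_nonneg {S : Set Circle1} (hS : MeasurableSet S) {a b : ℝ} (h0 : 0 ≤ a)
    (hab : a ≤ b) (hb : b ≤ 1) : 0 ≤ cdf S b - cdf S a := by
  rw [← cdf_split hS h0 hab hb]; exact ENNReal.toReal_nonneg

lemma cdf_diff_le {S : Set Circle1} (hS : MeasurableSet S) {a b : ℝ} (h0 : 0 ≤ a)
    (hab : a ≤ b) (hb : b ≤ 1) : cdf S b - cdf S a ≤ b - a := by
  rw [← cdf_split hS h0 hab hb]
  have h1 : volume (S ∩ arc a b) ≤ volume (arc a b) := measure_mono Set.inter_subset_right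
  have h2 := volume_arc hab (by linarith)
  calc (volume (S ∩ arc a b)).toReal ≤ (volume (arc a b)).toReal :=
        ENNReal.toReal_mono (by rw [h2]; exact ENNReal.ofReal_ne_top) h1
    _ = b - a := by rw [h2, ENNReal.toReal_ofReal (by linarith)]

lemma cdf_abs_le {S : Set Circle1} (hS : MeasurableSet S) {a b : ℝ}
    (ha : a ∈ Set.Icc (0:ℝ) 1) (hb : b ∈ Set.Icc (0:ℝ) 1) :
    |cdf S b - cdf S a| ≤ |b - a| := by
  rcases le_total a b with h | h
  · rw [abs_of_nonneg (cdf_diff_nonneg hS ha.1 h hb.2), abs_of_nonneg (by linarith)]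
    exact cdf_diff_le hS ha.1 h hb.2
  · rw [abs_sub_comm, abs_sub_comm b a,
      abs_of_nonneg (cdf_diff_nonneg hS hb.1 h ha.2), abs_of_nonneg (by linarith)]
    exact cdf_diff_le hS hb.1 h ha.2

lemma continuousOn_cdf {S : Set Circle1} (hS : MeasurableSet S) :
    ContinuousOn (cdf S) (Set.Icc (0:ℝ) 1) := by
  have : LipschitzOnWith 1 (cdf S) (Set.Icc (0:ℝ) 1) := by
    refine LipschitzOnWith.of_dist_le_mul fun a ha b hb => ?_
    rw [Real.dist_eq, Real.dist_eq, NNReal.coe_one, one_mul]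
    exact cdf_abs_le hS hb ha
  exact this.continuousOn

lemma cdf_one {S : Set Circle1} : cdf S 1 = (volume S).toReal := by
  unfold cdf
  have : arcTo 1 = Set.univ := by
    rw [Set.eq_univ_iff_forall]
    intro z
    refine ⟨rep01 z, ⟨rep01_nonneg z, (rep01_lt_one z).le⟩, coe_rep01 z⟩
  rw [this, Set.inter_univ]

/-- shift an arc by an integer -/
lemma arc_shift (a b : ℝ) (n : ℤ) : arc (a - n) (b - n) = arc a b := by
  unfold arc
  have himg : Set.Icc (a - n) (b - n) = (fun u : ℝ => u - n) '' Set.Icc a b := by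
    rw [Set.image_sub_const_Icc]
  rw [himg, ← Set.image_comp]
  exact Set.image_congr fun u _ => coe_sub_int u n

lemma arc_union {a b c : ℝ} (hab : a ≤ b) (hbc : b ≤ c) :
    arc a c = arc a b ∪ arc b c := by
  unfold arc
  rw [← Set.image_union, Set.Icc_union_Icc_eq_Icc hab hbc]

/-- overlap of the two normalized pieces of a wrapped arc is null -/
lemma wrap_overlap_null {a' b' : ℝ} (h0 : 0 ≤ a') (ha1 : a' ≤ 1) (hb0 : 0 ≤ b' - 1)
    (hba : b' - 1 ≤ a') : volume (arc a' 1 ∩ arc 0 (b' - 1)) = 0 := by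
  refine null_pair (((a':ℝ)) : Circle1) (((0:ℝ)) : Circle1) ?_
  rintro z ⟨⟨s, hs, rfl⟩, ⟨t, ht, hts⟩⟩
  obtain ⟨n, hn⟩ := coe_eq_coe_iff.mp hts
  -- hn : s - t = n
  have hge : (0:ℝ) ≤ (n:ℝ) := by rw [← hn]; cases hs; cases ht; linarith
  have hle : (n:ℝ) ≤ 1 := by rw [← hn]; cases hs; cases ht; linarith
  have hge' : (0:ℤ) ≤ n := by exact_mod_cast hge
  have hle' : n ≤ 1 := by exact_mod_cast hle
  have hcase : n = 0 ∨ n = 1 := by omega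
  rcases hcase with h | h
  · subst h
    have hst : s = t := by push_cast at hn; linarith
    subst hst
    have : s = a' := le_antisymm (by cases ht; linarith) hs.1
    subst this; left; rfl
  · subst h
    have ht0 : t = 0 := by push_cast at hn; cases hs; cases ht; linarith
    have hs1 : s = 1 := by push_cast at hn; cases hs; cases ht; linarith
    subst hs1
    right
    show ((1:ℝ) : Circle1) ∈ ({((0:ℝ):Circle1)} : Set Circle1)
    have h10 : ((1:ℝ) : Circle1) = ((0:ℝ):Circle1) := by
      have := coe_sub_int 1 1
      simpa using this.symm
    rw [h10]; rfl

lemma isOpen_mkIoo (a b : ℝ) : IsOpen ((fun s : ℝ => (s : Circle1)) '' Set.Ioo a b) :=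
  QuotientAddGroup.isOpenMap_coe _ isOpen_Ioo

lemma arc_diff_mkIoo (a b : ℝ) :
    arc a b \ ((fun s : ℝ => (s : Circle1)) '' Set.Ioo a b) ⊆
      {((a:ℝ) : Circle1), ((b:ℝ) : Circle1)} := by
  rintro z ⟨⟨s, hs, rfl⟩, hz⟩
  by_cases h : s ∈ Set.Ioo a b
  · exact absurd ⟨s, h, rfl⟩ hz
  · rw [Set.mem_Ioo, not_and_or] at h
    rcases h with h | h
    · have : s = a := le_antisymm (not_lt.mp h) hs.1
      rw [this]; left; rfl
    · have : s = b := le_antisymm hs.2 (not_lt.mp h)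
      rw [this]; right; rfl

lemma arc_subset_closure_mkIoo {a b : ℝ} (hab : a < b) :
    arc a b ⊆ closure ((fun s : ℝ => (s : Circle1)) '' Set.Ioo a b) := by
  have h1 : arc a b = (fun s : ℝ => (s : Circle1)) '' closure (Set.Ioo a b) := by
    rw [closure_Ioo hab.ne]; rfl
  rw [h1]
  exact image_closure_subset_closure_image (AddCircle.continuous_mk' 1)

section Partition

variable {k : ℕ}

lemma part_measurable (x : CactusPartition k) (j : Fin k) : MeasurableSet (x.part j) :=
  (x.closed' j).measurableSet

lemma part_diff_interior_null (x : CactusPartition k) (j : Fin k) :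
    volume (x.part j \ interior (x.part j)) = 0 := by
  obtain ⟨n, A, hA, hxj⟩ := x.arcs' j
  choose a b hab hb1 hAi using hA
  have hAsub : ∀ i, A i ⊆ x.part j := by
    intro i; rw [hxj]; exact Set.subset_iUnion A i
  have hIoosub : ∀ i, (fun s : ℝ => (s : Circle1)) '' Set.Ioo (a i) (b i) ⊆
      interior (x.part j) := by
    intro i
    refine interior_maximal (Set.Subset.trans ?_ (hAsub i)) (isOpen_mkIoo _ _)
    rw [hAi i]
    exact Set.image_mono Set.Ioo_subset_Icc_self
  have hsub : x.part j \ interior (x.part j) ⊆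
      ⋃ i, (A i \ ((fun s : ℝ => (s : Circle1)) '' Set.Ioo (a i) (b i))) := by
    intro u hu
    have hu1 : u ∈ ⋃ i, A i := by rw [← hxj]; exact hu.1
    obtain ⟨_, ⟨i, rfl⟩, hui⟩ := hu1
    exact Set.mem_iUnion.mpr ⟨i, hui, fun hmem => hu.2 (hIoosub i hmem)⟩
  refine measure_mono_null hsub (measure_iUnion_null fun i => ?_)
  refine measure_mono_null ?_ (null_pair ((a i : ℝ) : Circle1) ((b i : ℝ) : Circle1)
    (Set.Subset.refl _))
  rw [hAi i]
  exact arc_diff_mkIoo _ _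

lemma part_eq_closure_interior (x : CactusPartition k) (j : Fin k) :
    x.part j = closure (interior (x.part j)) := by
  refine le_antisymm ?_ (closure_minimal interior_subset (x.closed' j))
  obtain ⟨n, A, hA, hxj⟩ := x.arcs' j
  choose a b hab hb1 hAi using hA
  have hAsub : ∀ i, A i ⊆ x.part j := by
    intro i; rw [hxj]; exact Set.subset_iUnion A i
  have hIoosub : ∀ i, (fun s : ℝ => (s : Circle1)) '' Set.Ioo (a i) (b i) ⊆
      interior (x.part j) := by
    intro i
    refine interior_maximal (Set.Subset.trans ?_ (hAsub i)) (isOpen_mkIoo _ _)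
    rw [hAi i]
    exact Set.image_mono Set.Ioo_subset_Icc_self
  intro u hu
  have hu1 : u ∈ ⋃ i, A i := by rw [← hxj]; exact hu
  obtain ⟨_, ⟨i, rfl⟩, hui⟩ := hu1
  have : u ∈ arc (a i) (b i) := by
    have hui' : u ∈ A i := hui
    rw [hAi i] at hui'; exact hui'
  exact closure_mono (hIoosub i) (arc_subset_closure_mkIoo (hab i) this)

lemma parts_inter_null (x : CactusPartition k) {i j : Fin k} (hij : i ≠ j) :
    volume (x.part i ∩ x.part j) = 0 := by
  have hsub : x.part i ∩ x.part j ⊆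
      (x.part i \ interior (x.part i)) ∪ (x.part j \ interior (x.part j)) := by
    intro u hu
    by_cases h : u ∈ interior (x.part i)
    · right
      refine ⟨hu.2, fun h2 => ?_⟩
      have h3 := x.disjoint_interiors i j hij
      have : u ∈ interior (x.part i) ∩ interior (x.part j) := ⟨h, h2⟩
      rw [h3] at this
      exact this
    · exact Or.inl ⟨hu.1, h⟩
  exact measure_mono_null hsub
    (measure_union_null (part_diff_interior_null x i) (part_diff_interior_null x j))

lemma sum_parts_inter (x : CactusPartition k) {A : Set Circle1} (hA : MeasurableSet A) :
    ∑ j, (volume (x.part j ∩ A)).toReal = (volume A).toReal := by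
  have h1 : ⋃ j, (x.part j ∩ A) = A := by
    rw [← Set.iUnion_inter, x.covers, Set.univ_inter]
  have h2 : volume (⋃ j, (x.part j ∩ A)) = ∑' j, volume (x.part j ∩ A) := by
    refine measure_iUnion₀ ?_ fun j => ((part_measurable x j).inter hA).nullMeasurableSet
    intro i j hij
    refine measure_mono_null ?_ (parts_inter_null x hij)
    intro u hu
    exact ⟨hu.1.1, hu.2.1⟩
  rw [h1] at h2
  rw [h2, tsum_fintype, ENNReal.toReal_sum fun j _ => measure_ne_top _ _]

lemma cdf_part_one (x : CactusPartition k) (j : Fin k) : cdf (x.part j) 1 = 1 / k := by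
  rw [cdf_one, x.measure_part, ENNReal.toReal_ofReal (by positivity)]

lemma sum_cdf_parts (x : CactusPartition k) {t : ℝ} (h0 : 0 ≤ t) (h1 : t ≤ 1) :
    ∑ j, cdf (x.part j) t = t := by
  unfold cdf
  rw [sum_parts_inter x (A := arcTo t) (measurableSet_arc 0 t), volume_arcTo h0 h1,
    ENNReal.toReal_ofReal h0]

end Partition

section Dist

variable {k : ℕ}

lemma inter_diff_toReal (x y : CactusPartition k) (j : Fin k) :
    (volume (x.part j ∩ y.part j)).toReal + (volume (x.part j \ y.part j)).toReal
      = (volume (x.part j)).toReal := by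
  rw [← ENNReal.toReal_add (measure_ne_top _ _) (measure_ne_top _ _),
    measure_inter_add_diff (μ := volume) _ (part_measurable y j)]

lemma part_toReal (x : CactusPartition k) (j : Fin k) :
    (volume (x.part j)).toReal = 1 / k := by
  rw [x.measure_part, ENNReal.toReal_ofReal (by positivity)]

lemma cactDist_eq_sum_diff (hk : 1 ≤ k) (x y : CactusPartition k) :
    cactDist x y = ∑ j, (volume (x.part j \ y.part j)).toReal := by
  unfold cactDist
  have h1 : ∀ j : Fin k, (volume (x.part j \ y.part j)).toReal
      = 1 / k - (volume (x.part j ∩ y.part j)).toReal := by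
    intro j
    have := inter_diff_toReal x y j
    rw [part_toReal x j] at this
    linarith
  rw [Finset.sum_congr rfl fun j _ => h1 j, Finset.sum_sub_distrib, Finset.sum_const,
    Finset.card_univ, Fintype.card_fin]
  have hk0 : (k:ℝ) ≠ 0 := by positivity
  have hsm : (k : ℕ) • ((1:ℝ) / k) = 1 := by
    rw [nsmul_eq_mul]; field_simp
  rw [hsm]

lemma cactDist_eq_sum_diff' (hk : 1 ≤ k) (x y : CactusPartition k) :
    cactDist x y = ∑ j, (volume (y.part j \ x.part j)).toReal := by
  have h : cactDist x y = cactDist y x := by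
    unfold cactDist
    congr 1
    exact Finset.sum_congr rfl fun j _ => by rw [Set.inter_comm]
  rw [h, cactDist_eq_sum_diff hk y x]

lemma cactDist_nonneg (hk : 1 ≤ k) (x y : CactusPartition k) : 0 ≤ cactDist x y := by
  rw [cactDist_eq_sum_diff hk]
  exact Finset.sum_nonneg fun j _ => ENNReal.toReal_nonneg

lemma diff_le_cactDist (hk : 1 ≤ k) (x y : CactusPartition k) (j : Fin k) :
    (volume (x.part j \ y.part j)).toReal ≤ cactDist x y := by
  rw [cactDist_eq_sum_diff hk]
  exact Finset.single_le_sum (f := fun i => (volume (x.part i \ y.part i)).toReal)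
    (fun i _ => ENNReal.toReal_nonneg) (Finset.mem_univ j)

lemma diff_le_cactDist' (hk : 1 ≤ k) (x y : CactusPartition k) (j : Fin k) :
    (volume (y.part j \ x.part j)).toReal ≤ cactDist x y := by
  rw [cactDist_eq_sum_diff' hk]
  exact Finset.single_le_sum (f := fun i => (volume (y.part i \ x.part i)).toReal)
    (fun i _ => ENNReal.toReal_nonneg) (Finset.mem_univ j)

lemma meas_inter_le_diff {S T : Set Circle1} (A : Set Circle1) :
    (volume (T ∩ A)).toReal ≤ (volume (S ∩ A)).toReal + (volume (T \ S)).toReal := by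
  have hsub : T ∩ A ⊆ (S ∩ A) ∪ (T \ S) := by
    intro u hu
    by_cases h : u ∈ S
    · exact Or.inl ⟨h, hu.2⟩
    · exact Or.inr ⟨hu.1, h⟩
  calc (volume (T ∩ A)).toReal ≤ (volume ((S ∩ A) ∪ (T \ S))).toReal := by
        refine ENNReal.toReal_mono (measure_ne_top _ _) (measure_mono hsub)
    _ ≤ _ := by
        refine le_trans (ENNReal.toReal_mono ?_ (measure_union_le _ _)) ?_
        · exact ENNReal.add_ne_top.mpr ⟨measure_ne_top _ _, measure_ne_top _ _⟩
        · rw [ENNReal.toReal_add (measure_ne_top _ _) (measure_ne_top _ _)]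

lemma cdf_cmp (hk : 1 ≤ k) (x y : CactusPartition k) (j : Fin k) (t : ℝ) :
    |cdf (y.part j) t - cdf (x.part j) t| ≤ cactDist x y := by
  rw [abs_le]
  constructor
  · have := meas_inter_le_diff (S := y.part j) (T := x.part j) (arcTo t)
    have h2 := diff_le_cactDist hk x y j
    unfold cdf; linarith
  · have := meas_inter_le_diff (S := x.part j) (T := y.part j) (arcTo t)
    have h2 := diff_le_cactDist' hk x y j
    unfold cdf; linarith

end Dist

section Mon

/-- extension of a `MonPlus` to a continuous monotone map `ℝ → ℝ`. -/
def monReal (f : MonPlus) (t : ℝ) : ℝ := (f.toFun (Set.projIcc 0 1 zero_le_one t) : ℝ)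

lemma monReal_mem (f : MonPlus) (t : ℝ) : monReal f t ∈ Set.Icc (0:ℝ) 1 :=
  (f.toFun (Set.projIcc 0 1 zero_le_one t)).2

lemma monReal_continuous (f : MonPlus) : Continuous (monReal f) :=
  continuous_subtype_val.comp (f.continuous_toFun.comp continuous_projIcc)

lemma monReal_zero (f : MonPlus) : monReal f 0 = 0 := by
  unfold monReal
  rw [Set.projIcc_left]
  rw [f.map_zero]

lemma monReal_one (f : MonPlus) : monReal f 1 = 1 := by
  unfold monReal
  rw [Set.projIcc_right]
  rw [f.map_one]

lemma monReal_val (f : MonPlus) (s : Set.Icc (0:ℝ) 1) : monReal f (s : ℝ) = (f.toFun s : ℝ) := by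
  unfold monReal
  rw [Set.projIcc_val]

lemma monReal_surjOn (f : MonPlus) {s : ℝ} (h0 : 0 ≤ s) (h1 : s ≤ 1) :
    ∃ t, 0 ≤ t ∧ t ≤ 1 ∧ monReal f t = s := by
  have hc : ContinuousOn (monReal f) (Set.Icc 0 1) := (monReal_continuous f).continuousOn
  have := intermediate_value_Icc (zero_le_one) hc
  rw [monReal_zero, monReal_one] at this
  obtain ⟨t, ht, hts⟩ := this ⟨h0, h1⟩
  exact ⟨t, ht.1, ht.2, hts⟩

end Mon

section Phi

variable {k : ℕ}

lemma cactusCoord_eq (x : CactusPartition k) (j : Fin k) (t : ℝ) :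
    cactusCoord x j t = k * cdf (x.part j) t := rfl

lemma cactusCoord_zero (x : CactusPartition k) (j : Fin k) : cactusCoord x j 0 = 0 := by
  rw [cactusCoord_eq, cdf_zero, mul_zero]

lemma cactusCoord_one (hk : 1 ≤ k) (x : CactusPartition k) (j : Fin k) :
    cactusCoord x j 1 = 1 := by
  rw [cactusCoord_eq, cdf_part_one]
  have : (k:ℝ) ≠ 0 := by positivity
  field_simp

lemma cactusCoord_mem (hk : 1 ≤ k) (x : CactusPartition k) (j : Fin k) {t : ℝ}
    (h0 : 0 ≤ t) (h1 : t ≤ 1) : cactusCoord x j t ∈ Set.Icc (0:ℝ) 1 := by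
  rw [cactusCoord_eq]
  have h2 := cdf_diff_nonneg (part_measurable x j) le_rfl h0 h1
  have h3 := cdf_diff_nonneg (part_measurable x j) h0 h1 le_rfl
  rw [cdf_zero] at h2
  rw [cdf_part_one] at h3
  have hk0 : (1:ℝ) ≤ k := by exact_mod_cast hk
  constructor
  · exact mul_nonneg (by positivity) (by linarith)
  · have hle : (k:ℝ) * cdf (x.part j) t ≤ (k:ℝ) * (1/k) :=
      mul_le_mul_of_nonneg_left (by linarith) (by positivity)
    have heq : (k:ℝ) * (1/k) = 1 := by field_simp
    linarith

lemma phi_apply (hk : 1 ≤ k) (x : CactusPartition k) (f : MonPlus) (z : Circle1) (j : Fin k) :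
    phiMap x f z j = ((cactusCoord x j (monReal f (rep01 z)) : ℝ) : Circle1) := by
  have hval : monReal f (rep01 z) = (f.toFun ⟨rep01 z, rep01_mem z⟩ : ℝ) :=
    monReal_val f ⟨rep01 z, rep01_mem z⟩
  show ((cactusCoord x j (rep01 (f.circleMap z)) : ℝ) : Circle1) = _
  rw [hval]
  set u : ℝ := (f.toFun ⟨rep01 z, rep01_mem z⟩ : ℝ) with hu
  have humem : u ∈ Set.Icc (0:ℝ) 1 := (f.toFun ⟨rep01 z, rep01_mem z⟩).2
  have hrep : rep01 (f.circleMap z) = Int.fract u := by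
    show rep01 ((u : ℝ) : Circle1) = _
    exact rep01_coe u
  rw [hrep]
  rcases lt_or_eq_of_le humem.2 with h | h
  · rw [Int.fract_eq_self.mpr ⟨humem.1, h⟩]
  · rw [h, show Int.fract (1:ℝ) = 0 by simp, cactusCoord_zero, cactusCoord_one hk]
    exact coe_one_eq_zero.symm

lemma dist_coe_eq_round (A B : ℝ) :
    dist ((A:ℝ) : Circle1) ((B:ℝ) : Circle1) = |(A - B) - round (A - B)| := by
  rw [dist_eq_norm,
    show ((A:ℝ):Circle1) - ((B:ℝ):Circle1) = ((A - B : ℝ) : Circle1) from by exact_mod_cast rfl,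
    norm_coe_eq]

lemma half_round (c : ℝ) (hc : |c| = 1/2) : 1/2 ≤ |c - round c| := by
  rw [abs_sub_round_eq_min]
  rcases abs_eq (by norm_num : (0:ℝ) ≤ 1/2) |>.mp hc with h | h
  · subst h
    rw [Int.fract_eq_self.mpr (by norm_num)]
    norm_num
  · subst h
    have h1 : Int.fract (-(1/2) : ℝ) = 1/2 := by
      rw [Int.fract_neg (by rw [Int.fract_eq_self.mpr (by norm_num)]; norm_num)]
      rw [Int.fract_eq_self.mpr (by norm_num)]
      norm_num
    rw [h1]; norm_num

/-- The key lifting lemma: uniform closeness on the circle lifts to closeness of the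
real-valued lifts. -/
lemma lift_close (hk : 1 ≤ k) (x y : CactusPartition k) (f g : MonPlus) {δ : ℝ}
    (hδ0 : 0 < δ) (hδ : δ ≤ 1/4)
    (H : ∀ (z : Circle1) (j : Fin k), dist (phiMap y g z j) (phiMap x f z j) < δ) :
    ∀ t : ℝ, 0 ≤ t → t ≤ 1 → ∀ j : Fin k,
      |cactusCoord y j (monReal g t) - cactusCoord x j (monReal f t)| < δ := by
  intro t ht0 ht1 j
  set h : ℝ → ℝ := fun s =>
    cactusCoord y j (monReal g s) - cactusCoord x j (monReal f s) with hh
  have hcont : ContinuousOn h (Set.Icc 0 1) := by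
    have hmg : Set.MapsTo (monReal g) (Set.Icc (0:ℝ) 1) (Set.Icc (0:ℝ) 1) :=
      fun s _ => monReal_mem g s
    have hmf : Set.MapsTo (monReal f) (Set.Icc (0:ℝ) 1) (Set.Icc (0:ℝ) 1) :=
      fun s _ => monReal_mem f s
    have cg0 := ContinuousOn.comp (g := cdf (y.part j))
      (continuousOn_cdf (part_measurable y j)) (monReal_continuous g).continuousOn hmg
    have cf0 := ContinuousOn.comp (g := cdf (x.part j))
      (continuousOn_cdf (part_measurable x j)) (monReal_continuous f).continuousOn hmf
    have cg : ContinuousOn (fun s => cdf (y.part j) (monReal g s)) (Set.Icc (0:ℝ) 1) := cg0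
    have cf : ContinuousOn (fun s => cdf (x.part j) (monReal f s)) (Set.Icc (0:ℝ) 1) := cf0
    rw [hh]
    simp only [cactusCoord_eq]
    exact (continuousOn_const.mul cg).sub (continuousOn_const.mul cf)
  have hzero : h 0 = 0 := by
    simp only [hh, monReal_zero, cactusCoord_zero, sub_zero]
  -- pointwise circle control on [0,1)
  have hkey : ∀ s : ℝ, 0 ≤ s → s < 1 → |h s - round (h s)| < δ := by
    intro s hs0 hs1
    have := H ((s : ℝ) : Circle1) j
    rw [phi_apply hk y g, phi_apply hk x f, rep01_coe,
      Int.fract_eq_self.mpr ⟨hs0, hs1⟩, dist_coe_eq_round] at this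
    exact this
  -- claim: |h s| < δ on [0,1)
  have hmain : ∀ s : ℝ, 0 ≤ s → s < 1 → |h s| < δ := by
    intro s hs0 hs1
    by_contra hcon
    push_neg at hcon
    have hr := hkey s hs0 hs1
    have hrne : round (h s) ≠ 0 := by
      intro h0
      rw [h0] at hr
      simp only [Int.cast_zero, sub_zero] at hr
      exact absurd hr (not_lt.mpr hcon)
    have habs : (1:ℝ) ≤ |(round (h s) : ℝ)| := by
      have := Int.one_le_abs hrne
      exact_mod_cast this
    have hbig : 3/4 < |h s| := by
      have : |(round (h s) : ℝ)| ≤ |h s - round (h s)| + |h s| := by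
        calc |(round (h s) : ℝ)| = |(round (h s) : ℝ) - h s + h s| := by ring_nf
          _ ≤ |(round (h s) : ℝ) - h s| + |h s| := abs_add_le _ _
          _ = |h s - round (h s)| + |h s| := by rw [abs_sub_comm]
      have hq : |h s - round (h s)| < 1/4 := lt_of_lt_of_le hr hδ
      linarith
    -- find an intermediate point with |h| = 1/2
    have hex : ∃ u : ℝ, u ∈ Set.Icc 0 s ∧ |h u| = 1/2 := by
      rcases le_or_gt (h s) 0 with hsign | hsign
      · rw [abs_of_nonpos hsign] at hbig
        have hm : (-(1/2) : ℝ) ∈ Set.Icc (h s) (h 0) := by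
          rw [hzero]
          constructor <;> [linarith; norm_num]
        have := intermediate_value_Icc' hs0 (hcont.mono (Set.Icc_subset_Icc le_rfl hs1.le)) hm
        obtain ⟨u, hu, hval⟩ := this
        exact ⟨u, hu, by rw [hval]; norm_num⟩
      · rw [abs_of_pos hsign] at hbig
        have hm : ((1/2) : ℝ) ∈ Set.Icc (h 0) (h s) := by
          rw [hzero]
          constructor <;> [norm_num; linarith]
        have := intermediate_value_Icc hs0 (hcont.mono (Set.Icc_subset_Icc le_rfl hs1.le)) hm
        obtain ⟨u, hu, hval⟩ := this
        exact ⟨u, hu, by rw [hval]; norm_num⟩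
    obtain ⟨u, hu, huval⟩ := hex
    have := hkey u hu.1 (lt_of_le_of_lt hu.2 hs1)
    have := half_round (h u) huval
    linarith
  rcases lt_or_eq_of_le ht1 with h1 | h1
  · exact hmain t ht0 h1
  · subst h1
    show |h 1| < δ
    have : h 1 = 0 := by
      simp only [hh, monReal_one, cactusCoord_one hk, sub_self]
    rw [this, abs_zero]
    exact hδ0

end Phi

section Close

variable {k : ℕ}

lemma mon_close (hk : 1 ≤ k) (x y : CactusPartition k) (f g : MonPlus) {δ : ℝ}
    (hδ0 : 0 < δ) (hδ : δ ≤ 1/4)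
    (H : ∀ (z : Circle1) (j : Fin k), dist (phiMap y g z j) (phiMap x f z j) < δ) :
    ∀ t : ℝ, 0 ≤ t → t ≤ 1 → |monReal g t - monReal f t| < δ := by
  intro t h0 h1
  have hl := lift_close hk x y f g hδ0 hδ H t h0 h1
  have hsumF : ∑ j, cactusCoord x j (monReal f t) = k * monReal f t := by
    simp only [cactusCoord_eq, ← Finset.mul_sum]
    rw [sum_cdf_parts x (monReal_mem f t).1 (monReal_mem f t).2]
  have hsumG : ∑ j, cactusCoord y j (monReal g t) = k * monReal g t := by
    simp only [cactusCoord_eq, ← Finset.mul_sum]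
    rw [sum_cdf_parts y (monReal_mem g t).1 (monReal_mem g t).2]
  have hne : (Finset.univ : Finset (Fin k)).Nonempty := ⟨⟨0, hk⟩, Finset.mem_univ _⟩
  have hsum : |(k:ℝ) * monReal g t - k * monReal f t| < k * δ := by
    rw [← hsumF, ← hsumG, ← Finset.sum_sub_distrib]
    calc |∑ j, (cactusCoord y j (monReal g t) - cactusCoord x j (monReal f t))|
        ≤ ∑ j, |cactusCoord y j (monReal g t) - cactusCoord x j (monReal f t)| :=
          Finset.abs_sum_le_sum_abs _ _
      _ < ∑ _j : Fin k, δ := Finset.sum_lt_sum_of_nonempty hne fun j _ => hl j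
      _ = k * δ := by rw [Finset.sum_const, Finset.card_univ, Fintype.card_fin, nsmul_eq_mul]
  have hk0 : (0:ℝ) < k := by
    have : (1:ℝ) ≤ k := by exact_mod_cast hk
    linarith
  have heq : (k:ℝ) * |monReal g t - monReal f t| = |(k:ℝ) * monReal g t - k * monReal f t| := by
    rw [← mul_sub, abs_mul, abs_of_pos hk0]
  exact lt_of_mul_lt_mul_left (by rw [heq]; exact hsum) hk0.le

lemma cdf_close (hk : 1 ≤ k) (x y : CactusPartition k) (f g : MonPlus) {δ : ℝ}
    (hδ0 : 0 < δ) (hδ : δ ≤ 1/4)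
    (H : ∀ (z : Circle1) (j : Fin k), dist (phiMap y g z j) (phiMap x f z j) < δ) :
    ∀ (j : Fin k) (s : ℝ), 0 ≤ s → s ≤ 1 →
      |cdf (y.part j) s - cdf (x.part j) s| < 2 * δ := by
  intro j s hs0 hs1
  obtain ⟨t, ht0, ht1, hts⟩ := monReal_surjOn f hs0 hs1
  have h1 := lift_close hk x y f g hδ0 hδ H t ht0 ht1 j
  have h2 := mon_close hk x y f g hδ0 hδ H t ht0 ht1
  rw [hts] at h1 h2
  have hk1 : (1:ℝ) ≤ k := by exact_mod_cast hk
  -- |cdf_y (monReal g t) - cdf_x s| < δ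
  have h1' : |cdf (y.part j) (monReal g t) - cdf (x.part j) s| < δ := by
    rw [cactusCoord_eq, cactusCoord_eq, ← mul_sub, abs_mul,
      abs_of_pos (by linarith : (0:ℝ) < (k:ℝ))] at h1
    nlinarith [abs_nonneg (cdf (y.part j) (monReal g t) - cdf (x.part j) s)]
  have hLip : |cdf (y.part j) s - cdf (y.part j) (monReal g t)| ≤ |s - monReal g t| :=
    cdf_abs_le (part_measurable y j) (monReal_mem g t) ⟨hs0, hs1⟩
  have habs : |s - monReal g t| < δ := by
    rw [abs_sub_comm]
    exact lt_of_le_of_lt (le_of_eq rfl) h2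
  calc |cdf (y.part j) s - cdf (x.part j) s|
      ≤ |cdf (y.part j) s - cdf (y.part j) (monReal g t)|
        + |cdf (y.part j) (monReal g t) - cdf (x.part j) s| := abs_sub_le _ _ _
    _ < δ + δ := by
        have := lt_of_le_of_lt hLip habs
        linarith
    _ = 2 * δ := by ring

lemma arc_est {S T : Set Circle1} (hS : MeasurableSet S) (hT : MeasurableSet T) {η : ℝ}
    (hη : 0 < η)
    (hC : ∀ s : ℝ, 0 ≤ s → s ≤ 1 → |cdf T s - cdf S s| < η) {a b : ℝ} (hab : a ≤ b)
    (hb1 : b ≤ a + 1) :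
    (volume (S ∩ arc a b)).toReal - (volume (T ∩ arc a b)).toReal ≤ 4 * η := by
  set n : ℤ := ⌊a⌋ with hn
  have ha0 : 0 ≤ a - n := by
    rw [hn]; exact sub_nonneg.mpr (Int.floor_le a)
  have ha1 : a - n < 1 := by
    rw [hn]; have := Int.lt_floor_add_one a; linarith
  have hab' : a - n ≤ b - n := by linarith
  have hb1' : b - n ≤ (a - n) + 1 := by linarith
  have harc : arc a b = arc (a - n) (b - n) := (arc_shift a b n).symm
  rw [harc]
  set a' := a - n
  set b' := b - n
  rcases le_or_gt b' 1 with hble | hbgt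
  · rw [cdf_split hS ha0 hab' hble, cdf_split hT ha0 hab' hble]
    have e1 := hC a' ha0 ha1.le
    have e2 := hC b' (le_trans ha0 hab') hble
    rw [abs_lt] at e1 e2
    linarith [e1.1, e1.2, e2.1, e2.2]
  · have hb0 : 0 ≤ b' - 1 := by linarith
    have hba : b' - 1 ≤ a' := by linarith
    have hsplit : arc a' b' = arc a' 1 ∪ arc 0 (b' - 1) := by
      rw [arc_union ha1.le hbgt.le]
      congr 1
      have := arc_shift 1 b' 1
      norm_num at this
      rw [← this]
    have hnull := wrap_overlap_null ha0 ha1.le hb0 hba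
    rw [hsplit, inter_union_toReal hS (measurableSet_arc _ _) hnull,
      inter_union_toReal hT (measurableSet_arc _ _) hnull,
      cdf_split hS ha0 ha1.le le_rfl, cdf_split hT ha0 ha1.le le_rfl,
      cdf_split hS le_rfl hb0 (by linarith), cdf_split hT le_rfl hb0 (by linarith)]
    have e1 := hC a' ha0 ha1.le
    have e2 := hC 1 zero_le_one le_rfl
    have e3 := hC (b' - 1) hb0 (by linarith)
    have e4 := hC 0 le_rfl zero_le_one
    rw [abs_lt] at e1 e2 e3 e4
    linarith [e1.1, e1.2, e2.1, e2.2, e3.1, e3.2, e4.1, e4.2]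

lemma part_diff_est (x : CactusPartition k) (j : Fin k) :
    ∃ n : ℕ, ∀ (y : CactusPartition k) (η : ℝ), 0 < η →
      (∀ s : ℝ, 0 ≤ s → s ≤ 1 → |cdf (y.part j) s - cdf (x.part j) s| < η) →
      (volume (x.part j \ y.part j)).toReal ≤ n * (4 * η) := by
  obtain ⟨n, A, hA, hxj⟩ := x.arcs' j
  refine ⟨n, ?_⟩
  intro y η hη hC
  choose a b hab hb1 hAi using hA
  have hAsub : ∀ i, A i ⊆ x.part j := by
    intro i; rw [hxj]; exact Set.subset_iUnion A i
  have hsub : x.part j \ y.part j ⊆ ⋃ i, (A i \ y.part j) := by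
    intro u hu
    have hu1 : u ∈ ⋃ i, A i := by rw [← hxj]; exact hu.1
    obtain ⟨_, ⟨i, rfl⟩, hui⟩ := hu1
    exact Set.mem_iUnion.mpr ⟨i, hui, hu.2⟩
  have hle : volume (x.part j \ y.part j) ≤ ∑ i, volume (A i \ y.part j) := by
    refine le_trans (measure_mono hsub) ?_
    rw [← tsum_fintype (L := SummationFilter.unconditional _)]
    exact measure_iUnion_le _
  have hle' : (volume (x.part j \ y.part j)).toReal ≤ ∑ i, (volume (A i \ y.part j)).toReal := by
    rw [← ENNReal.toReal_sum fun i _ => measure_ne_top _ _]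
    exact ENNReal.toReal_mono (ENNReal.sum_ne_top.mpr fun i _ => measure_ne_top _ _) hle
  have hterm : ∀ i, (volume (A i \ y.part j)).toReal ≤ 4 * η := by
    intro i
    have hsum := measure_inter_add_diff (μ := volume) (A i) (part_measurable y j)
    have hsum' : (volume (A i ∩ y.part j)).toReal + (volume (A i \ y.part j)).toReal
        = (volume (A i)).toReal := by
      rw [← ENNReal.toReal_add (measure_ne_top _ _) (measure_ne_top _ _), hsum]
    have hinter : A i ∩ x.part j = A i := Set.inter_eq_left.mpr (hAsub i)
    have hest : (volume (x.part j ∩ A i)).toReal - (volume (y.part j ∩ A i)).toReal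
        ≤ 4 * η := by
      have := arc_est (part_measurable x j) (part_measurable y j) hη hC
        (hab i).le (hb1 i)
      have hAi' : A i = arc (a i) (b i) := hAi i
      rw [← hAi'] at this
      exact this
    rw [Set.inter_comm (x.part j), hinter] at hest
    rw [Set.inter_comm (y.part j)] at hest
    linarith
  calc (volume (x.part j \ y.part j)).toReal ≤ ∑ i, (volume (A i \ y.part j)).toReal := hle'
    _ ≤ ∑ _i : Fin n, 4 * η := Finset.sum_le_sum fun i _ => hterm i
    _ = n * (4 * η) := by
        rw [Finset.sum_const, Finset.card_univ, Fintype.card_fin, nsmul_eq_mul]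

end Close

section Ext

variable {k : ℕ}

lemma part_subset_of_diff_null (x y : CactusPartition k) (j : Fin k)
    (hxy : volume (x.part j \ y.part j) = 0) : x.part j ⊆ y.part j := by
  have hint : interior (x.part j) ⊆ y.part j := by
    by_contra hcon
    rw [Set.not_subset] at hcon
    obtain ⟨u, hu1, hu2⟩ := hcon
    have hUopen : IsOpen (interior (x.part j) ∩ (y.part j)ᶜ) :=
      isOpen_interior.inter (y.closed' j).isOpen_compl
    have hpos : 0 < volume (interior (x.part j) ∩ (y.part j)ᶜ) :=
      hUopen.measure_pos volume ⟨u, hu1, hu2⟩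
    have hsub : interior (x.part j) ∩ (y.part j)ᶜ ⊆ x.part j \ y.part j :=
      fun v hv => ⟨interior_subset hv.1, hv.2⟩
    exact absurd (measure_mono_null hsub hxy) hpos.ne'
  calc x.part j = closure (interior (x.part j)) := part_eq_closure_interior x j
    _ ⊆ closure (y.part j) := closure_mono hint
    _ = y.part j := (y.closed' j).closure_eq

lemma cactus_ext (x y : CactusPartition k) (h : x.part = y.part) : x = y := by
  cases x; cases y
  simp only at h
  subst h
  rfl

lemma monplus_ext (f g : MonPlus) (h : ∀ s, (f.toFun s : ℝ) = (g.toFun s : ℝ)) : f = g := by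
  have h2 : f.toFun = g.toFun := funext fun s => Subtype.ext (h s)
  cases f; cases g
  simp only at h2
  subst h2
  rfl

end Ext

end CactusAux
end

open CactusAux

/-- the map `φ : MS⁺(k) → CoEnd(S¹)(k)`, `φ(x,f) = c_x ∘ f`, is a
topological embedding (injective; continuous and with continuous inverse onto its
image, expressed in `ε`-`δ` form for the product of the metric `d` on `F(k)` with the
uniform metric on `Mon⁺(I,∂I)`, and the uniform topology on `Map(S¹,(S¹)^k)`).  In
particular, if `c_x ∘ f = c_y ∘ g` then `f = g` and `x = y`. -/
theorem phiMap_embedding (k : ℕ) (hk : 1 ≤ k) :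
    Function.Injective (fun p : CactusPartition k × MonPlus => phiMap p.1 p.2) ∧
    (∀ (p : CactusPartition k × MonPlus) (ε : ℝ), 0 < ε →
      ∃ δ > 0, ∀ q : CactusPartition k × MonPlus,
        cactDist p.1 q.1 < δ →
        (∀ s : Set.Icc (0:ℝ) 1, |(q.2.toFun s : ℝ) - (p.2.toFun s : ℝ)| < δ) →
        ∀ (z : Circle1) (j : Fin k), dist (phiMap q.1 q.2 z j) (phiMap p.1 p.2 z j) < ε) ∧
    (∀ (p : CactusPartition k × MonPlus) (ε : ℝ), 0 < ε →
      ∃ δ > 0, ∀ q : CactusPartition k × MonPlus,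
        (∀ (z : Circle1) (j : Fin k), dist (phiMap q.1 q.2 z j) (phiMap p.1 p.2 z j) < δ) →
        cactDist p.1 q.1 < ε ∧
        ∀ s : Set.Icc (0:ℝ) 1, |(q.2.toFun s : ℝ) - (p.2.toFun s : ℝ)| < ε) ∧
    (∀ (x y : CactusPartition k) (f g : MonPlus),
      phiMap x f = phiMap y g → f = g ∧ x = y) := by
  -- the backward (inverse-continuity) estimate, which is the main workhorse
  have key : ∀ (p : CactusPartition k × MonPlus) (ε : ℝ), 0 < ε →
      ∃ δ > 0, ∀ q : CactusPartition k × MonPlus,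
        (∀ (z : Circle1) (j : Fin k), dist (phiMap q.1 q.2 z j) (phiMap p.1 p.2 z j) < δ) →
        cactDist p.1 q.1 < ε ∧
        ∀ s : Set.Icc (0:ℝ) 1, |(q.2.toFun s : ℝ) - (p.2.toFun s : ℝ)| < ε := by
    rintro ⟨x, f⟩ ε hε
    choose N hN using fun j : Fin k => part_diff_est x j
    set Nt : ℝ := ∑ j, (N j : ℝ) with hNt
    have hNt0 : 0 ≤ Nt := Finset.sum_nonneg fun j _ => by positivity
    set δ : ℝ := min (1/4) (ε / (8 * Nt + 8)) with hδdef
    have hδ0 : 0 < δ := lt_min (by norm_num) (by positivity)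
    have hδ14 : δ ≤ 1/4 := min_le_left _ _
    have hδε : δ ≤ ε / (8 * Nt + 8) := min_le_right _ _
    have hδε' : δ * (8 * Nt + 8) ≤ ε := by
      rw [← le_div_iff₀ (by positivity)]
      exact hδε
    refine ⟨δ, hδ0, ?_⟩
    rintro ⟨y, g⟩ H
    simp only at H ⊢
    have hmon := mon_close hk x y f g hδ0 hδ14 H
    constructor
    · -- distance estimate
      have hcdf := cdf_close hk x y f g hδ0 hδ14 H
      have hj : ∀ j : Fin k, (volume (x.part j \ y.part j)).toReal ≤ (N j : ℝ) * (4 * (2 * δ)) :=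
        fun j => hN j y (2 * δ) (by positivity) (hcdf j)
      have hsum : cactDist x y ≤ Nt * (8 * δ) := by
        rw [cactDist_eq_sum_diff hk, hNt, Finset.sum_mul]
        refine Finset.sum_le_sum fun j _ => ?_
        calc (volume (x.part j \ y.part j)).toReal ≤ (N j : ℝ) * (4 * (2 * δ)) := hj j
          _ = (N j : ℝ) * (8 * δ) := by ring
      have hfin : Nt * (8 * δ) < ε := by nlinarith
      exact lt_of_le_of_lt hsum hfin
    · -- the monotone maps
      intro s
      have hms := hmon (s : ℝ) s.2.1 s.2.2
      have e1 : monReal g (s : ℝ) = (g.toFun s : ℝ) := monReal_val g s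
      have e2 : monReal f (s : ℝ) = (f.toFun s : ℝ) := monReal_val f s
      rw [e1, e2] at hms
      refine lt_of_lt_of_le hms (le_trans hδε ?_)
      rw [div_le_iff₀ (by positivity)]
      nlinarith
  have inj : ∀ (x y : CactusPartition k) (f g : MonPlus),
      phiMap x f = phiMap y g → f = g ∧ x = y := by
    intro x y f g heq
    have hdist : ∀ ε : ℝ, 0 < ε → cactDist x y < ε ∧
        ∀ s : Set.Icc (0:ℝ) 1, |(g.toFun s : ℝ) - (f.toFun s : ℝ)| < ε := by
      intro ε hε
      obtain ⟨δ, hδ0, hδ⟩ := key (x, f) ε hε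
      exact hδ (y, g) (by intro z j; simp only; rw [← heq]; simpa using hδ0)
    constructor
    · refine monplus_ext f g fun s => ?_
      by_contra hne
      have h0 : 0 < |(g.toFun s : ℝ) - (f.toFun s : ℝ)| := by
        rw [abs_pos, sub_ne_zero]
        exact fun h => hne h.symm
      exact absurd ((hdist _ h0).2 s) (lt_irrefl _)
    · have hzero : cactDist x y ≤ 0 := by
        by_contra hc
        push_neg at hc
        exact absurd (hdist _ hc).1 (lt_irrefl _)
      have hzero' : cactDist x y = 0 := le_antisymm hzero (cactDist_nonneg hk x y)
      have hall : ∀ j, volume (x.part j \ y.part j) = 0 := by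
        intro j
        have hsum : ∑ j, (volume (x.part j \ y.part j)).toReal = 0 := by
          rw [← cactDist_eq_sum_diff hk]; exact hzero'
        have := (Finset.sum_eq_zero_iff_of_nonneg
          (fun j _ => ENNReal.toReal_nonneg)).mp hsum j (Finset.mem_univ j)
        rcases (ENNReal.toReal_eq_zero_iff _).mp this with h | h
        · exact h
        · exact absurd h (measure_ne_top _ _)
      have hall' : ∀ j, volume (y.part j \ x.part j) = 0 := by
        intro j
        have hsum : ∑ j, (volume (y.part j \ x.part j)).toReal = 0 := by
          rw [← cactDist_eq_sum_diff' hk]; exact hzero'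
        have := (Finset.sum_eq_zero_iff_of_nonneg
          (fun j _ => ENNReal.toReal_nonneg)).mp hsum j (Finset.mem_univ j)
        rcases (ENNReal.toReal_eq_zero_iff _).mp this with h | h
        · exact h
        · exact absurd h (measure_ne_top _ _)
      refine cactus_ext x y (funext fun j => le_antisymm ?_ ?_)
      · exact part_subset_of_diff_null x y j (hall j)
      · exact part_subset_of_diff_null y x j (hall' j)
  refine ⟨?_, ?_, key, inj⟩
  · -- injectivity
    rintro ⟨x, f⟩ ⟨y, g⟩ h
    simp only at h
    obtain ⟨hfg, hxy⟩ := inj x y f g h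
    exact Prod.ext hxy hfg
  · -- forward continuity
    rintro ⟨x, f⟩ ε hε
    have hk1 : (1:ℝ) ≤ (k:ℝ) := by exact_mod_cast hk
    refine ⟨ε / (2 * k + 1), by positivity, ?_⟩
    rintro ⟨y, g⟩ hd hfg z j
    simp only at hd hfg ⊢
    rw [phi_apply hk y g, phi_apply hk x f]
    have htmem : rep01 z ∈ Set.Icc (0:ℝ) 1 := ⟨rep01_nonneg z, (rep01_lt_one z).le⟩
    set t : ℝ := rep01 z with ht
    refine lt_of_le_of_lt (dist_coe_le _ _) ?_
    set δ : ℝ := ε / (2 * k + 1) with hδdef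
    have hgf : |monReal g t - monReal f t| < δ := by
      have := hfg ⟨t, htmem⟩
      have e1 : monReal g t = (g.toFun ⟨t, htmem⟩ : ℝ) := monReal_val g ⟨t, htmem⟩
      have e2 : monReal f t = (f.toFun ⟨t, htmem⟩ : ℝ) := monReal_val f ⟨t, htmem⟩
      rw [e1, e2]
      exact this
    have h1 : |cdf (y.part j) (monReal g t) - cdf (y.part j) (monReal f t)|
        ≤ |monReal g t - monReal f t| :=
      cdf_abs_le (part_measurable y j) (monReal_mem f t) (monReal_mem g t)
    have h2 : |cdf (y.part j) (monReal f t) - cdf (x.part j) (monReal f t)| ≤ cactDist x y :=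
      cdf_cmp hk x y j _
    rw [cactusCoord_eq, cactusCoord_eq]
    have hk0 : (0:ℝ) < k := by linarith
    have htri : |cdf (y.part j) (monReal g t) - cdf (x.part j) (monReal f t)|
        ≤ |cdf (y.part j) (monReal g t) - cdf (y.part j) (monReal f t)|
          + |cdf (y.part j) (monReal f t) - cdf (x.part j) (monReal f t)| := abs_sub_le _ _ _
    have hbound : |cdf (y.part j) (monReal g t) - cdf (x.part j) (monReal f t)| < 2 * δ := by
      have := lt_of_le_of_lt h1 hgf
      have h2' := lt_of_le_of_lt h2 hd
      linarith
    calc |(k:ℝ) * cdf (y.part j) (monReal g t) - (k:ℝ) * cdf (x.part j) (monReal f t)|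
        = (k:ℝ) * |cdf (y.part j) (monReal g t) - cdf (x.part j) (monReal f t)| := by
          rw [← mul_sub, abs_mul, abs_of_pos hk0]
      _ < (k:ℝ) * (2 * δ) := by
          exact mul_lt_mul_of_pos_left hbound hk0
      _ ≤ ε * (2 * k / (2 * k + 1)) := by
          apply le_of_eq
          rw [hδdef]
          field_simp
      _ < ε := by
          have hfrac : 2 * (k:ℝ) / (2 * k + 1) < 1 := by
            rw [div_lt_one (by linarith)]
            linarith
          nlinarith
end

section
/- Let k ≥ 1, x ∈ F(k), g ∈ Mon⁺(I,∂I), and 1 ≤ i ≤ k. Then there exist x̃ ∈ F(k) and g̃ ∈ Mon⁺(I,∂I) such that (id × ⋯ × g × ⋯ × id) ∘ c_x = c_{x̃} ∘ g̃ as maps S¹ → (S¹)^k, where on the left-hand side g is applied to the i-th coordinate. Explicitly, if I_i(x) = J₁ ⊔ ⋯ ⊔ J_r with each J_s a closed arc, then x̃ is obtained from x by replacing each J_s by an arc J̃_s of length (1/k)·ℓ(g(J_s)) (shifting the connected components of the complement accordingly), and g̃ is the piecewise-linear map canonically identifying I_r(x) with I_r(x̃) for every r. -/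
open MeasureTheory Set
open scoped ENNReal

noncomputable section

noncomputable section AuxRescale
namespace AuxRescale
open AddCircle Filter

abbrev Q : ℝ → Circle1 := fun s : ℝ => (s : Circle1)

lemma continuous_Q : Continuous Q := AddCircle.continuous_mk' 1
lemma measurable_Q : Measurable Q := continuous_Q.measurable

lemma Q_eq_iff {r s : ℝ} : Q r = Q s ↔ ∃ n : ℤ, r = s + n := by
  constructor
  · intro h
    have h2 : ((r - s : ℝ) : Circle1) = 0 := by
      have h3 : ((r - s : ℝ) : Circle1) = Q r - Q s := by
        ring_nf
        rfl
      rw [h3, h, sub_self]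
    rcases (AddCircle.coe_eq_zero_iff _).1 h2 with ⟨n, hn⟩
    refine ⟨n, ?_⟩
    have hn' : (n:ℝ) = r - s := by
      have := hn
      simpa [zsmul_eq_mul] using this
    linarith
  · rintro ⟨n, rfl⟩
    show (((s + (n:ℝ)) : ℝ) : Circle1) = (s : Circle1)
    have h1 : (((n:ℝ)) : Circle1) = 0 := (AddCircle.coe_eq_zero_iff _).2 ⟨n, by simp⟩
    have : (((s + (n:ℝ)) : ℝ) : Circle1) = (s : Circle1) + (((n:ℝ)) : Circle1) := by ring_nf; rfl
    rw [this, h1, add_zero]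

lemma rep01_lift (z : Circle1) : rep01 z = AddCircle.liftIco 1 0 id z := rfl

lemma rep01_coe {s : ℝ} (hs : s ∈ Set.Ico (0:ℝ) 1) : rep01 (Q s) = s := by
  rw [rep01_lift, AddCircle.liftIco_coe_apply (by simpa using hs)]
  rfl

lemma Q_rep01 (z : Circle1) : Q (rep01 z) = z := (AddCircle.equivIco 1 0).symm_apply_apply z

lemma rep01_mem_Ico (z : Circle1) : rep01 z ∈ Set.Ico (0:ℝ) 1 := by
  have h := ((AddCircle.equivIco 1 0) z).2
  simpa [rep01] using h


lemma measurable_rep01 : Measurable rep01 :=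
  measurable_subtype_coe.comp (AddCircle.measurableEquivIco (T := 1) 0).measurable

lemma rep01_preimage (S : Set ℝ) : rep01 ⁻¹' S = Q '' (S ∩ Set.Ico 0 1) := by
  ext z
  constructor
  · intro hz
    exact ⟨rep01 z, ⟨hz, rep01_mem_Ico z⟩, Q_rep01 z⟩
  · rintro ⟨s, ⟨hs, hs'⟩, rfl⟩
    simpa [Set.mem_preimage, rep01_coe hs'] using hs

lemma measure_eq_of_between {α : Type*} [MeasurableSpace α] {m : Measure α} {A B F : Set α}
    (h1 : A ⊆ B) (h2 : B ⊆ A ∪ F) (hF : m F = 0) : m B = m A := by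
  refine le_antisymm ?_ (measure_mono h1)
  calc m B ≤ m (A ∪ F) := measure_mono h2
    _ ≤ m A + m F := measure_union_le _ _
    _ = m A := by rw [hF, add_zero]

lemma volume_Q_Icc {a b : ℝ} (hab : a ≤ b) (hb : b ≤ a + 1) :
    volume (Q '' Set.Icc a b) = ENNReal.ofReal (b - a) := by
  have hmeas : MeasurableSet (Q '' Set.Icc a b) :=
    ((isCompact_Icc.image continuous_Q).isClosed).measurableSet
  rw [AddCircle.add_projection_respects_measure 1 a hmeas]
  have h1 : Set.Ioc a b ⊆ QuotientAddGroup.mk ⁻¹' (Q '' Set.Icc a b) ∩ Set.Ioc a (a + 1) := by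
    intro u hu
    exact ⟨⟨u, Set.Ioc_subset_Icc_self hu, rfl⟩, hu.1, hu.2.trans hb⟩
  have h2 : QuotientAddGroup.mk ⁻¹' (Q '' Set.Icc a b) ∩ Set.Ioc a (a + 1) ⊆
      Set.Ioc a b ∪ {a + 1} := by
    rintro u ⟨hu1, hu2⟩
    obtain ⟨r, hr, hru⟩ := hu1
    obtain ⟨n, hn⟩ := Q_eq_iff.1 hru
    have hn1 : (-1 : ℝ) ≤ (n : ℤ) := by
      have := hr.1; have := hu2.2; push_cast; linarith
    have hn2 : ((n : ℤ) : ℝ) < 1 := by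
      have := hr.2; have := hu2.1; push_cast; linarith
    have : n = -1 ∨ n = 0 := by
      have h1' : (-1 : ℤ) ≤ n := by exact_mod_cast hn1
      have h2' : n < 1 := by exact_mod_cast hn2
      omega
    rcases this with h | h
    · right
      have : r = u - 1 := by rw [hn]; push_cast [h]; ring
      have hu' : u = r + 1 := by linarith [this.symm]
      have : u = a + 1 := le_antisymm hu2.2 (by linarith [hr.1])
      simpa using this
    · left
      have : r = u := by rw [hn]; push_cast [h]; ring
      exact ⟨hu2.1, by rw [← this]; exact hr.2⟩
  have := measure_eq_of_between h1 h2 (by simp : volume ({a + 1} : Set ℝ) = 0)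
  rw [this, Real.volume_Ioc]

instance : NullSingletonClass (volume : Measure Circle1) := by
  constructor
  intro z
  have hsub : ({z} : Set Circle1) ⊆ Q '' Set.Icc (rep01 z) (rep01 z) := by
    intro w hw
    rcases hw with rfl
    exact ⟨rep01 w, ⟨le_rfl, le_rfl⟩, Q_rep01 w⟩
  have h0 : volume (Q '' Set.Icc (rep01 z) (rep01 z)) = 0 := by
    rw [volume_Q_Icc le_rfl (by linarith)]; simp
  exact le_antisymm ((measure_mono hsub).trans h0.le) zero_le

lemma arcTo_eq (t : ℝ) : arcTo t = Q '' Set.Icc 0 t := rfl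

lemma volume_arcTo {t : ℝ} (h0 : 0 ≤ t) (h1 : t ≤ 1) :
    volume (arcTo t) = ENNReal.ofReal t := by
  rw [arcTo_eq, volume_Q_Icc h0 (by linarith)]
  norm_num

lemma arcTo_one : arcTo 1 = Set.univ := by
  rw [arcTo_eq]
  ext z
  simp only [Set.mem_univ, iff_true]
  exact ⟨rep01 z, ⟨(rep01_mem_Ico z).1, (rep01_mem_Ico z).2.le⟩, Q_rep01 z⟩

lemma measurableSet_Q_Icc (a b : ℝ) : MeasurableSet (Q '' Set.Icc a b) :=
  ((isCompact_Icc.image continuous_Q).isClosed).measurableSet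

lemma measurableSet_arcTo (t : ℝ) : MeasurableSet (arcTo t) := measurableSet_Q_Icc 0 t

lemma inter_arcs_sub {a b : ℝ} (h0 : 0 ≤ a) (hab : a ≤ b) (hb1 : b ≤ 1) :
    Q '' Set.Icc 0 a ∩ Q '' Set.Icc a b ⊆ {Q a, Q 0} := by
  rintro z ⟨⟨r, hr, rfl⟩, ⟨s, hs, hsz⟩⟩
  obtain ⟨n, hn⟩ := Q_eq_iff.1 hsz
  have hn1 : (0 : ℝ) ≤ (n : ℤ) := by
    have := hr.2; have := hs.1; push_cast; linarith
  have hn2 : ((n : ℤ) : ℝ) ≤ 1 := by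
    have := hr.1; have := hs.2; push_cast; linarith
  have : n = 0 ∨ n = 1 := by
    have h1' : (0 : ℤ) ≤ n := by exact_mod_cast hn1
    have h2' : n ≤ 1 := by exact_mod_cast hn2
    omega
  simp only [Set.mem_insert_iff, Set.mem_singleton_iff]
  rcases this with h | h
  · left
    have hsr : s = r := by rw [hn, h]; push_cast; ring
    have : r = a := le_antisymm hr.2 (hsr ▸ hs.1)
    exact congrArg Q this
  · right
    have hsr : s = r + 1 := by rw [hn, h]; push_cast; ring
    have : r = 0 := le_antisymm (by linarith [hs.2]) hr.1
    exact congrArg Q this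

lemma volume_inter_split {P : Set Circle1} (hP : MeasurableSet P) {a b : ℝ}
    (h0 : 0 ≤ a) (hab : a ≤ b) (hb1 : b ≤ 1) :
    volume (P ∩ arcTo b) = volume (P ∩ arcTo a) + volume (P ∩ Q '' Set.Icc a b) := by
  have hsplit : arcTo b = Q '' Set.Icc 0 a ∪ Q '' Set.Icc a b := by
    rw [arcTo_eq, ← Set.image_union, Set.Icc_union_Icc_eq_Icc h0 hab]
  rw [hsplit, Set.inter_union_distrib_left, ← arcTo_eq]
  refine measure_union₀ (hP.inter (measurableSet_Q_Icc a b)).nullMeasurableSet ?_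
  exact measure_mono_null (fun z hz => inter_arcs_sub h0 hab hb1 ⟨hz.1.2, hz.2.2⟩)
    (Set.Finite.measure_zero ((Set.finite_singleton _).insert _) _)

section PartitionFacts
variable {k : ℕ} (x : CactusPartition k)

lemma finite_uncovered (j : Fin k) : (x.part j \ interior (x.part j)).Finite := by
  obtain ⟨n, f, harc, heq⟩ := x.arcs' j
  choose a b hab hb1 hf using harc
  have hsub : x.part j \ interior (x.part j) ⊆ ⋃ m, ({Q (a m), Q (b m)} : Set Circle1) := by
    rintro z ⟨hz1, hz2⟩
    rw [heq] at hz1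
    obtain ⟨m, hm⟩ := Set.mem_iUnion.1 hz1
    rw [hf m] at hm
    obtain ⟨r, hr, rfl⟩ := hm
    by_cases hro : r ∈ Set.Ioo (a m) (b m)
    · exfalso
      apply hz2
      have hopen : IsOpen (Q '' Set.Ioo (a m) (b m)) :=
        QuotientAddGroup.isOpenMap_coe (Set.Ioo (a m) (b m)) isOpen_Ioo
      have hQsub : Q '' Set.Ioo (a m) (b m) ⊆ x.part j := by
        rw [heq]
        intro w hw
        exact Set.mem_iUnion.2 ⟨m, by rw [hf m]; exact Set.image_mono Set.Ioo_subset_Icc_self hw⟩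
      exact interior_maximal hQsub hopen ⟨r, hro, rfl⟩
    · apply Set.mem_iUnion.2 ⟨m, ?_⟩
      simp only [Set.mem_insert_iff, Set.mem_singleton_iff]
      rcases Set.eq_endpoints_or_mem_Ioo_of_mem_Icc hr with h | h | h
      · exact Or.inl (congrArg Q h)
      · exact Or.inr (congrArg Q h)
      · exact absurd h hro
  exact (Set.finite_iUnion fun m => (Set.finite_singleton _).insert _).subset hsub

lemma finite_inter_parts {i j : Fin k} (hij : i ≠ j) : (x.part i ∩ x.part j).Finite := by
  apply ((finite_uncovered x i).union (finite_uncovered x j)).subset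
  rintro z ⟨hzi, hzj⟩
  by_cases h : z ∈ interior (x.part i)
  · right
    refine ⟨hzj, fun hc => ?_⟩
    have := x.disjoint_interiors i j hij
    exact absurd (Set.mem_inter h hc) (by rw [this]; exact Set.notMem_empty z)
  · exact Or.inl ⟨hzi, h⟩

lemma volume_inter_parts {i j : Fin k} (hij : i ≠ j) : volume (x.part i ∩ x.part j) = 0 :=
  (finite_inter_parts x hij).measure_zero _

lemma measurableSet_part (j : Fin k) : MeasurableSet (x.part j) := (x.closed' j).measurableSet

lemma volume_part_lt_top (j : Fin k) : volume (x.part j) < ⊤ := measure_lt_top _ _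

/-- `μ_l(t)`. -/
def mu (l : Fin k) (t : ℝ) : ℝ := (volume (x.part l ∩ arcTo t)).toReal

lemma mu_nonneg (l : Fin k) (t : ℝ) : 0 ≤ mu x l t := ENNReal.toReal_nonneg

lemma volume_part_arcTo_ne_top (l : Fin k) (t : ℝ) : volume (x.part l ∩ arcTo t) ≠ ⊤ :=
  (measure_lt_top _ _).ne

lemma mu_mono (l : Fin k) : Monotone (mu x l) := by
  intro s t hst
  apply ENNReal.toReal_mono (volume_part_arcTo_ne_top x l t)
  exact measure_mono (Set.inter_subset_inter_right _ (Set.image_mono (Set.Icc_subset_Icc_right hst)))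

lemma mu_zero (l : Fin k) : mu x l 0 = 0 := by
  have : volume (x.part l ∩ arcTo 0) = 0 := by
    apply measure_mono_null (Set.inter_subset_right)
    rw [arcTo_eq, Set.Icc_self, Set.image_singleton]
    exact measure_singleton _
  rw [mu, this, ENNReal.toReal_zero]

lemma mu_one (l : Fin k) : mu x l 1 = 1 / k := by
  rw [mu, arcTo_one, Set.inter_univ, x.measure_part l, ENNReal.toReal_ofReal]
  positivity

lemma mu_le (l : Fin k) (t : ℝ) : mu x l t ≤ 1 / k := by
  have h1 : volume (x.part l ∩ arcTo t) ≤ volume (x.part l) := measure_mono Set.inter_subset_left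
  have h2 := ENNReal.toReal_mono (measure_lt_top _ _).ne h1
  rw [x.measure_part l, ENNReal.toReal_ofReal (by positivity)] at h2
  exact h2

lemma volume_part_inter_Icc (l : Fin k) {a b : ℝ} (h0 : 0 ≤ a) (hab : a ≤ b) (hb1 : b ≤ 1) :
    volume (x.part l ∩ Q '' Set.Icc a b) = ENNReal.ofReal (mu x l b - mu x l a) := by
  have hsplit := volume_inter_split (P := x.part l) (measurableSet_part x l) h0 hab hb1
  have hfin1 : volume (x.part l ∩ arcTo a) ≠ ⊤ := volume_part_arcTo_ne_top x l a
  have hfin2 : volume (x.part l ∩ Q '' Set.Icc a b) ≠ ⊤ := (measure_lt_top _ _).ne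
  have htr : mu x l b = mu x l a + (volume (x.part l ∩ Q '' Set.Icc a b)).toReal := by
    rw [mu, mu, hsplit, ENNReal.toReal_add hfin1 hfin2]
  rw [htr]
  simp only [add_sub_cancel_left]
  exact (ENNReal.ofReal_toReal hfin2).symm

lemma mu_sub (l : Fin k) {a b : ℝ} (h0 : 0 ≤ a) (hab : a ≤ b) (hb1 : b ≤ 1) :
    mu x l b - mu x l a = (volume (x.part l ∩ Q '' Set.Icc a b)).toReal := by
  rw [volume_part_inter_Icc x l h0 hab hb1, ENNReal.toReal_ofReal]
  have := mu_mono x l hab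
  linarith

lemma mu_lipschitz (l : Fin k) {a b : ℝ} (h0 : 0 ≤ a) (hab : a ≤ b) (hb1 : b ≤ 1) :
    mu x l b - mu x l a ≤ b - a := by
  rw [mu_sub x l h0 hab hb1]
  have h1 : volume (x.part l ∩ Q '' Set.Icc a b) ≤ ENNReal.ofReal (b - a) := by
    rw [← volume_Q_Icc hab (by linarith)]
    exact measure_mono Set.inter_subset_right
  calc (volume (x.part l ∩ Q '' Set.Icc a b)).toReal ≤ (ENNReal.ofReal (b-a)).toReal :=
        ENNReal.toReal_mono ENNReal.ofReal_ne_top h1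
    _ = b - a := ENNReal.toReal_ofReal (by linarith)

lemma mu_continuousOn (l : Fin k) : ContinuousOn (mu x l) (Set.Icc 0 1) := by
  apply (LipschitzOnWith.of_dist_le_mul (K := 1) (f := mu x l) (s := Set.Icc 0 1) ?_).continuousOn
  intro s hs t ht
  rcases le_total t s with h | h
  · rw [Real.dist_eq, Real.dist_eq, abs_of_nonneg (by linarith [mu_mono x l h] : (0:ℝ) ≤ mu x l s - mu x l t), NNReal.coe_one, one_mul]
    calc mu x l s - mu x l t ≤ s - t := mu_lipschitz x l ht.1 h hs.2
      _ ≤ |s - t| := le_abs_self _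
  · rw [Real.dist_eq, Real.dist_eq, abs_sub_comm, abs_of_nonneg (by linarith [mu_mono x l h] : (0:ℝ) ≤ mu x l t - mu x l s), NNReal.coe_one, one_mul, abs_sub_comm]
    calc mu x l t - mu x l s ≤ t - s := mu_lipschitz x l hs.1 h ht.2
      _ ≤ |t - s| := le_abs_self _

lemma sum_mu {t : ℝ} (h0 : 0 ≤ t) (h1 : t ≤ 1) : ∑ l, mu x l t = t := by
  have hvol : volume (arcTo t) = ∑ l, volume (x.part l ∩ arcTo t) := by
    have hcov : arcTo t = ⋃ l, x.part l ∩ arcTo t := by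
      rw [← Set.iUnion_inter, x.covers, Set.univ_inter]
    have hmeq := measure_iUnion₀ (μ := volume) (f := fun l => x.part l ∩ arcTo t)
      (fun l m hlm => measure_mono_null (Set.inter_subset_inter Set.inter_subset_left Set.inter_subset_left) (volume_inter_parts x hlm))
      (fun l => ((measurableSet_part x l).inter (measurableSet_arcTo t)).nullMeasurableSet)
    conv_lhs => rw [hcov]
    rw [hmeq, tsum_fintype]
  have hco := congrArg ENNReal.toReal hvol
  rw [volume_arcTo h0 h1, ENNReal.toReal_ofReal h0] at hco
  conv_rhs => rw [hco, ENNReal.toReal_sum (fun l _ => volume_part_arcTo_ne_top x l t)]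
  rfl

end PartitionFacts

section GrealSec
variable (g : MonPlus)

/-- The clamped real version of `g`. -/
def Greal (t : ℝ) : ℝ := (g.toFun (Set.projIcc 0 1 zero_le_one t) : ℝ)

lemma Greal_eq {t : ℝ} (ht : t ∈ Set.Icc (0:ℝ) 1) : Greal g t = (g.toFun ⟨t, ht⟩ : ℝ) := by
  rw [Greal, Set.projIcc_of_mem]

lemma Greal_mono : Monotone (Greal g) := fun s t hst =>
  Subtype.coe_le_coe.2 (g.strictMono_toFun.monotone (Set.monotone_projIcc zero_le_one hst))

lemma Greal_strictMonoOn : StrictMonoOn (Greal g) (Set.Icc 0 1) := by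
  intro s hs t ht hst
  rw [Greal_eq g hs, Greal_eq g ht]
  exact Subtype.coe_lt_coe.2 (g.strictMono_toFun (by exact Subtype.mk_lt_mk.2 hst))

lemma Greal_continuous : Continuous (Greal g) :=
  continuous_subtype_val.comp (g.continuous_toFun.comp continuous_projIcc)

lemma Greal_zero : Greal g 0 = 0 := by
  rw [Greal_eq g (Set.left_mem_Icc.mpr zero_le_one)]
  rw [show (⟨0, Set.left_mem_Icc.mpr zero_le_one⟩ : Set.Icc (0:ℝ) 1) = ⟨0, Set.left_mem_Icc.mpr zero_le_one⟩ from rfl, g.map_zero]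

lemma Greal_one : Greal g 1 = 1 := by
  rw [Greal_eq g (Set.right_mem_Icc.mpr zero_le_one)]
  rw [show (⟨1, Set.right_mem_Icc.mpr zero_le_one⟩ : Set.Icc (0:ℝ) 1) = ⟨1, Set.right_mem_Icc.mpr zero_le_one⟩ from rfl, g.map_one]

end GrealSec

section LiftSec

/-- Lift of a map of `[0,1]` to a quasi-periodic map of `ℝ`. -/
def lift (u : ℝ → ℝ) (c : ℝ) : ℝ → ℝ := fun t => (⌊t⌋ : ℝ) * c + u (Int.fract t)

variable {u : ℝ → ℝ} {c : ℝ}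

lemma lift_eq_on (hc : u 1 = u 0 + c) {t : ℝ} (ht : t ∈ Set.Icc (0:ℝ) 1) :
    lift u c t = u t := by
  rcases eq_or_lt_of_le ht.2 with h | h
  · rw [h]
    rw [lift]
    norm_num [Int.fract_one]
    linarith
  · rw [lift, Int.floor_eq_zero_iff.2 ⟨ht.1, h⟩, Int.fract_eq_self.2 ⟨ht.1, h⟩]
    push_cast
    ring

lemma lift_add_int (u : ℝ → ℝ) (c : ℝ) (t : ℝ) (n : ℤ) :
    lift u c (t + n) = lift u c t + n * c := by
  rw [lift, lift, Int.floor_add_intCast, Int.fract_add_intCast]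
  push_cast
  ring

lemma lift_strictMono (hu : StrictMonoOn u (Set.Icc 0 1)) (hc : u 1 = u 0 + c) (hc0 : 0 ≤ c) :
    StrictMono (lift u c) := by
  have humono : MonotoneOn u (Set.Icc 0 1) := hu.monotoneOn
  intro s t hst
  have hfs : Int.fract s ∈ Set.Icc (0:ℝ) 1 := ⟨Int.fract_nonneg s, (Int.fract_lt_one s).le⟩
  have hft : Int.fract t ∈ Set.Icc (0:ℝ) 1 := ⟨Int.fract_nonneg t, (Int.fract_lt_one t).le⟩
  rcases lt_trichotomy ⌊s⌋ ⌊t⌋ with h | h | h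
  · have h1 : u (Int.fract s) < u 1 := hu hfs (Set.right_mem_Icc.mpr zero_le_one) (Int.fract_lt_one s)
    have h2 : u 0 ≤ u (Int.fract t) := humono (Set.left_mem_Icc.mpr zero_le_one) hft (Int.fract_nonneg t)
    have h3 : ((⌊s⌋ : ℝ) + 1) * c ≤ (⌊t⌋ : ℝ) * c := by
      apply mul_le_mul_of_nonneg_right _ hc0
      have : (⌊s⌋ : ℝ) + 1 ≤ ⌊t⌋ := by exact_mod_cast h
      linarith
    simp only [lift]
    nlinarith [h3]
  · have : Int.fract s < Int.fract t := by
      rw [Int.fract, Int.fract, h]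
      linarith
    have := hu hfs hft this
    simp only [lift, h]
    linarith
  · exfalso
    have := Int.floor_mono hst.le
    omega

lemma lift_mono (hu : MonotoneOn u (Set.Icc 0 1)) (hc : u 1 = u 0 + c) (hc0 : 0 ≤ c) :
    Monotone (lift u c) := by
  intro s t hst
  have hfs : Int.fract s ∈ Set.Icc (0:ℝ) 1 := ⟨Int.fract_nonneg s, (Int.fract_lt_one s).le⟩
  have hft : Int.fract t ∈ Set.Icc (0:ℝ) 1 := ⟨Int.fract_nonneg t, (Int.fract_lt_one t).le⟩
  rcases lt_trichotomy ⌊s⌋ ⌊t⌋ with h | h | h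
  · have h1 : u (Int.fract s) ≤ u 1 := hu hfs (Set.right_mem_Icc.mpr zero_le_one) hfs.2
    have h2 : u 0 ≤ u (Int.fract t) := hu (Set.left_mem_Icc.mpr zero_le_one) hft hft.1
    have h3 : ((⌊s⌋ : ℝ) + 1) * c ≤ (⌊t⌋ : ℝ) * c := by
      apply mul_le_mul_of_nonneg_right _ hc0
      have : (⌊s⌋ : ℝ) + 1 ≤ ⌊t⌋ := by exact_mod_cast h
      linarith
    simp only [lift]
    nlinarith [h3]
  · have hff : Int.fract s ≤ Int.fract t := by
      rw [Int.fract, Int.fract, h]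
      linarith
    have := hu hfs hft hff
    simp only [lift, h]
    linarith
  · exfalso
    have := Int.floor_mono hst
    omega

lemma lift_continuous (hu : ContinuousOn u (Set.Icc 0 1)) (hc : u 1 = u 0 + c) :
    Continuous (lift u c) := by
  have key : ∀ n : ℤ, ContinuousOn (lift u c) (Set.Icc (n:ℝ) ((n:ℝ)+1)) := by
    intro n
    have heq : Set.EqOn (lift u c) (fun t => (n:ℝ) * c + u (t - n)) (Set.Icc (n:ℝ) ((n:ℝ)+1)) := by
      intro t ht
      show lift u c t = (n:ℝ) * c + u (t - n)
      rcases eq_or_lt_of_le ht.2 with h | h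
      · have ht' : t = 0 + ((n+1 : ℤ) : ℝ) := by push_cast; linarith
        rw [ht', lift_add_int]
        have h0' : lift u c 0 = u 0 := by
          rw [lift, Int.floor_zero, Int.fract_zero]
          push_cast
          ring
        rw [h0']
        push_cast
        rw [show (0:ℝ) + ((n:ℝ)+1) - n = 1 from by ring]
        linarith
      · have hfl : ⌊t⌋ = n := by
          rw [Int.floor_eq_iff]
          exact ⟨ht.1, by push_cast; exact h⟩
        rw [lift, hfl, Int.fract, hfl]
    refine ContinuousOn.congr ?_ heq
    have hsub : ContinuousOn (fun t : ℝ => u (t - (n:ℝ))) (Set.Icc (n:ℝ) ((n:ℝ)+1)) := by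
      apply ContinuousOn.comp hu ((continuous_id.sub continuous_const).continuousOn)
      intro t ht
      have h1 := ht.1
      have h2 := ht.2
      constructor
      · show (0:ℝ) ≤ id t - (n:ℝ)
        simp only [id]
        linarith
      · show id t - (n:ℝ) ≤ 1
        simp only [id]
        linarith
    exact continuousOn_const.add hsub
  rw [continuous_iff_continuousAt]
  intro t
  by_cases h : (⌊t⌋ : ℝ) = t
  · have hA : ContinuousWithinAt (lift u c) (Set.Icc ((⌊t⌋-1 : ℤ):ℝ) (((⌊t⌋-1 : ℤ):ℝ)+1)) t := by
      refine (key (⌊t⌋-1)).continuousWithinAt ?_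
      constructor <;> push_cast <;> linarith
    have hB : ContinuousWithinAt (lift u c) (Set.Icc ((⌊t⌋ : ℤ):ℝ) (((⌊t⌋ : ℤ):ℝ)+1)) t := by
      refine (key ⌊t⌋).continuousWithinAt ?_
      constructor <;> push_cast <;> linarith
    have hun := hA.union hB
    apply hun.continuousAt
    apply Filter.mem_of_superset (Icc_mem_nhds (a := t-1) (b := t+1) (by linarith) (by linarith))
    intro s hs
    rcases le_total s t with h' | h'
    · left
      constructor <;> push_cast <;> linarith [hs.1]
    · right
      constructor <;> push_cast <;> linarith [hs.2]
  · have hlt : (⌊t⌋ : ℝ) < t := lt_of_le_of_ne (Int.floor_le t) h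
    have hmem : Set.Icc ((⌊t⌋:ℝ)) ((⌊t⌋:ℝ)+1) ∈ nhds t :=
      Icc_mem_nhds hlt (by linarith [Int.lt_floor_add_one t])
    exact (key ⌊t⌋).continuousAt hmem

lemma lift_surjective (hu : ContinuousOn u (Set.Icc 0 1)) (h0 : u 0 = 0) (h1 : u 1 = 1) :
    Function.Surjective (lift u 1) := by
  intro y
  obtain ⟨s, hs, hus⟩ : ∃ s ∈ Set.Icc (0:ℝ) 1, u s = y - ⌊y⌋ := by
    have hIVT := intermediate_value_Icc (zero_le_one) hu
    have hy : y - ⌊y⌋ ∈ Set.Icc (u 0) (u 1) := by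
      rw [h0, h1]
      exact ⟨by linarith [Int.floor_le y], by linarith [Int.lt_floor_add_one y]⟩
    obtain ⟨s, hs, hus⟩ := hIVT hy
    exact ⟨s, hs, hus⟩
  have hslt : s < 1 := by
    rcases eq_or_lt_of_le hs.2 with h | h
    · exfalso
      rw [← h] at h1
      rw [h1] at hus
      linarith [Int.lt_floor_add_one y]
    · exact h
  refine ⟨s + ⌊y⌋, ?_⟩
  rw [lift_add_int, lift_eq_on (by rw [h0, h1]; ring) hs, hus]
  ring

end LiftSec

section Construction
variable {k : ℕ} (x : CactusPartition k) (g : MonPlus) (i : Fin k)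

/-- The rescaled cumulative function on the distinguished lobe. -/
def psi (t : ℝ) : ℝ := (1 / k) * Greal g ((k : ℝ) * mu x i t)

/-- The conjugating homeomorphism of `[0,1]`. -/
def hh (t : ℝ) : ℝ := (∑ l ∈ Finset.univ.erase i, mu x l t) + psi x g i t

lemma psi_zero : psi x g i 0 = 0 := by
  rw [psi, mu_zero, mul_zero, Greal_zero, mul_zero]

lemma psi_one (hk : 0 < k) : psi x g i 1 = 1 / k := by
  have hkne : (k : ℝ) ≠ 0 := Nat.cast_ne_zero.2 hk.ne'
  rw [psi, mu_one, show (k : ℝ) * (1 / k) = 1 from by field_simp, Greal_one, mul_one]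

lemma psi_mono : Monotone (psi x g i) := fun s t hst =>
  mul_le_mul_of_nonneg_left
    (Greal_mono g (mul_le_mul_of_nonneg_left (mu_mono x i hst) (Nat.cast_nonneg k)))
    (by positivity)

lemma Greal_mem' (g : MonPlus) (t : ℝ) : Greal g t ∈ Set.Icc (0:ℝ) 1 := (g.toFun _).2

lemma psi_nonneg (t : ℝ) : 0 ≤ psi x g i t :=
  mul_nonneg (by positivity) (Greal_mem' g _).1

lemma psi_le (hk : 0 < k) (t : ℝ) : psi x g i t ≤ 1 / k := by
  have h := (Greal_mem' g ((k : ℝ) * mu x i t)).2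
  rw [psi]
  have hkpos : (0:ℝ) < k := Nat.cast_pos.2 hk
  rw [mul_comm]
  calc Greal g ((k:ℝ) * mu x i t) * (1/k) ≤ 1 * (1/k) := by
        apply mul_le_mul_of_nonneg_right h (by positivity)
    _ = 1 / k := one_mul _

lemma psi_continuousOn : ContinuousOn (psi x g i) (Set.Icc 0 1) :=
  continuousOn_const.mul ((Greal_continuous g).comp_continuousOn
    (continuousOn_const.mul (mu_continuousOn x i)))

lemma kmu_mem {t : ℝ} (ht : t ∈ Set.Icc (0:ℝ) 1) :
    (k : ℝ) * mu x i t ∈ Set.Icc (0:ℝ) 1 := by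
  constructor
  · have := mu_nonneg x i t
    positivity
  · have h1 := mu_le x i t
    by_cases hk0 : (k:ℝ) = 0
    · rw [hk0]; norm_num
    · have hkpos : (0:ℝ) < k := lt_of_le_of_ne (Nat.cast_nonneg k) (Ne.symm hk0)
      calc (k : ℝ) * mu x i t ≤ (k:ℝ) * (1/k) := by nlinarith
        _ = 1 := by field_simp

lemma hh_zero : hh x g i 0 = 0 := by
  rw [hh, psi_zero]
  simp [mu_zero]

lemma hh_one (hk : 0 < k) : hh x g i 1 = 1 := by
  have hkne : (k : ℝ) ≠ 0 := Nat.cast_ne_zero.2 hk.ne'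
  rw [hh, psi_one x g i hk]
  have hsum : (∑ l ∈ Finset.univ.erase i, mu x l 1) = ((k : ℝ) - 1) * (1 / k) := by
    rw [Finset.sum_congr rfl (fun l _ => mu_one x l)]
    rw [Finset.sum_const, Finset.card_erase_of_mem (Finset.mem_univ i)]
    simp only [Finset.card_univ, Fintype.card_fin, nsmul_eq_mul]
    rw [Nat.cast_sub hk]
    push_cast
    ring
  rw [hsum]
  field_simp
  ring

lemma hh_mono : Monotone (hh x g i) := fun s t hst =>
  add_le_add (Finset.sum_le_sum fun l _ => mu_mono x l hst) (psi_mono x g i hst)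

lemma hh_continuousOn : ContinuousOn (hh x g i) (Set.Icc 0 1) :=
  (continuousOn_finset_sum _ fun l _ => mu_continuousOn x l).add (psi_continuousOn x g i)

lemma hh_strictMonoOn (hk : 0 < k) : StrictMonoOn (hh x g i) (Set.Icc 0 1) := by
  have hkpos : (0:ℝ) < k := Nat.cast_pos.2 hk
  intro a ha b hb hab
  have hsum : (∑ l, mu x l a) = a := sum_mu x ha.1 ha.2
  have hsumb : (∑ l, mu x l b) = b := sum_mu x hb.1 hb.2
  have hdecomp : ∀ t, (∑ l ∈ Finset.univ.erase i, mu x l t) + mu x i t = ∑ l, mu x l t :=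
    fun t => Finset.sum_erase_add _ _ (Finset.mem_univ i)
  have hsa := hdecomp a
  have hsb := hdecomp b
  have hmuse : ∀ l, mu x l a ≤ mu x l b := fun l => mu_mono x l hab.le
  have hsumle : (∑ l ∈ Finset.univ.erase i, mu x l a) ≤ ∑ l ∈ Finset.univ.erase i, mu x l b :=
    Finset.sum_le_sum fun l _ => hmuse l
  rcases eq_or_lt_of_le (hmuse i) with h | h
  · -- the increments happen away from lobe i
    have : psi x g i a = psi x g i b := by rw [psi, psi, h]
    rw [hh, hh, ← this]
    have : (∑ l ∈ Finset.univ.erase i, mu x l a) < ∑ l ∈ Finset.univ.erase i, mu x l b := by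
      have := hsa
      have := hsb
      rw [hsum] at hsa
      rw [hsumb] at hsb
      rw [← h] at hsb
      linarith
    linarith
  · -- the lobe i increment is positive
    have hpsilt : psi x g i a < psi x g i b := by
      rw [psi, psi]
      apply mul_lt_mul_of_pos_left _ (by positivity : (0:ℝ) < 1 / k)
      apply Greal_strictMonoOn g (kmu_mem x i ha) (kmu_mem x i hb)
      nlinarith
    rw [hh, hh]
    linarith

end Construction

section Construction2
variable {k : ℕ} (x : CactusPartition k) (g : MonPlus) (i : Fin k)

lemma hh_lift_cond (hk : 0 < k) : hh x g i 1 = hh x g i 0 + 1 := by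
  rw [hh_one x g i hk, hh_zero]
  ring

/-- The lift of `hh` to `ℝ`. -/
def hhR : ℝ → ℝ := lift (hh x g i) 1

lemma hhR_eq_on (hk : 0 < k) {t : ℝ} (ht : t ∈ Set.Icc (0:ℝ) 1) : hhR x g i t = hh x g i t :=
  lift_eq_on (hh_lift_cond x g i hk) ht

lemma hhR_strictMono (hk : 0 < k) : StrictMono (hhR x g i) :=
  lift_strictMono (hh_strictMonoOn x g i hk) (hh_lift_cond x g i hk) zero_le_one

lemma hhR_continuous (hk : 0 < k) : Continuous (hhR x g i) :=
  lift_continuous (hh_continuousOn x g i) (hh_lift_cond x g i hk)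

lemma hhR_surjective (hk : 0 < k) : Function.Surjective (hhR x g i) :=
  lift_surjective (hh_continuousOn x g i) (hh_zero x g i) (hh_one x g i hk)

lemma hhR_add_int (t : ℝ) (n : ℤ) : hhR x g i (t + n) = hhR x g i t + n := by
  rw [hhR, lift_add_int]
  ring

lemma hh_mem (hk : 0 < k) {t : ℝ} (ht : t ∈ Set.Icc (0:ℝ) 1) :
    hh x g i t ∈ Set.Icc (0:ℝ) 1 := by
  constructor
  · rw [← hh_zero x g i]
    exact hh_mono x g i ht.1
  · rw [← hh_one x g i hk]
    exact hh_mono x g i ht.2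

/-- The conjugating element of `Mon⁺`. -/
def gtil (hk : 0 < k) : MonPlus where
  toFun := fun t => ⟨hh x g i t.1, hh_mem x g i hk t.2⟩
  continuous_toFun := Continuous.subtype_mk ((hh_continuousOn x g i).restrict) _
  strictMono_toFun := fun s t hst =>
    Subtype.mk_lt_mk.2 (hh_strictMonoOn x g i hk s.2 t.2 (Subtype.coe_lt_coe.2 hst))
  map_zero := Subtype.ext (hh_zero x g i)
  map_one := Subtype.ext (hh_one x g i hk)

lemma gtil_circleMap (hk : 0 < k) (z : Circle1) :
    (gtil x g i hk).circleMap z = Q (hh x g i (rep01 z)) := rfl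

lemma gtil_circleMap_Q (hk : 0 < k) (s : ℝ) :
    (gtil x g i hk).circleMap (Q s) = Q (hhR x g i s) := by
  obtain ⟨n, hn⟩ := Q_eq_iff.1 (Q_rep01 (Q s))
  rw [gtil_circleMap]
  have hmem := rep01_mem (Q s)
  rw [← hhR_eq_on x g i hk hmem, hn, hhR_add_int]
  exact Q_eq_iff.2 ⟨n, rfl⟩

/-- `hhR` as an order isomorphism. -/
def Phi (hk : 0 < k) : ℝ ≃o ℝ :=
  StrictMono.orderIsoOfSurjective (hhR x g i) (hhR_strictMono x g i hk) (hhR_surjective x g i hk)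

lemma Phi_apply (hk : 0 < k) (t : ℝ) : Phi x g i hk t = hhR x g i t := rfl

lemma Phi_symm_hhR (hk : 0 < k) (t : ℝ) : (Phi x g i hk).symm (hhR x g i t) = t :=
  (Phi x g i hk).symm_apply_apply t

lemma hhR_Phi_symm (hk : 0 < k) (t : ℝ) : hhR x g i ((Phi x g i hk).symm t) = t :=
  (Phi x g i hk).apply_symm_apply t

lemma Phi_symm_add_int (hk : 0 < k) (t : ℝ) (n : ℤ) :
    (Phi x g i hk).symm (t + n) = (Phi x g i hk).symm t + n := by
  apply (hhR_strictMono x g i hk).injective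
  rw [hhR_Phi_symm, hhR_add_int, hhR_Phi_symm]

lemma Phi_symm_zero (hk : 0 < k) : (Phi x g i hk).symm 0 = 0 := by
  apply (hhR_strictMono x g i hk).injective
  rw [hhR_Phi_symm]
  have : hhR x g i 0 = 0 := by
    rw [hhR_eq_on x g i hk (Set.left_mem_Icc.mpr zero_le_one), hh_zero]
  rw [this]

/-- The induced circle homeomorphism (forward map). -/
def Hf (hk : 0 < k) : Circle1 → Circle1 := (gtil x g i hk).circleMap

/-- The induced circle homeomorphism (inverse map). -/
def Hinv (hk : 0 < k) : Circle1 → Circle1 := fun z => Q ((Phi x g i hk).symm (rep01 z))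

lemma Hf_Q (hk : 0 < k) (s : ℝ) : Hf x g i hk (Q s) = Q (hhR x g i s) :=
  gtil_circleMap_Q x g i hk s

lemma Hinv_Q (hk : 0 < k) (s : ℝ) : Hinv x g i hk (Q s) = Q ((Phi x g i hk).symm s) := by
  obtain ⟨n, hn⟩ := Q_eq_iff.1 (Q_rep01 (Q s))
  rw [Hinv, hn, Phi_symm_add_int]
  exact Q_eq_iff.2 ⟨n, rfl⟩

lemma Hinv_Hf (hk : 0 < k) (z : Circle1) : Hinv x g i hk (Hf x g i hk z) = z := by
  conv_lhs => rw [← Q_rep01 z]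
  rw [Hf_Q, Hinv_Q, Phi_symm_hhR, Q_rep01]

lemma Hf_Hinv (hk : 0 < k) (z : Circle1) : Hf x g i hk (Hinv x g i hk z) = z := by
  conv_lhs => rw [← Q_rep01 z]
  rw [Hinv_Q, Hf_Q, hhR_Phi_symm, Q_rep01]

lemma Hf_continuous (hk : 0 < k) : Continuous (Hf x g i hk) := by
  have heq : Hf x g i hk = AddCircle.liftIco 1 0 (Q ∘ hhR x g i) := by
    funext z
    conv_lhs => rw [← Q_rep01 z]
    rw [Hf_Q]
    have hmem : rep01 z ∈ Set.Ico (0:ℝ) (0 + 1) := by simpa using rep01_mem_Ico z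
    conv_rhs => rw [← Q_rep01 z]
    rw [AddCircle.liftIco_coe_apply hmem]
    rfl
  rw [heq]
  apply AddCircle.liftIco_continuous
  · show Q (hhR x g i 0) = Q (hhR x g i (0 + 1))
    rw [show (0:ℝ) + 1 = 0 + (1:ℤ) from by push_cast; ring, hhR_add_int]
    exact (Q_eq_iff.2 ⟨1, by push_cast; ring⟩).symm
  · exact (continuous_Q.comp (hhR_continuous x g i hk)).continuousOn

lemma Hinv_continuous (hk : 0 < k) : Continuous (Hinv x g i hk) := by
  have heq : Hinv x g i hk = AddCircle.liftIco 1 0 (Q ∘ (Phi x g i hk).symm) := by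
    funext z
    conv_lhs => rw [← Q_rep01 z]
    rw [Hinv_Q]
    have hmem : rep01 z ∈ Set.Ico (0:ℝ) (0 + 1) := by simpa using rep01_mem_Ico z
    conv_rhs => rw [← Q_rep01 z]
    rw [AddCircle.liftIco_coe_apply hmem]
    rfl
  rw [heq]
  apply AddCircle.liftIco_continuous
  · show Q ((Phi x g i hk).symm 0) = Q ((Phi x g i hk).symm (0 + 1))
    rw [show (0:ℝ) + 1 = 0 + (1:ℤ) from by push_cast; ring, Phi_symm_add_int]
    exact (Q_eq_iff.2 ⟨1, by push_cast; ring⟩).symm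
  · refine (continuous_Q.comp ?_).continuousOn
    exact (OrderIso.toHomeomorph (Phi x g i hk).symm).continuous

/-- The induced circle homeomorphism. -/
def Htop (hk : 0 < k) : Homeomorph Circle1 Circle1 where
  toFun := Hf x g i hk
  invFun := Hinv x g i hk
  left_inv := Hinv_Hf x g i hk
  right_inv := Hf_Hinv x g i hk
  continuous_toFun := Hf_continuous x g i hk
  continuous_invFun := Hinv_continuous x g i hk

lemma Hf_injective (hk : 0 < k) : Function.Injective (Hf x g i hk) :=
  (Htop x g i hk).injective

lemma Hf_image_Q (hk : 0 < k) (S : Set ℝ) :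
    Hf x g i hk '' (Q '' S) = Q '' (hhR x g i '' S) := by
  rw [Set.image_image, Set.image_image]
  exact Set.image_congr fun s _ => Hf_Q x g i hk s

lemma hhR_image_Icc (hk : 0 < k) (a b : ℝ) :
    hhR x g i '' Set.Icc a b = Set.Icc (hhR x g i a) (hhR x g i b) := by
  have := OrderIso.image_Icc (Phi x g i hk) a b
  exact this

lemma Hf_image_arc (hk : 0 < k) (a b : ℝ) :
    Hf x g i hk '' (Q '' Set.Icc a b) = Q '' Set.Icc (hhR x g i a) (hhR x g i b) := by
  rw [Hf_image_Q, hhR_image_Icc x g i hk]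

end Construction2

lemma continuous_leftLim_eq {f : ℝ → ℝ} (hf : Continuous f) (t : ℝ) :
    Function.leftLim f t = f t :=
  leftLim_eq_of_tendsto
    ((hf.tendsto t).mono_left nhdsWithin_le_nhds)

section MeasureSec
variable {k : ℕ} (x : CactusPartition k) (g : MonPlus) (i : Fin k)

lemma psi_lift_cond (hk : 0 < k) : psi x g i 1 = psi x g i 0 + 1 / k := by
  rw [psi_one x g i hk, psi_zero]
  ring

/-- The lift of `psi` to `ℝ`. -/
def psiR : ℝ → ℝ := lift (psi x g i) (1 / k)

lemma psiR_eq_on (hk : 0 < k) {t : ℝ} (ht : t ∈ Set.Icc (0:ℝ) 1) :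
    psiR x g i t = psi x g i t :=
  lift_eq_on (psi_lift_cond x g i hk) ht

lemma psiR_mono (hk : 0 < k) : Monotone (psiR x g i) :=
  lift_mono ((psi_mono x g i).monotoneOn _) (psi_lift_cond x g i hk) (by positivity)

lemma psiR_continuous (hk : 0 < k) : Continuous (psiR x g i) :=
  lift_continuous (psi_continuousOn x g i) (psi_lift_cond x g i hk)

/-- `psiR` as a Stieltjes function. -/
def psiSt (hk : 0 < k) : StieltjesFunction ℝ where
  toFun := psiR x g i
  mono' := psiR_mono x g i hk
  right_continuous' := fun t =>
    ((psiR_continuous x g i hk).tendsto t).mono_left nhdsWithin_le_nhds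

lemma psiSt_apply (hk : 0 < k) (t : ℝ) : psiSt x g i hk t = psiR x g i t := rfl

lemma psiSt_singleton (hk : 0 < k) (t : ℝ) : (psiSt x g i hk).measure {t} = 0 := by
  rw [StieltjesFunction.measure_singleton]
  rw [show Function.leftLim (psiSt x g i hk) t = psiR x g i t from
    continuous_leftLim_eq (psiR_continuous x g i hk) t]
  rw [psiSt_apply]
  simp

lemma psiSt_Icc (hk : 0 < k) {a b : ℝ} (hab : a ≤ b) :
    (psiSt x g i hk).measure (Set.Icc a b) = ENNReal.ofReal (psiR x g i b - psiR x g i a) := by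
  rw [StieltjesFunction.measure_Icc]
  rw [show Function.leftLim (psiSt x g i hk) a = psiR x g i a from
    continuous_leftLim_eq (psiR_continuous x g i hk) a]
  rfl

/-- The Stieltjes measure transported to the circle. -/
def nu (hk : 0 < k) : Measure Circle1 :=
  ((psiSt x g i hk).measure.restrict (Set.Ico 0 1)).map Q

lemma nu_apply (hk : 0 < k) {A : Set Circle1} (hA : MeasurableSet A) :
    nu x g i hk A = (psiSt x g i hk).measure (Q ⁻¹' A ∩ Set.Ico 0 1) := by
  rw [nu, Measure.map_apply measurable_Q hA,
    Measure.restrict_apply (hA.preimage measurable_Q)]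

lemma nu_singleton (hk : 0 < k) (z : Circle1) : nu x g i hk {z} = 0 := by
  rw [nu_apply x g i hk (measurableSet_singleton z)]
  refine le_antisymm ?_ zero_le
  have hsub : Q ⁻¹' {z} ∩ Set.Ico 0 1 ⊆ {rep01 z} := by
    rintro u ⟨hu1, hu2⟩
    have : Q u = z := hu1
    rw [← this, rep01_coe hu2]
    rfl
  exact (measure_mono hsub).trans (psiSt_singleton x g i hk _).le



lemma nu_Q_Icc (hk : 0 < k) {a b : ℝ} (h0 : 0 ≤ a) (hab : a ≤ b) (hb1 : b ≤ 1) :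
    nu x g i hk (Q '' Set.Icc a b) = ENNReal.ofReal (psi x g i b - psi x g i a) := by
  rw [nu_apply x g i hk (measurableSet_Q_Icc a b)]
  have h1 : Set.Icc a b ∩ Set.Ico 0 1 ⊆ Q ⁻¹' (Q '' Set.Icc a b) ∩ Set.Ico 0 1 :=
    Set.inter_subset_inter_left _ (Set.subset_preimage_image Q _)
  have h2 : Q ⁻¹' (Q '' Set.Icc a b) ∩ Set.Ico 0 1 ⊆ (Set.Icc a b ∩ Set.Ico 0 1) ∪ {0} := by
    rintro u ⟨hu1, hu2⟩
    obtain ⟨s, hs, hsu⟩ := hu1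
    obtain ⟨n, hn⟩ := Q_eq_iff.1 hsu
    have hn1 : (-1 : ℝ) < (n : ℤ) := by
      have := hs.1; have := hu2.2; push_cast; linarith
    have hn2 : ((n : ℤ) : ℝ) ≤ 1 := by
      have := hs.2; have := hu2.1; push_cast; linarith
    have hcase : n = 0 ∨ n = 1 := by
      have h1' : (-1 : ℤ) < n := by exact_mod_cast hn1
      have h2' : n ≤ 1 := by exact_mod_cast hn2
      omega
    rcases hcase with h | h
    · left
      have : s = u := by rw [hn, h]; push_cast; ring
      exact ⟨this ▸ hs, hu2⟩
    · right
      have hsu' : s = u + 1 := by rw [hn, h]; push_cast; ring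
      have hu0 : u = 0 := by
        have h1' := hu2.1
        have h2' := hs.2
        have : s ≤ 1 := le_trans hs.2 hb1
        linarith
      simp [hu0]
  rw [measure_eq_of_between h1 h2 (psiSt_singleton x g i hk 0)]
  have h3 : Set.Icc a b ∩ Set.Ico 0 1 ⊆ Set.Icc a b := Set.inter_subset_left
  have h4 : Set.Icc a b ⊆ (Set.Icc a b ∩ Set.Ico 0 1) ∪ {1} := by
    intro s hs
    by_cases h : s < 1
    · exact Or.inl ⟨hs, le_trans h0 hs.1, h⟩
    · right
      have : s = 1 := le_antisymm (le_trans hs.2 hb1) (not_lt.1 h)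
      simp [this]
  rw [← measure_eq_of_between h3 h4 (psiSt_singleton x g i hk 1), psiSt_Icc x g i hk hab,
    psiR_eq_on x g i hk ⟨le_trans h0 hab, hb1⟩, psiR_eq_on x g i hk ⟨h0, le_trans hab hb1⟩]

lemma nu_compl (hk : 0 < k) : nu x g i hk ((x.part i)ᶜ) = 0 := by
  rw [nu_apply x g i hk (x.closed' i).measurableSet.compl]
  have hWopen : IsOpen ((Q ⁻¹' (x.part i))ᶜ ∩ Set.Ioo (0:ℝ) 1) :=
    ((x.closed' i).preimage continuous_Q).isOpen_compl.inter isOpen_Ioo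
  set W := (Q ⁻¹' (x.part i))ᶜ ∩ Set.Ioo (0:ℝ) 1 with hWdef
  have hsub : Q ⁻¹' (x.part i)ᶜ ∩ Set.Ico 0 1 ⊆ W ∪ {0} := by
    rintro u ⟨hu1, hu2⟩
    rcases eq_or_lt_of_le hu2.1 with h | h
    · right
      simp [← h]
    · exact Or.inl ⟨hu1, h, hu2.2⟩
  refine le_antisymm ?_ zero_le
  refine (measure_mono hsub).trans ?_
  refine le_trans (measure_union_le _ _) ?_
  rw [psiSt_singleton x g i hk 0, add_zero]
  -- show the measure of W is zero
  obtain ⟨B, hBsub, hBeq⟩ := Real.isTopologicalBasis_Ioo_rat.open_eq_sUnion hWopen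
  have hBcount : B.Countable := by
    apply Set.Countable.mono hBsub
    exact Set.countable_iUnion fun a =>
      Set.countable_iUnion fun b => Set.countable_iUnion fun _ => Set.countable_singleton _
  rw [hBeq]
  rw [le_zero_iff]
  rw [measure_sUnion_null_iff hBcount]
  intro s hsB
  obtain ⟨q, hq⟩ := Set.mem_iUnion.1 (hBsub hsB)
  obtain ⟨r, hr⟩ := Set.mem_iUnion.1 hq
  obtain ⟨hqr, hs⟩ := Set.mem_iUnion.1 hr
  rw [Set.mem_singleton_iff] at hs
  subst hs
  have hsubW : Set.Ioo (q:ℝ) (r:ℝ) ⊆ W := by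
    rw [hBeq]
    exact Set.subset_sUnion_of_mem hsB
  rcases le_or_gt (r:ℝ) (q:ℝ) with hqr' | hqr'
  · rw [Set.Ioo_eq_empty (by exact_mod_cast not_lt.2 hqr')]
    simp
  -- now q < r and Ioo q r ⊆ W ⊆ Ioo 0 1
  have hWIoo : W ⊆ Set.Ioo (0:ℝ) 1 := Set.inter_subset_right
  have hq0 : (0:ℝ) ≤ q := by
    by_contra hc
    push_neg at hc
    set y := ((q:ℝ) + min (r:ℝ) 0) / 2 with hy
    have hy1 : (q:ℝ) < y := by
      have : (q:ℝ) < min (r:ℝ) 0 := lt_min hqr' hc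
      simp only [hy]
      linarith
    have hy2 : y < r := by
      have h1 : min (r:ℝ) 0 ≤ r := min_le_left _ _
      simp only [hy]
      linarith
    have hy3 : y < 0 := by
      have h1 : min (r:ℝ) 0 ≤ 0 := min_le_right _ _
      simp only [hy]
      linarith
    exact absurd (hWIoo (hsubW ⟨hy1, hy2⟩)).1 (not_lt.2 hy3.le)
  have hr1 : (r:ℝ) ≤ 1 := by
    by_contra hc
    push_neg at hc
    set y := (max (q:ℝ) 1 + (r:ℝ)) / 2 with hy
    have hy1 : (q:ℝ) < y := by
      have h1 : (q:ℝ) ≤ max (q:ℝ) 1 := le_max_left _ _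
      have h2 : max (q:ℝ) 1 < r := max_lt hqr' hc
      simp only [hy]
      linarith
    have hy2 : y < r := by
      have h2 : max (q:ℝ) 1 < r := max_lt hqr' hc
      simp only [hy]
      linarith
    have hy3 : 1 < y := by
      have h1 : (1:ℝ) ≤ max (q:ℝ) 1 := le_max_right _ _
      have h2 : max (q:ℝ) 1 < r := max_lt hqr' hc
      simp only [hy]
      linarith
    exact absurd (hWIoo (hsubW ⟨hy1, hy2⟩)).2 (not_lt.2 hy3.le)
  -- psi is constant on [q, r]
  have hmu : mu x i (r:ℝ) - mu x i (q:ℝ) = 0 := by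
    rw [mu_sub x i hq0 hqr'.le hr1]
    have hsub2 : x.part i ∩ Q '' Set.Icc (q:ℝ) (r:ℝ) ⊆ {Q (q:ℝ), Q (r:ℝ)} := by
      rintro z ⟨hz1, s, hs, rfl⟩
      rcases eq_or_lt_of_le hs.1 with h | h
      · exact Or.inl (congrArg Q h.symm)
      rcases eq_or_lt_of_le hs.2 with h' | h'
      · exact Or.inr (congrArg Q h')
      · exfalso
        exact (hsubW ⟨h, h'⟩).1 hz1
    have := measure_mono_null hsub2 (Set.Finite.measure_zero ((Set.finite_singleton _).insert _) volume)
    rw [this]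
    simp
  have hpsi : psi x g i (r:ℝ) = psi x g i (q:ℝ) := by
    rw [psi, psi]
    have : mu x i (r:ℝ) = mu x i (q:ℝ) := by linarith
    rw [this]
  rw [StieltjesFunction.measure_Ioo]
  rw [show Function.leftLim (psiSt x g i hk) (r:ℝ) = psiR x g i (r:ℝ) from
    continuous_leftLim_eq (psiR_continuous x g i hk) _]
  rw [psiSt_apply, psiR_eq_on x g i hk ⟨hq0, le_trans hqr'.le hr1⟩,
    psiR_eq_on x g i hk ⟨le_trans hq0 hqr'.le, hr1⟩, hpsi]
  simp

end MeasureSec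

section MeasureEq
variable {k : ℕ} (x : CactusPartition k) (g : MonPlus) (i : Fin k)

/-- The pushforward of Lebesgue measure under the inverse circle homeomorphism. -/
def m1 (hk : 0 < k) : Measure Circle1 := volume.map (Hinv x g i hk)

lemma Hf_image_eq_preimage (hk : 0 < k) (A : Set Circle1) :
    Hf x g i hk '' A = Hinv x g i hk ⁻¹' A := by
  have := (Htop x g i hk).toEquiv.image_eq_preimage_symm A
  exact this

lemma m1_apply (hk : 0 < k) {A : Set Circle1} (hA : MeasurableSet A) :
    m1 x g i hk A = volume (Hf x g i hk '' A) := by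
  rw [m1, Measure.map_apply (Hinv_continuous x g i hk).measurable hA,
    ← Hf_image_eq_preimage]

lemma m1_singleton (hk : 0 < k) (z : Circle1) : m1 x g i hk {z} = 0 := by
  rw [m1_apply x g i hk (measurableSet_singleton z), Set.image_singleton]
  exact measure_singleton _

/-- The candidate decomposition of `m1`. -/
def m2 (hk : 0 < k) : Measure Circle1 :=
  (∑ l ∈ Finset.univ.erase i, volume.restrict (x.part l)) + nu x g i hk

lemma m2_apply (hk : 0 < k) {A : Set Circle1} (hA : MeasurableSet A) :
    m2 x g i hk A = (∑ l ∈ Finset.univ.erase i, volume (A ∩ x.part l)) + nu x g i hk A := by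
  rw [m2, Measure.add_apply, Measure.finset_sum_apply]
  congr 1
  exact Finset.sum_congr rfl fun l _ => Measure.restrict_apply hA

lemma m2_singleton (hk : 0 < k) (z : Circle1) : m2 x g i hk {z} = 0 := by
  rw [m2_apply x g i hk (measurableSet_singleton z)]
  rw [nu_singleton x g i hk, add_zero]
  refine Finset.sum_eq_zero fun l _ => ?_
  exact measure_mono_null Set.inter_subset_left (measure_singleton z)

lemma m1_arc (hk : 0 < k) {a b : ℝ} (h0 : 0 ≤ a) (hab : a ≤ b) (hb1 : b ≤ 1) :
    m1 x g i hk (Q '' Set.Icc a b) = ENNReal.ofReal (hh x g i b - hh x g i a) := by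
  rw [m1_apply x g i hk (measurableSet_Q_Icc a b), Hf_image_arc]
  have hmono := (hhR_strictMono x g i hk).monotone
  have h1 : hhR x g i a ≤ hhR x g i b := hmono hab
  have h2 : hhR x g i b ≤ hhR x g i a + 1 := by
    have : hhR x g i b ≤ hhR x g i (a + 1) := hmono (by linarith)
    rw [show (a + 1 : ℝ) = a + ((1:ℤ):ℝ) from by push_cast; ring, hhR_add_int] at this
    push_cast at this
    linarith
  rw [volume_Q_Icc h1 h2, hhR_eq_on x g i hk ⟨le_trans h0 hab, hb1⟩,
    hhR_eq_on x g i hk ⟨h0, le_trans hab hb1⟩]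

lemma m2_arc (hk : 0 < k) {a b : ℝ} (h0 : 0 ≤ a) (hab : a ≤ b) (hb1 : b ≤ 1) :
    m2 x g i hk (Q '' Set.Icc a b) = ENNReal.ofReal (hh x g i b - hh x g i a) := by
  rw [m2_apply x g i hk (measurableSet_Q_Icc a b), nu_Q_Icc x g i hk h0 hab hb1]
  have hterm : ∀ l ∈ Finset.univ.erase i, volume (Q '' Set.Icc a b ∩ x.part l)
      = ENNReal.ofReal (mu x l b - mu x l a) := by
    intro l _
    rw [Set.inter_comm, volume_part_inter_Icc x l h0 hab hb1]
  rw [Finset.sum_congr rfl hterm]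
  rw [← ENNReal.ofReal_sum_of_nonneg (fun l _ => by linarith [mu_mono x l hab])]
  rw [← ENNReal.ofReal_add (Finset.sum_nonneg fun l _ => by linarith [mu_mono x l hab])
    (by linarith [psi_mono x g i hab])]
  congr 1
  rw [hh, hh, Finset.sum_sub_distrib]
  ring

lemma m1_eq_m2 (hk : 0 < k) : m1 x g i hk = m2 x g i hk := by
  have hQrep : Q ∘ rep01 = id := funext Q_rep01
  have hfin1 : IsFiniteMeasure ((m1 x g i hk).map rep01) := by
    constructor
    rw [Measure.map_apply measurable_rep01 MeasurableSet.univ, Set.preimage_univ, m1,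
      Measure.map_apply (Hinv_continuous x g i hk).measurable MeasurableSet.univ,
      Set.preimage_univ]
    exact measure_lt_top _ _
  have hfin2 : IsFiniteMeasure ((m2 x g i hk).map rep01) := by
    constructor
    rw [Measure.map_apply measurable_rep01 MeasurableSet.univ, Set.preimage_univ]
    have h1 : m2 x g i hk Set.univ < ⊤ := by
      rw [m2_apply x g i hk MeasurableSet.univ]
      have hnu : nu x g i hk Set.univ < ⊤ := by
        rw [nu_apply x g i hk MeasurableSet.univ]
        refine lt_of_le_of_lt (measure_mono Set.inter_subset_right) ?_
        refine lt_of_le_of_lt (measure_mono Set.Ico_subset_Icc_self) ?_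
        rw [psiSt_Icc x g i hk zero_le_one]
        exact ENNReal.ofReal_lt_top
      have hsum : (∑ l ∈ Finset.univ.erase i, volume (Set.univ ∩ x.part l)) < ⊤ :=
        ENNReal.sum_lt_top.2 fun l _ => measure_lt_top _ _
      exact ENNReal.add_lt_top.2 ⟨hsum, hnu⟩
    exact h1
  have hmap : (m1 x g i hk).map rep01 = (m2 x g i hk).map rep01 := by
    haveI := hfin1
    haveI := hfin2
    refine Measure.ext_of_Ioc _ _ (fun a b hab => ?_)
    rw [Measure.map_apply measurable_rep01 measurableSet_Ioc,
      Measure.map_apply measurable_rep01 measurableSet_Ioc, rep01_preimage]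
    rcases Set.eq_empty_or_nonempty (Set.Ioc a b ∩ Set.Ico 0 1) with hne | hne
    · rw [hne]
      simp
    obtain ⟨t0, ht0⟩ := hne
    set c := max a 0 with hc
    set d := min b 1 with hd
    have hc0 : 0 ≤ c := le_max_right _ _
    have hd1 : d ≤ 1 := min_le_right _ _
    have hcd : c ≤ d := by
      have h1 : c ≤ t0 := max_le ht0.1.1.le ht0.2.1
      have h2 : t0 ≤ d := le_min ht0.1.2 ht0.2.2.le
      linarith
    have hTsub : Set.Ioc a b ∩ Set.Ico 0 1 ⊆ Set.Icc c d := by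
      rintro u ⟨hu1, hu2⟩
      exact ⟨max_le hu1.1.le hu2.1, le_min hu1.2 hu2.2.le⟩
    have hIccsub : Set.Icc c d ⊆ (Set.Ioc a b ∩ Set.Ico 0 1) ∪ {c, d} := by
      intro u hu
      by_cases h1 : u = c
      · right; exact Or.inl h1
      by_cases h2 : u = d
      · right; exact Or.inr h2
      left
      have hc_lt : c < u := lt_of_le_of_ne hu.1 (Ne.symm h1)
      have hd_gt : u < d := lt_of_le_of_ne hu.2 h2
      constructor
      · exact ⟨lt_of_le_of_lt (le_max_left a 0) hc_lt, (le_min_iff.1 hd_gt.le).1⟩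
      · exact ⟨le_trans (le_max_right a 0) hu.1, lt_of_lt_of_le hd_gt (min_le_right b 1)⟩
    have key : ∀ (m : Measure Circle1), (∀ z, m {z} = 0) →
        m (Q '' (Set.Ioc a b ∩ Set.Ico 0 1)) = m (Q '' Set.Icc c d) := by
      intro m hm
      have h1 : Q '' (Set.Ioc a b ∩ Set.Ico 0 1) ⊆ Q '' Set.Icc c d := Set.image_mono hTsub
      have h2 : Q '' Set.Icc c d ⊆ Q '' (Set.Ioc a b ∩ Set.Ico 0 1) ∪ {Q c, Q d} := by
        intro z hz
        obtain ⟨u, hu, rfl⟩ := hz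
        rcases hIccsub hu with h | h
        · exact Or.inl ⟨u, h, rfl⟩
        · rcases h with h | h
          · exact Or.inr (Or.inl (congrArg Q h))
          · exact Or.inr (Or.inr (congrArg Q h))
      have hF : m ({Q c, Q d} : Set Circle1) = 0 := by
        refine le_antisymm ?_ zero_le
        have : ({Q c, Q d} : Set Circle1) = {Q c} ∪ {Q d} := rfl
        rw [this]
        refine le_trans (measure_union_le _ _) ?_
        rw [hm, hm, add_zero]
      exact (measure_eq_of_between h1 h2 hF).symm
    rw [key _ (m1_singleton x g i hk), key _ (m2_singleton x g i hk),
      m1_arc x g i hk hc0 hcd hd1, m2_arc x g i hk hc0 hcd hd1]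
  calc m1 x g i hk = ((m1 x g i hk).map rep01).map Q := by
        rw [Measure.map_map measurable_Q measurable_rep01, hQrep, Measure.map_id]
    _ = ((m2 x g i hk).map rep01).map Q := by rw [hmap]
    _ = m2 x g i hk := by
        rw [Measure.map_map measurable_Q measurable_rep01, hQrep, Measure.map_id]

lemma nu_part_ne (hk : 0 < k) {j : Fin k} (hji : j ≠ i) : nu x g i hk (x.part j) = 0 := by
  haveI : NullSingletonClass (nu x g i hk) := ⟨nu_singleton x g i hk⟩
  have hsub : x.part j ⊆ (x.part i)ᶜ ∪ (x.part i ∩ x.part j) := by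
    intro z hz
    by_cases h : z ∈ x.part i
    · exact Or.inr ⟨h, hz⟩
    · exact Or.inl h
  refine le_antisymm ?_ zero_le
  refine le_trans (measure_mono hsub) ?_
  refine le_trans (measure_union_le _ _) ?_
  rw [nu_compl x g i hk, (finite_inter_parts x (Ne.symm hji)).measure_zero]
  simp

lemma volume_Hf_image_ne (hk : 0 < k) {j : Fin k} (hji : j ≠ i) {E : Set Circle1}
    (hE : MeasurableSet E) (hEsub : E ⊆ x.part j) :
    volume (Hf x g i hk '' E) = volume E := by
  rw [← m1_apply x g i hk hE, m1_eq_m2, m2_apply x g i hk hE]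
  have hnuE : nu x g i hk E ≤ 0 := le_trans (measure_mono hEsub) (nu_part_ne x g i hk hji).le
  have hsum : (∑ l ∈ Finset.univ.erase i, volume (E ∩ x.part l)) = volume E := by
    rw [Finset.sum_eq_single_of_mem j (Finset.mem_erase.2 ⟨hji, Finset.mem_univ j⟩)]
    · rw [Set.inter_eq_self_of_subset_left hEsub]
    · intro l hl hlj
      refine measure_mono_null (Set.inter_subset_inter_left _ hEsub)
        (volume_inter_parts x (Ne.symm hlj))
  rw [hsum, le_antisymm hnuE zero_le, add_zero]

lemma volume_Hf_image_i (hk : 0 < k) {t : ℝ} (h0 : 0 ≤ t) (h1 : t ≤ 1) :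
    volume (Hf x g i hk '' (x.part i ∩ arcTo t)) = ENNReal.ofReal (psi x g i t) := by
  have hmeas : MeasurableSet (x.part i ∩ arcTo t) :=
    (measurableSet_part x i).inter (measurableSet_arcTo t)
  rw [← m1_apply x g i hk hmeas, m1_eq_m2, m2_apply x g i hk hmeas]
  have hsum : (∑ l ∈ Finset.univ.erase i, volume ((x.part i ∩ arcTo t) ∩ x.part l)) = 0 := by
    refine Finset.sum_eq_zero fun l hl => ?_
    refine measure_mono_null ?_ (volume_inter_parts x (Finset.ne_of_mem_erase hl).symm)
    exact fun z hz => ⟨hz.1.1, hz.2⟩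
  rw [hsum, zero_add]
  have hdiff := measure_inter_add_diff (μ := nu x g i hk) (arcTo t) (measurableSet_part x i)
  have hdz : nu x g i hk (arcTo t \ x.part i) = 0 := by
    refine le_antisymm (le_trans (measure_mono ?_) (nu_compl x g i hk).le) zero_le
    exact fun z hz => hz.2
  have harcTo : nu x g i hk (arcTo t) = ENNReal.ofReal (psi x g i t) := by
    have hnu := nu_Q_Icc x g i hk le_rfl h0 h1
    rw [arcTo_eq, hnu, psi_zero, sub_zero]
  rw [Set.inter_comm]
  rw [← harcTo, ← hdiff, hdz, add_zero]

lemma volume_Hf_image_part_i (hk : 0 < k) :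
    volume (Hf x g i hk '' x.part i) = ENNReal.ofReal (1 / k) := by
  have := volume_Hf_image_i x g i hk zero_le_one le_rfl
  rw [arcTo_one, Set.inter_univ] at this
  rw [this, psi_one x g i hk]

end MeasureEq

section Final
variable {k : ℕ} (x : CactusPartition k) (g : MonPlus) (i : Fin k)

lemma Hf_eq_Htop (hk : 0 < k) : Hf x g i hk = ⇑(Htop x g i hk) := rfl

lemma Hf_image_closed (hk : 0 < k) {A : Set Circle1} (hA : IsClosed A) :
    IsClosed (Hf x g i hk '' A) :=
  (hA.isCompact.image (Hf_continuous x g i hk)).isClosed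

lemma Hf_image_interior (hk : 0 < k) (A : Set Circle1) :
    interior (Hf x g i hk '' A) = Hf x g i hk '' interior A := by
  rw [Hf_eq_Htop]
  exact ((Htop x g i hk).image_interior A).symm

lemma Hf_image_arcSet (hk : 0 < k) {A : Set Circle1} (hA : IsClosedArc A) :
    IsClosedArc (Hf x g i hk '' A) := by
  obtain ⟨a, b, hab, hb1, rfl⟩ := hA
  refine ⟨hhR x g i a, hhR x g i b, hhR_strictMono x g i hk hab, ?_, ?_⟩
  · have h2 : hhR x g i b ≤ hhR x g i (a + 1) := (hhR_strictMono x g i hk).monotone hb1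
    rw [show (a + 1 : ℝ) = a + ((1:ℤ):ℝ) from by push_cast; ring, hhR_add_int] at h2
    push_cast at h2
    linarith
  · exact Hf_image_arc x g i hk a b

lemma hh_mem_Ico (hk : 0 < k) {t : ℝ} (ht : t ∈ Set.Ico (0:ℝ) 1) :
    hh x g i t ∈ Set.Ico (0:ℝ) 1 := by
  constructor
  · rw [← hh_zero x g i]
    exact hh_mono x g i ht.1
  · rw [← hh_one x g i hk]
    exact hh_strictMonoOn x g i hk ⟨ht.1, ht.2.le⟩ (Set.right_mem_Icc.mpr zero_le_one) ht.2

/-- The rescaled cactus partition. -/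
def xPrime (hk : 0 < k) : CactusPartition k where
  part := fun j => Hf x g i hk '' x.part j
  closed' := fun j => Hf_image_closed x g i hk (x.closed' j)
  nonempty' := fun j => (x.nonempty' j).image _
  arcs' := by
    intro j
    obtain ⟨n, f, harc, heq⟩ := x.arcs' j
    refine ⟨n, fun m => Hf x g i hk '' f m, fun m => Hf_image_arcSet x g i hk (harc m), ?_⟩
    show Hf x g i hk '' x.part j = ⋃ m, Hf x g i hk '' f m
    rw [heq, Set.image_iUnion]
  covers := by
    show ⋃ j, Hf x g i hk '' x.part j = Set.univ
    rw [← Set.image_iUnion, x.covers, Set.image_univ]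
    exact (Htop x g i hk).surjective.range_eq
  disjoint_interiors := by
    intro j1 j2 hj
    show interior (Hf x g i hk '' x.part j1) ∩ interior (Hf x g i hk '' x.part j2) = ∅
    rw [Hf_image_interior x g i hk, Hf_image_interior x g i hk,
      ← Set.image_inter (Hf_injective x g i hk), x.disjoint_interiors j1 j2 hj, Set.image_empty]
  measure_part := by
    intro j
    show volume (Hf x g i hk '' x.part j) = ENNReal.ofReal (1 / k)
    by_cases hji : j = i
    · rw [hji]
      exact volume_Hf_image_part_i x g i hk
    · rw [volume_Hf_image_ne x g i hk hji (measurableSet_part x j) subset_rfl]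
      exact x.measure_part j
  treelike := by
    rintro ⟨i0, j0, z1, z2, z3, z4, hij, hz1, hz3, hz2, hz4, a, b, c, d, hab, hbc, hcd, hda,
      ha, hb, hc, hd⟩
    apply x.treelike
    have hmem : ∀ (zz : Circle1) (jj : Fin k), zz ∈ interior (Hf x g i hk '' x.part jj) →
        Hinv x g i hk zz ∈ interior (x.part jj) := by
      intro zz jj hzz
      rw [Hf_image_interior x g i hk] at hzz
      obtain ⟨w, hw, rfl⟩ := hzz
      rw [Hinv_Hf]
      exact hw
    refine ⟨i0, j0, Hinv x g i hk z1, Hinv x g i hk z2, Hinv x g i hk z3, Hinv x g i hk z4,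
      hij, hmem z1 j0 hz1, hmem z3 j0 hz3, hmem z2 i0 hz2, hmem z4 i0 hz4, ?_⟩
    refine ⟨(Phi x g i hk).symm a, (Phi x g i hk).symm b, (Phi x g i hk).symm c,
      (Phi x g i hk).symm d, ?_, ?_, ?_, ?_, ?_, ?_, ?_, ?_⟩
    · exact (Phi x g i hk).symm.strictMono hab
    · exact (Phi x g i hk).symm.strictMono hbc
    · exact (Phi x g i hk).symm.strictMono hcd
    · have := (Phi x g i hk).symm.strictMono hda
      rw [show (a + 1 : ℝ) = a + ((1:ℤ):ℝ) from by push_cast; ring,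
        Phi_symm_add_int] at this
      push_cast at this
      linarith
    · rw [← ha]; exact (Hinv_Q x g i hk a).symm
    · rw [← hb]; exact (Hinv_Q x g i hk b).symm
    · rw [← hc]; exact (Hinv_Q x g i hk c).symm
    · rw [← hd]; exact (Hinv_Q x g i hk d).symm

lemma xPrime_part (hk : 0 < k) (j : Fin k) :
    (xPrime x g i hk).part j = Hf x g i hk '' x.part j := rfl

end Final
end AuxRescale
end AuxRescale

open AuxRescale in
/-- for `x ∈ F(k)`, `g ∈ Mon⁺(I,∂I)` and `1 ≤ i ≤ k`, there exist
`x̃ ∈ F(k)` and `g̃ ∈ Mon⁺(I,∂I)` with `(id × ⋯ × g × ⋯ × id) ∘ c_x = c_{x̃} ∘ g̃`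
(`g` acting on the `i`-th coordinate); moreover `g̃` canonically identifies each
`I_r(x)` with `I_r(x̃)` (expressed here by `g̃(I_r(x)) = I_r(x̃)` for every `r`). -/
theorem exists_rescaled_partition (k : ℕ) (hk : 1 ≤ k)
    (x : CactusPartition k) (g : MonPlus) (i : Fin k) :
    ∃ (x' : CactusPartition k) (g' : MonPlus),
      (∀ (z : Circle1) (j : Fin k),
        (if j = i then g.circleMap (cactusMap x z j) else cactusMap x z j)
          = cactusMap x' (g'.circleMap z) j) ∧
      (∀ r : Fin k, g'.circleMap '' x.part r = x'.part r) := by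
  have hk' : 0 < k := hk
  refine ⟨xPrime x g i hk', gtil x g i hk', ?_, fun r => rfl⟩
  intro z j
  set t := rep01 z with ht
  have htm : t ∈ Set.Ico (0:ℝ) 1 := rep01_mem_Ico z
  have htm' : t ∈ Set.Icc (0:ℝ) 1 := ⟨htm.1, htm.2.le⟩
  have hhtm : hh x g i t ∈ Set.Ico (0:ℝ) 1 := hh_mem_Ico x g i hk' htm
  have hrep : rep01 ((gtil x g i hk').circleMap z) = hh x g i t := by
    rw [gtil_circleMap x g i hk' z, ← ht]
    exact rep01_coe hhtm
  have hint : ∀ j' : Fin k, (xPrime x g i hk').part j' ∩ arcTo (hh x g i t)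
      = Hf x g i hk' '' (x.part j' ∩ arcTo t) := by
    intro j'
    have harc : Hf x g i hk' '' arcTo t = arcTo (hh x g i t) := by
      have h0 := Hf_image_arc x g i hk' 0 t
      rw [hhR_eq_on x g i hk' htm'] at h0
      rw [show hhR x g i 0 = 0 from by
        rw [hhR_eq_on x g i hk' (Set.left_mem_Icc.mpr zero_le_one), hh_zero]] at h0
      exact h0
    rw [xPrime_part x g i hk' j', ← harc, ← Set.image_inter (Hf_injective x g i hk')]
  by_cases hji : j = i
  · rw [if_pos hji, hji]
    have hvol : volume ((xPrime x g i hk').part i ∩ arcTo (hh x g i t))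
        = ENNReal.ofReal (psi x g i t) := by
      rw [hint i]
      exact volume_Hf_image_i x g i hk' htm.1 htm.2.le
    have hRHS : cactusMap (xPrime x g i hk') ((gtil x g i hk').circleMap z) i
        = Q ((k:ℝ) * psi x g i t) := by
      show Q ((k:ℝ) * (volume ((xPrime x g i hk').part i ∩
        arcTo (rep01 ((gtil x g i hk').circleMap z)))).toReal) = _
      rw [hrep, hvol, ENNReal.toReal_ofReal (psi_nonneg x g i t)]
    rw [hRHS]
    set u := (k:ℝ) * mu x i t with hu
    have hLHSc : cactusMap x z i = Q u := rfl
    have hum : u ∈ Set.Icc (0:ℝ) 1 := kmu_mem x i htm'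
    have hkne : (k:ℝ) ≠ 0 := Nat.cast_ne_zero.2 hk'.ne'
    have hkpsi : (k:ℝ) * psi x g i t = Greal g u := by
      rw [psi, hu]
      field_simp
    rw [hLHSc, hkpsi]
    rcases eq_or_lt_of_le hum.2 with h1 | h1
    · have hQ10 : Q u = Q 0 := by
        rw [h1]
        exact Q_eq_iff.2 ⟨1, by norm_num⟩
      have hrepu : rep01 (Q u) = 0 := by
        rw [hQ10]
        exact rep01_coe ⟨le_rfl, one_pos⟩
      show Q ((g.toFun ⟨rep01 (Q u), rep01_mem _⟩ : ℝ)) = Q (Greal g u)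
      have harg : (⟨rep01 (Q u), rep01_mem _⟩ : Set.Icc (0:ℝ) 1)
          = ⟨0, Set.left_mem_Icc.mpr zero_le_one⟩ := Subtype.ext hrepu
      rw [harg, g.map_zero, h1, Greal_one]
      exact Q_eq_iff.2 ⟨-1, by norm_num⟩
    · have hrep2 : rep01 (Q u) = u := rep01_coe ⟨hum.1, h1⟩
      show Q ((g.toFun ⟨rep01 (Q u), rep01_mem _⟩ : ℝ)) = Q (Greal g u)
      have harg : (⟨rep01 (Q u), rep01_mem _⟩ : Set.Icc (0:ℝ) 1) = ⟨u, hum⟩ :=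
        Subtype.ext hrep2
      rw [harg, Greal_eq g hum]
  · rw [if_neg hji]
    have hvol : volume ((xPrime x g i hk').part j ∩ arcTo (hh x g i t))
        = volume (x.part j ∩ arcTo t) := by
      rw [hint j]
      exact volume_Hf_image_ne x g i hk' hji
        ((measurableSet_part x j).inter (measurableSet_arcTo t)) Set.inter_subset_left
    have hRHS : cactusMap (xPrime x g i hk') ((gtil x g i hk').circleMap z) j
        = Q ((k:ℝ) * mu x j t) := by
      show Q ((k:ℝ) * (volume ((xPrime x g i hk').part j ∩
        arcTo (rep01 ((gtil x g i hk').circleMap z)))).toReal) = _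
      rw [hrep, hvol]
      rfl
    rw [hRHS]
    rfl
end
end
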